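/- arXiv:2303.17229 — 9 statements merged into one kernel-verified Lean document; each statement's English description precedes it below -/
import Mathlib

section
/- If f : ℝ^d → ℝ is bounded and measurable with ‖f‖_∞ ≤ B, then for every δ > 0, P(|Σ_{i=1}^n f(X_i)a(x,X_i)/d_n(x) − (Σ_{i=1}^n a(x,X_i)/d_n(x))·b_n(f,x)| ≥ δ) ≤ 2·exp(−δ²·d_n(x)/(8B² + 2Bδ/3)). -/
open MeasureTheory ProbabilityTheory Real Filter

private lemma fact_aux : ∀ k : ℕ, (6:ℝ)^k ≤ 2 * (Nat.factorial (k+2)) := by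
  have h : ∀ k : ℕ, (6:ℕ)^k ≤ 2 * Nat.factorial (k+2) := by
    intro k
    induction k with
    | zero => decide
    | succ k ih =>
      rcases Nat.lt_or_ge k 3 with hk | hk
      · interval_cases k <;> decide
      · calc (6:ℕ)^(k+1) = 6 * 6^k := by ring
          _ ≤ 6 * (2*Nat.factorial (k+2)) := Nat.mul_le_mul_left _ ih
          _ ≤ (k+3) * (2*Nat.factorial (k+2)) := Nat.mul_le_mul_right _ (by omega)
          _ = 2 * Nat.factorial (k+3) := by
              rw [show Nat.factorial (k+3) = (k+3) * Nat.factorial (k+2) from Nat.factorial_succ (k+2)]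
              ring
  intro k
  exact_mod_cast h k

private lemma mgf_bound {α : Type*} [MeasurableSpace α] (ν : Measure α) [IsProbabilityMeasure ν]
    (w : α → ℝ) (hw : Measurable w) (M V l : ℝ) (hM : 0 ≤ M) (hV : 0 ≤ V)
    (hwM : ∀ a, |w a| ≤ M) (hmean : ∫ a, w a ∂ν = 0) (hvar : ∫ a, (w a)^2 ∂ν ≤ V)
    (hl : 0 ≤ l) (hlM : l * M / 6 < 1) :
    ∫ a, Real.exp (l * w a) ∂ν ≤ Real.exp (2 * l^2 * V / (1 - l * M / 6)) := by
  have hlMnn : 0 ≤ l * M := mul_nonneg hl hM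
  have hbd : ∀ (k : ℕ) (a : α), |(l * w a)^k / (Nat.factorial k : ℝ)| ≤ (l*M)^k / (Nat.factorial k : ℝ) := by
    intro k a
    have h1 : |l * w a| ≤ l * M := by
      rw [abs_mul, abs_of_nonneg hl]
      exact mul_le_mul_of_nonneg_left (hwM a) hl
    rw [abs_div, abs_pow, Nat.abs_cast]
    have h2 : |l * w a| ^ k ≤ (l*M)^k := pow_le_pow_left₀ (abs_nonneg _) h1 k
    have h3 : (0:ℝ) < (Nat.factorial k : ℝ) := by positivity
    gcongr
  have hmk : ∀ k : ℕ, Measurable fun a => (l * w a)^k / (Nat.factorial k : ℝ) :=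
    fun k => ((hw.const_mul l).pow_const k).div_const _
  have hintk : ∀ k : ℕ, Integrable (fun a => (l * w a)^k / (Nat.factorial k : ℝ)) ν := by
    intro k
    exact Integrable.mono' (integrable_const _) (hmk k).aestronglyMeasurable
      (Filter.Eventually.of_forall fun a => by rw [Real.norm_eq_abs]; exact hbd k a)
  have hsumM : Summable fun k : ℕ => (l*M)^k / (Nat.factorial k : ℝ) :=
    Real.summable_pow_div_factorial (l*M)
  have hexp : ∀ y : ℝ, Real.exp y = ∑' k : ℕ, y^k / (Nat.factorial k : ℝ) := by
    intro y
    rw [Real.exp_eq_exp_ℝ, NormedSpace.exp_eq_tsum_div]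
  -- swap integral and sum
  have h1 : ∑' k : ℕ, ∫⁻ a, ‖(l * w a)^k / (Nat.factorial k : ℝ)‖₊ ∂ν ≠ ⊤ := by
    have hle : ∀ k : ℕ, ∫⁻ a, ‖(l * w a)^k / (Nat.factorial k : ℝ)‖₊ ∂ν
        ≤ ENNReal.ofReal ((l*M)^k / (Nat.factorial k : ℝ)) := by
      intro k
      calc ∫⁻ a, ‖(l * w a)^k / (Nat.factorial k : ℝ)‖₊ ∂ν
          ≤ ∫⁻ _, ENNReal.ofReal ((l*M)^k / (Nat.factorial k : ℝ)) ∂ν := by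
            refine lintegral_mono fun a => ?_
            rw [← ENNReal.ofReal_coe_nnreal, coe_nnnorm]
            exact ENNReal.ofReal_le_ofReal (by rw [Real.norm_eq_abs]; exact hbd k a)
        _ = ENNReal.ofReal ((l*M)^k / (Nat.factorial k : ℝ)) := by
            simp [lintegral_const]
    refine ne_top_of_le_ne_top ?_ (ENNReal.tsum_le_tsum hle)
    rw [← ENNReal.ofReal_tsum_of_nonneg (fun k => by positivity) hsumM]
    exact ENNReal.ofReal_ne_top
  have h2 : ∫ a, Real.exp (l * w a) ∂ν
      = ∑' k : ℕ, ∫ a, (l * w a)^k / (Nat.factorial k : ℝ) ∂ν := by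
    simp_rw [hexp]
    exact integral_tsum (fun k => (hmk k).aestronglyMeasurable) h1
  set T : ℕ → ℝ := fun k => ∫ a, (l * w a)^k / (Nat.factorial k : ℝ) ∂ν with hT
  have hTbd : ∀ k, |T k| ≤ (l*M)^k / (Nat.factorial k : ℝ) := by
    intro k
    calc |T k| ≤ ∫ a, |(l * w a)^k / (Nat.factorial k : ℝ)| ∂ν := by
          have h := norm_integral_le_integral_norm (μ := ν)
            (fun a => (l * w a)^k / (Nat.factorial k : ℝ))
          simp only [Real.norm_eq_abs] at h
          exact h
      _ ≤ ∫ _, (l*M)^k / (Nat.factorial k : ℝ) ∂ν :=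
          integral_mono (hintk k).abs (integrable_const _) (fun a => hbd k a)
      _ = (l*M)^k / (Nat.factorial k : ℝ) := by simp
  have hTsum : Summable T :=
    Summable.of_norm_bounded hsumM (fun k => hTbd k)
  have hT0 : T 0 = 1 := by simp [hT]
  have hT1 : T 1 = 0 := by
    simp only [hT, pow_one, Nat.factorial_one, Nat.cast_one, div_one]
    rw [integral_const_mul, hmean, mul_zero]
  have hq0 : (0:ℝ) ≤ l * M / 6 := by positivity
  have hgs : Summable fun k : ℕ => 2*l^2*V * (l*M/6)^k :=
    (summable_geometric_of_lt_one hq0 hlM).mul_left _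
  have hTk2 : ∀ k : ℕ, T (k+2) ≤ 2*l^2*V * (l*M/6)^k := by
    intro k
    have hptw : ∀ a, (w a)^(k+2) ≤ M^k * (w a)^2 := by
      intro a
      have h1 : (w a)^(k+2) ≤ |w a|^(k+2) := by
        rw [← abs_pow]; exact le_abs_self _
      have h2 : |w a|^(k+2) = |w a|^k * (w a)^2 := by
        rw [pow_add, sq_abs]
      have h3 : |w a|^k ≤ M^k := pow_le_pow_left₀ (abs_nonneg _) (hwM a) k
      calc (w a)^(k+2) ≤ |w a|^(k+2) := h1
        _ = |w a|^k * (w a)^2 := h2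
        _ ≤ M^k * (w a)^2 := mul_le_mul_of_nonneg_right h3 (sq_nonneg _)
    have habsk : ∀ (m : ℕ) a, ‖(w a)^m‖ ≤ M^m := by
      intro m a
      rw [Real.norm_eq_abs, abs_pow]
      exact pow_le_pow_left₀ (abs_nonneg _) (hwM a) m
    have hw2int : Integrable (fun a => (w a)^2) ν :=
      Integrable.mono' (integrable_const (M^2)) ((hw.pow_const 2).aestronglyMeasurable)
        (Filter.Eventually.of_forall (habsk 2))
    have hwkint : Integrable (fun a => (w a)^(k+2)) ν :=
      Integrable.mono' (integrable_const (M^(k+2))) ((hw.pow_const (k+2)).aestronglyMeasurable)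
        (Filter.Eventually.of_forall (habsk (k+2)))
    have hmom : ∫ a, (w a)^(k+2) ∂ν ≤ M^k * V := by
      calc ∫ a, (w a)^(k+2) ∂ν ≤ ∫ a, M^k * (w a)^2 ∂ν :=
            integral_mono hwkint (hw2int.const_mul _) hptw
        _ = M^k * ∫ a, (w a)^2 ∂ν := integral_const_mul _ _
        _ ≤ M^k * V := mul_le_mul_of_nonneg_left hvar (pow_nonneg hM k)
    have hTval : T (k+2) = (l^(k+2) / (Nat.factorial (k+2) : ℝ)) * ∫ a, (w a)^(k+2) ∂ν := by
      rw [hT]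
      simp only
      rw [← integral_const_mul]
      congr 1
      funext a
      rw [mul_pow]
      ring
    have hc0 : 0 ≤ l^(k+2) / (Nat.factorial (k+2) : ℝ) := by positivity
    have h6 : (6:ℝ)^k ≤ 2 * (Nat.factorial (k+2) : ℝ) := fact_aux k
    calc T (k+2) = (l^(k+2) / (Nat.factorial (k+2) : ℝ)) * ∫ a, (w a)^(k+2) ∂ν := hTval
      _ ≤ (l^(k+2) / (Nat.factorial (k+2):ℝ)) * (M^k * V) := mul_le_mul_of_nonneg_left hmom hc0
      _ = (l^2*V*(l*M)^k) / (Nat.factorial (k+2) : ℝ) := by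
          rw [mul_pow]; ring
      _ ≤ 2*l^2*V * (l*M/6)^k := by
          rw [div_pow, show 2*l^2*V * ((l*M)^k/(6:ℝ)^k) = (2*(l^2*V*(l*M)^k))/(6:ℝ)^k by ring]
          rw [div_le_div_iff₀ (by positivity) (by positivity)]
          have hc : (0:ℝ) ≤ l^2*V*(l*M)^k := by positivity
          nlinarith [mul_le_mul_of_nonneg_left h6 hc]
  have htail : ∑' k : ℕ, T (k+2) ≤ 2*l^2*V / (1 - l*M/6) := by
    have hsum2 : Summable fun k : ℕ => T (k+2) := (summable_nat_add_iff 2).mpr hTsum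
    calc ∑' k : ℕ, T (k+2) ≤ ∑' k : ℕ, 2*l^2*V * (l*M/6)^k := Summable.tsum_le_tsum hTk2 hsum2 hgs
      _ = 2*l^2*V * (1 - l*M/6)⁻¹ := by rw [tsum_mul_left, tsum_geometric_of_lt_one hq0 hlM]
      _ = 2*l^2*V / (1 - l*M/6) := (div_eq_mul_inv _ _).symm
  have hsum1 : Summable fun k : ℕ => T (k+1) := (summable_nat_add_iff 1).mpr hTsum
  have hsplit : ∑' k : ℕ, T k = T 0 + (T 1 + ∑' k : ℕ, T (k+2)) := by
    rw [Summable.tsum_eq_zero_add hTsum, Summable.tsum_eq_zero_add hsum1]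
  calc ∫ a, Real.exp (l * w a) ∂ν = T 0 + (T 1 + ∑' k : ℕ, T (k+2)) := by rw [h2, hsplit]
    _ = 1 + ∑' k : ℕ, T (k+2) := by rw [hT0, hT1]; ring
    _ ≤ 1 + 2*l^2*V / (1 - l*M/6) := by linarith [htail]
    _ ≤ Real.exp (2*l^2*V / (1 - l*M/6)) := by
        have := Real.add_one_le_exp (2*l^2*V / (1 - l*M/6))
        linarith

set_option maxHeartbeats 1000000

private lemma calc_aux (B δ dnx : ℝ) (hB : 0 < B) (hδ : 0 < δ) :
    -(2*δ/(8*B^2 + 2*B*δ/3)) * (δ*dnx)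
      + dnx * (2*(2*δ/(8*B^2 + 2*B*δ/3))^2*B^2/(8*B^2/(8*B^2 + 2*B*δ/3)))
      = -(δ^2*dnx)/(8*B^2 + 2*B*δ/3) := by
  have hD : 0 < 8*B^2 + 2*B*δ/3 := by positivity
  field_simp
  ring

/-- Concentration of the (noise-free) numerator of the GNW estimator:
for bounded `f` with `‖f‖_∞ ≤ B` and every `δ > 0`,
`P(|∑ f(X_i) a(x,X_i)/d_n(x) − (∑ a(x,X_i)/d_n(x)) b_n(f,x)| ≥ δ)
  ≤ 2 exp(−δ² d_n(x)/(8B² + 2Bδ/3))`. -/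
theorem stmt_1
    {n d : ℕ} {Ω : Type} [MeasurableSpace Ω]
    (P : Measure Ω) [IsProbabilityMeasure P]
    (X : Fin n → Ω → EuclideanSpace ℝ (Fin d)) (U : Fin n → Ω → ℝ)
    (hX : ∀ i, Measurable (X i)) (hU : ∀ i, Measurable (U i))
    (p : EuclideanSpace ℝ (Fin d) → ℝ)
    (hp0 : ∀ z, 0 ≤ p z) (hpm : Measurable p) (hp1 : ∫ z, p z = 1)
    (kn : EuclideanSpace ℝ (Fin d) → EuclideanSpace ℝ (Fin d) → ℝ)
    (hk01 : ∀ u v, kn u v ∈ Set.Icc (0 : ℝ) 1)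
    (hkm : Measurable (Function.uncurry kn))
    (x : EuclideanSpace ℝ (Fin d))
    (μX : Measure (EuclideanSpace ℝ (Fin d))) (hμXP : IsProbabilityMeasure μX)
    (hμX : μX = volume.withDensity fun z => ENNReal.ofReal (p z))
    (μU : Measure ℝ) (hμUP : IsProbabilityMeasure μU)
    (hμU : μU = volume.restrict (Set.Icc (0 : ℝ) 1))
    (hlaw : Measure.map (fun ω => fun i : Fin n => (X i ω, U i ω)) P
      = Measure.pi fun _ : Fin n => μX.prod μU)
    (A : Fin n → Ω → ℝ)
    (hA : ∀ i ω, A i ω = if U i ω ≤ kn x (X i ω) then 1 else 0)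
    (cnx dnx : ℝ)
    (hc : cnx = ∫ z, kn x z * p z) (hcpos : 0 < cnx)
    (hd : dnx = n * cnx)
    (f : EuclideanSpace ℝ (Fin d) → ℝ) (B : ℝ)
    (hfm : Measurable f) (hfB : ∀ z, |f z| ≤ B)
    (Tfx bnfx : ℝ)
    (hT : Tfx = ∫ z, f z * (kn x z * p z)) (hb : bnfx = Tfx / cnx)
    :
    ∀ δ : ℝ, 0 < δ →
      (P {ω | δ ≤ |(∑ i, f (X i ω) * A i ω) / dnx - ((∑ i, A i ω) / dnx) * bnfx|}).toReal
        ≤ 2 * Real.exp (-(δ ^ 2 * dnx) / (8 * B ^ 2 + 2 * B * δ / 3)) := by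
  intro δ hδ
  haveI := hμXP
  haveI := hμUP
  have hB0 : 0 ≤ B := le_trans (abs_nonneg _) (hfB x)
  by_cases hdeg : n = 0 ∨ B = 0
  · have hempty : {ω | δ ≤ |(∑ i, f (X i ω) * A i ω) / dnx - ((∑ i, A i ω) / dnx) * bnfx|}
        = (∅ : Set Ω) := by
      ext ω
      simp only [Set.mem_setOf_eq, Set.mem_empty_iff_false, iff_false, not_le]
      rcases hdeg with h0 | hB0'
      · subst h0
        simpa using hδ
      · have hf0 : ∀ z, f z = 0 := fun z => abs_nonpos_iff.mp (hB0' ▸ hfB z)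
        have hb0 : bnfx = 0 := by rw [hb, hT]; simp [hf0]
        simpa [hf0, hb0] using hδ
    rw [hempty]
    simp only [measure_empty, ENNReal.toReal_zero]
    positivity
  push_neg at hdeg
  obtain ⟨hn0, hBne⟩ := hdeg
  have hn : 0 < n := Nat.pos_of_ne_zero hn0
  have hB : 0 < B := lt_of_le_of_ne hB0 (Ne.symm hBne)
  -- basic measurability and integrability on the volume side
  have hκm : Measurable fun z => kn x z := hkm.comp measurable_prodMk_left
  have hpint : Integrable p volume := by
    by_contra h
    have := integral_undef h
    rw [hp1] at this
    norm_num at this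
  have hkpm : Measurable fun z => kn x z * p z := hκm.mul hpm
  have hkp_nonneg : ∀ z, 0 ≤ kn x z * p z := fun z => mul_nonneg (hk01 x z).1 (hp0 z)
  have hkp_le : ∀ z, kn x z * p z ≤ p z := fun z =>
    mul_le_of_le_one_left (hp0 z) (hk01 x z).2
  have hkpint : Integrable (fun z => kn x z * p z) volume :=
    Integrable.mono' hpint hkpm.aestronglyMeasurable
      (Filter.Eventually.of_forall fun z => by
        rw [Real.norm_eq_abs, abs_of_nonneg (hkp_nonneg z)]; exact hkp_le z)
  have hfkpint : Integrable (fun z => f z * (kn x z * p z)) volume := by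
    refine Integrable.mono' (hpint.const_mul B) (hfm.mul hkpm).aestronglyMeasurable
      (Filter.Eventually.of_forall fun z => ?_)
    rw [Real.norm_eq_abs, abs_mul, abs_of_nonneg (hkp_nonneg z)]
    calc |f z| * (kn x z * p z) ≤ B * (kn x z * p z) :=
          mul_le_mul_of_nonneg_right (hfB z) (hkp_nonneg z)
      _ ≤ B * p z := mul_le_mul_of_nonneg_left (hkp_le z) hB0
  have hf2kpint : Integrable (fun z => f z * (f z * (kn x z * p z))) volume := by
    refine Integrable.mono' (hpint.const_mul (B*B)) (hfm.mul (hfm.mul hkpm)).aestronglyMeasurable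
      (Filter.Eventually.of_forall fun z => ?_)
    rw [Real.norm_eq_abs, abs_mul, abs_mul, abs_of_nonneg (hkp_nonneg z)]
    calc |f z| * (|f z| * (kn x z * p z)) ≤ B * (B * (kn x z * p z)) := by
          have h1 := hfB z
          have h2 := abs_nonneg (f z)
          have h3 := hkp_nonneg z
          nlinarith [mul_le_mul_of_nonneg_right h1 h3]
      _ ≤ B * (B * p z) := by
          have h5 := hkp_le z
          nlinarith [mul_le_mul_of_nonneg_left (hkp_le z) (mul_nonneg hB0 hB0)]
      _ = B * B * p z := by ring
  -- bnfx is bounded by B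
  have hTle : |Tfx| ≤ B * cnx := by
    rw [hT, hc]
    calc |∫ z, f z * (kn x z * p z)| ≤ ∫ z, |f z * (kn x z * p z)| ∂volume := by
          have h := norm_integral_le_integral_norm (μ := (volume : Measure (EuclideanSpace ℝ (Fin d))))
            (fun z => f z * (kn x z * p z))
          simp only [Real.norm_eq_abs] at h
          exact h
      _ ≤ ∫ z, B * (kn x z * p z) ∂volume := by
          refine integral_mono hfkpint.abs (hkpint.const_mul B) fun z => ?_
          rw [abs_mul, abs_of_nonneg (hkp_nonneg z)]
          exact mul_le_mul_of_nonneg_right (hfB z) (hkp_nonneg z)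
      _ = B * ∫ z, kn x z * p z ∂volume := integral_const_mul _ _
  have hbB : |bnfx| ≤ B := by
    rw [hb, abs_div, abs_of_pos hcpos, div_le_iff₀ hcpos]
    linarith [hTle]
  -- the centered kernel function g
  set g : EuclideanSpace ℝ (Fin d) × ℝ → ℝ :=
    fun q => (if q.2 ≤ kn x q.1 then (1:ℝ) else 0) * (f q.1 - bnfx) with hgdef
  have hsetm : MeasurableSet {q : EuclideanSpace ℝ (Fin d) × ℝ | q.2 ≤ kn x q.1} :=
    measurableSet_le measurable_snd (hκm.comp measurable_fst)
  have hindm : Measurable fun q : EuclideanSpace ℝ (Fin d) × ℝ =>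
      (if q.2 ≤ kn x q.1 then (1:ℝ) else 0) :=
    Measurable.ite hsetm measurable_const measurable_const
  have hgm : Measurable g :=
    hindm.mul ((hfm.comp measurable_fst).sub measurable_const)
  have hfbB : ∀ z, |f z - bnfx| ≤ 2*B := by
    intro z
    calc |f z - bnfx| ≤ |f z| + |bnfx| := abs_sub _ _
      _ ≤ B + B := add_le_add (hfB z) hbB
      _ = 2*B := by ring
  have hg2B : ∀ q, |g q| ≤ 2*B := by
    intro q
    rw [hgdef]
    simp only
    rw [abs_mul]
    have h1 : |(if q.2 ≤ kn x q.1 then (1:ℝ) else 0)| ≤ 1 := by split_ifs <;> norm_num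
    calc |(if q.2 ≤ kn x q.1 then (1:ℝ) else 0)| * |f q.1 - bnfx| ≤ 1 * (2*B) := by
          have := hfbB q.1
          have := abs_nonneg (if q.2 ≤ kn x q.1 then (1:ℝ) else 0)
          nlinarith
      _ = 2*B := one_mul _
  -- transfer lemma : product-measure integral to volume integral
  have key : ∀ (φ : EuclideanSpace ℝ (Fin d) → ℝ) (C : ℝ), Measurable φ → (∀ z, |φ z| ≤ C) →
      ∫ q, (if q.2 ≤ kn x q.1 then (1:ℝ) else 0) * φ q.1 ∂(μX.prod μU)
        = ∫ z, φ z * (kn x z * p z) ∂volume := by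
    intro φ C hφm hφC
    have hCnn : 0 ≤ C := le_trans (abs_nonneg _) (hφC x)
    have hintq : Integrable
        (fun q : EuclideanSpace ℝ (Fin d) × ℝ => (if q.2 ≤ kn x q.1 then (1:ℝ) else 0) * φ q.1)
        (μX.prod μU) := by
      refine Integrable.mono' (integrable_const C)
        (hindm.mul (hφm.comp measurable_fst)).aestronglyMeasurable
        (Filter.Eventually.of_forall fun q => ?_)
      rw [Real.norm_eq_abs, abs_mul]
      have h1 : |(if q.2 ≤ kn x q.1 then (1:ℝ) else 0)| ≤ 1 := by split_ifs <;> norm_num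
      have h2 := hφC q.1
      have h3 := abs_nonneg (φ q.1)
      nlinarith [abs_nonneg (if q.2 ≤ kn x q.1 then (1:ℝ) else 0)]
    rw [integral_prod _ hintq]
    have hinner : ∀ z : EuclideanSpace ℝ (Fin d),
        ∫ u, (if u ≤ kn x z then (1:ℝ) else 0) * φ z ∂μU = kn x z * φ z := by
      intro z
      rw [integral_mul_const]
      congr 1
      have hieq : (fun u : ℝ => if u ≤ kn x z then (1:ℝ) else 0)
          = (Set.Iic (kn x z)).indicator (fun _ => (1:ℝ)) := by
        funext u
        simp [Set.indicator_apply, Set.mem_Iic]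
      rw [hieq, integral_indicator_const (1:ℝ) measurableSet_Iic]
      rw [hμU, Measure.real_def, Measure.restrict_apply measurableSet_Iic]
      have hseteq : Set.Iic (kn x z) ∩ Set.Icc (0:ℝ) 1 = Set.Icc 0 (kn x z) := by
        ext u
        simp only [Set.mem_inter_iff, Set.mem_Iic, Set.mem_Icc]
        constructor
        · rintro ⟨h1, h2, _⟩; exact ⟨h2, h1⟩
        · rintro ⟨h1, h2⟩; exact ⟨h2, h1, le_trans h2 (hk01 x z).2⟩
      rw [hseteq, Real.volume_Icc, sub_zero, ENNReal.toReal_ofReal (hk01 x z).1, smul_eq_mul,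
        mul_one]
    rw [integral_congr_ae (Filter.Eventually.of_forall hinner)]
    rw [hμX]
    have hdens : (fun z => ENNReal.ofReal (p z))
        = fun z => (((fun z' => Real.toNNReal (p z')) z : NNReal) : ENNReal) := rfl
    rw [hdens, integral_withDensity_eq_integral_smul hpm.real_toNNReal]
    refine integral_congr_ae (Filter.Eventually.of_forall fun z => ?_)
    simp only [NNReal.smul_def, Real.coe_toNNReal _ (hp0 z), smul_eq_mul]
    ring
  -- mean zero
  have hEg0 : ∫ q, g q ∂(μX.prod μU) = 0 := by
    have h1 := key (fun z => f z - bnfx) (2*B) (hfm.sub measurable_const) hfbB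
    rw [hgdef]
    rw [h1]
    have hexpand : (fun z => (f z - bnfx) * (kn x z * p z))
        = fun z => f z * (kn x z * p z) - bnfx * (kn x z * p z) := by
      funext z; ring
    rw [hexpand, integral_sub hfkpint (hkpint.const_mul bnfx), integral_const_mul, ← hT, ← hc]
    rw [hb]
    field_simp
    ring
  -- variance bound
  have hTbc : Tfx = bnfx * cnx := by
    rw [hb]; field_simp
  have hEg2 : ∫ q, (g q)^2 ∂(μX.prod μU) ≤ B^2 * cnx := by
    have hsq : (fun q => (g q)^2)
        = fun q : EuclideanSpace ℝ (Fin d) × ℝ =>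
            (if q.2 ≤ kn x q.1 then (1:ℝ) else 0) * ((f q.1 - bnfx)^2) := by
      funext q
      rw [hgdef]
      simp only
      split_ifs <;> ring
    rw [hsq]
    rw [key (fun z => (f z - bnfx)^2) (4*B^2)
      ((hfm.sub measurable_const).pow_const 2)
      (fun z => by
        rw [abs_of_nonneg (sq_nonneg _)]
        show (f z - bnfx)^2 ≤ 4*B^2
        nlinarith [abs_nonneg (f z - bnfx), sq_abs (f z - bnfx), hfbB z,
          sq_nonneg (2*B - |f z - bnfx|)])]
    have hexpand : (fun z => (f z - bnfx)^2 * (kn x z * p z))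
        = fun z => f z * (f z * (kn x z * p z)) - (2*bnfx) * (f z * (kn x z * p z))
            + bnfx^2 * (kn x z * p z) := by
      funext z; ring
    rw [hexpand]
    have hint1 : Integrable (fun z => f z * (f z * (kn x z * p z))
        - 2*bnfx * (f z * (kn x z * p z))) volume :=
      hf2kpint.sub (hfkpint.const_mul (2*bnfx))
    rw [integral_add hint1 (hkpint.const_mul (bnfx^2)),
      integral_sub hf2kpint (hfkpint.const_mul (2*bnfx)), integral_const_mul, integral_const_mul,
      ← hT, ← hc]
    have hf2le : ∫ z, f z * (f z * (kn x z * p z)) ∂volume ≤ B^2 * cnx := by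
      rw [hc]
      calc ∫ z, f z * (f z * (kn x z * p z)) ∂volume
          ≤ ∫ z, B^2 * (kn x z * p z) ∂volume := by
            refine integral_mono hf2kpint (hkpint.const_mul (B^2)) fun z => ?_
            have h1 := hfB z
            have h2 := hkp_nonneg z
            have h3 := abs_nonneg (f z)
            have h4 : f z * f z ≤ B^2 := by nlinarith [sq_abs (f z), neg_abs_le (f z), le_abs_self (f z)]
            nlinarith
        _ = B^2 * ∫ z, kn x z * p z ∂volume := integral_const_mul _ _
    have hb2c : 0 ≤ bnfx^2 * cnx := mul_nonneg (sq_nonneg _) hcpos.le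
    rw [hTbc]
    nlinarith
  -- transfer to Ω
  set S : Ω → ℝ := fun ω => ∑ i, g (X i ω, U i ω) with hSdef
  have hYm : ∀ i, Measurable fun ω => g (X i ω, U i ω) :=
    fun i => hgm.comp ((hX i).prodMk (hU i))
  have hSm : Measurable S := by
    rw [hSdef]
    exact Finset.measurable_sum _ fun i _ => hYm i
  have hSbd : ∀ ω, |S ω| ≤ (n : ℝ) * (2*B) := by
    intro ω
    rw [hSdef]
    calc |∑ i, g (X i ω, U i ω)| ≤ ∑ i, |g (X i ω, U i ω)| :=
          Finset.abs_sum_le_sum_abs _ _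
      _ ≤ ∑ _i : Fin n, (2*B) := Finset.sum_le_sum fun i _ => hg2B _
      _ = (n : ℝ) * (2*B) := by
          rw [Finset.sum_const, Finset.card_univ, Fintype.card_fin, nsmul_eq_mul]
  have hint : ∀ l : ℝ, Integrable (fun ω => Real.exp (l * S ω)) P := by
    intro l
    refine Integrable.mono' (integrable_const (Real.exp (|l| * ((n:ℝ)*(2*B)))))
      ((hSm.const_mul l).exp).aestronglyMeasurable
      (Filter.Eventually.of_forall fun ω => ?_)
    rw [Real.norm_eq_abs, Real.abs_exp]
    apply Real.exp_le_exp.mpr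
    calc l * S ω ≤ |l * S ω| := le_abs_self _
      _ = |l| * |S ω| := abs_mul _ _
      _ ≤ |l| * ((n:ℝ)*(2*B)) := mul_le_mul_of_nonneg_left (hSbd ω) (abs_nonneg l)
  -- product structure : mgf factorizes
  letI : MeasureSpace (EuclideanSpace ℝ (Fin d) × ℝ) := ⟨μX.prod μU⟩
  haveI : IsProbabilityMeasure (volume : Measure (EuclideanSpace ℝ (Fin d) × ℝ)) :=
    inferInstanceAs (IsProbabilityMeasure (μX.prod μU))
  have hΦm : Measurable (fun ω => fun i : Fin n => (X i ω, U i ω)) :=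
    measurable_pi_lambda _ fun i => (hX i).prodMk (hU i)
  have hmgf : ∀ l : ℝ, ∫ ω, Real.exp (l * S ω) ∂P
      = (∫ q, Real.exp (l * g q) ∂(μX.prod μU))^n := by
    intro l
    have hGm : Measurable fun v : Fin n → EuclideanSpace ℝ (Fin d) × ℝ =>
        Real.exp (l * ∑ i, g (v i)) :=
      ((Finset.measurable_sum _ fun i _ => hgm.comp (measurable_pi_apply i)).const_mul l).exp
    have step1 := integral_map (μ := P) hΦm.aemeasurable
      (f := fun v : Fin n → EuclideanSpace ℝ (Fin d) × ℝ => Real.exp (l * ∑ i, g (v i)))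
      hGm.aestronglyMeasurable
    rw [hlaw] at step1
    rw [hSdef]
    rw [← step1]
    have hprodform : ∀ v : Fin n → EuclideanSpace ℝ (Fin d) × ℝ,
        Real.exp (l * ∑ i, g (v i)) = ∏ i : Fin n, Real.exp (l * g (v i)) := by
      intro v
      rw [Finset.mul_sum, Real.exp_sum]
    rw [integral_congr_ae (Filter.Eventually.of_forall hprodform)]
    have hpieq : (Measure.pi fun _ : Fin n => μX.prod μU)
        = (volume : Measure (Fin n → EuclideanSpace ℝ (Fin d) × ℝ)) := volume_pi.symm
    rw [hpieq]
    rw [← hpieq, MeasureTheory.integral_fin_nat_prod_eq_prod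
      (fun _ : Fin n => fun q : EuclideanSpace ℝ (Fin d) × ℝ => Real.exp (l * g q))]
    rw [Finset.prod_const, Finset.card_univ, Fintype.card_fin]
  -- the MGF bound on each factor
  have hIν : ∀ l : ℝ, 0 ≤ l → l * (2*B) / 6 < 1 →
      (∫ q, Real.exp (l * g q) ∂(μX.prod μU))
        ≤ Real.exp (2*l^2*(B^2*cnx)/(1 - l*(2*B)/6)) :=
    fun l hl hlM => mgf_bound (μX.prod μU) g hgm (2*B) (B^2*cnx) l (by positivity)
      (by positivity) hg2B hEg0 hEg2 hl hlM
  have hIν' : ∀ l : ℝ, 0 ≤ l → l * (2*B) / 6 < 1 →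
      (∫ q, Real.exp (-l * g q) ∂(μX.prod μU))
        ≤ Real.exp (2*l^2*(B^2*cnx)/(1 - l*(2*B)/6)) := by
    intro l hl hlM
    have heq : (fun q => Real.exp (-l * g q)) = fun q => Real.exp (l * (-(g q))) := by
      funext q; ring_nf
    rw [heq]
    exact mgf_bound (μX.prod μU) (fun q => -(g q)) hgm.neg (2*B) (B^2*cnx) l (by positivity)
      (by positivity) (fun q => by rw [abs_neg]; exact hg2B q)
      (by rw [integral_neg, hEg0, neg_zero])
      (by simpa [neg_sq] using hEg2) hl hlM
  -- numbers
  set D : ℝ := 8*B^2 + 2*B*δ/3 with hDdef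
  have hDpos : 0 < D := by rw [hDdef]; positivity
  set l : ℝ := 2*δ/D with hldef
  have hl0 : 0 ≤ l := by rw [hldef]; positivity
  have hden : 1 - l*(2*B)/6 = 8*B^2/D := by
    rw [hldef, hDdef]
    field_simp
    ring
  have hdenpos : 0 < 1 - l*(2*B)/6 := by rw [hden]; positivity
  have hlM : l*(2*B)/6 < 1 := by linarith
  have hdnx : 0 < dnx := by
    rw [hd]
    exact mul_pos (by exact_mod_cast hn) hcpos
  have hncnx : (n:ℝ) * cnx = dnx := hd.symm
  have hfinal : Real.exp (-l * (δ*dnx))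
      * Real.exp (2*l^2*(B^2*cnx)/(1 - l*(2*B)/6))^n = Real.exp (-(δ^2*dnx)/D) := by
    rw [← Real.exp_nat_mul, ← Real.exp_add]
    congr 1
    rw [hden]
    have h1 : (n:ℝ) * (2*l^2*(B^2*cnx)/(8*B^2/D)) = dnx * (2*l^2*B^2/(8*B^2/D)) := by
      rw [← hncnx]; ring
    rw [h1, hldef, hDdef]
    exact calc_aux B δ dnx hB hδ
  have hexpnn : (0:ℝ) ≤ ∫ q, Real.exp (l * g q) ∂(μX.prod μU) :=
    integral_nonneg fun q => (Real.exp_pos _).le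
  have hexpnn' : (0:ℝ) ≤ ∫ q, Real.exp (-l * g q) ∂(μX.prod μU) :=
    integral_nonneg fun q => (Real.exp_pos _).le
  -- Chernoff, upper tail
  have hup : (P {ω | δ*dnx ≤ S ω}).toReal ≤ Real.exp (-(δ^2*dnx)/D) := by
    have h := measure_ge_le_exp_mul_mgf (X := S) (μ := P) (t := l) (δ*dnx) hl0 (hint l)
    refine h.trans ?_
    have hm : mgf S P l = (∫ q, Real.exp (l * g q) ∂(μX.prod μU))^n := hmgf l
    rw [hm]
    calc Real.exp (-l * (δ*dnx)) * (∫ q, Real.exp (l * g q) ∂(μX.prod μU))^n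
        ≤ Real.exp (-l * (δ*dnx)) * Real.exp (2*l^2*(B^2*cnx)/(1 - l*(2*B)/6))^n := by
          refine mul_le_mul_of_nonneg_left ?_ (Real.exp_pos _).le
          exact pow_le_pow_left₀ hexpnn (hIν l hl0 hlM) n
      _ = Real.exp (-(δ^2*dnx)/D) := hfinal
  -- Chernoff, lower tail
  have hlow : (P {ω | S ω ≤ -(δ*dnx)}).toReal ≤ Real.exp (-(δ^2*dnx)/D) := by
    have h := measure_le_le_exp_mul_mgf (X := S) (μ := P) (t := -l) (-(δ*dnx))
      (neg_nonpos.mpr hl0) (hint (-l))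
    refine h.trans ?_
    have hm : mgf S P (-l) = (∫ q, Real.exp (-l * g q) ∂(μX.prod μU))^n := hmgf (-l)
    rw [hm]
    have hee : -(-l) * -(δ*dnx) = -l * (δ*dnx) := by ring
    rw [hee]
    calc Real.exp (-l * (δ*dnx)) * (∫ q, Real.exp (-l * g q) ∂(μX.prod μU))^n
        ≤ Real.exp (-l * (δ*dnx)) * Real.exp (2*l^2*(B^2*cnx)/(1 - l*(2*B)/6))^n := by
          refine mul_le_mul_of_nonneg_left ?_ (Real.exp_pos _).le
          exact pow_le_pow_left₀ hexpnn' (hIν' l hl0 hlM) n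
      _ = Real.exp (-(δ^2*dnx)/D) := hfinal
  -- event inclusion
  have hsub : {ω | δ ≤ |(∑ i, f (X i ω) * A i ω) / dnx - ((∑ i, A i ω) / dnx) * bnfx|}
      ⊆ {ω | δ*dnx ≤ S ω} ∪ {ω | S ω ≤ -(δ*dnx)} := by
    intro ω hω
    simp only [Set.mem_setOf_eq] at hω
    have hsumeq : S ω = (∑ i, f (X i ω) * A i ω) - (∑ i, A i ω) * bnfx := by
      rw [hSdef]
      simp only
      rw [Finset.sum_mul, ← Finset.sum_sub_distrib]
      refine Finset.sum_congr rfl fun i _ => ?_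
      rw [hgdef, hA i ω]
      simp only
      split_ifs <;> ring
    have hexpr : (∑ i, f (X i ω) * A i ω) / dnx - ((∑ i, A i ω) / dnx) * bnfx = S ω / dnx := by
      rw [hsumeq]
      field_simp
    rw [hexpr] at hω
    have habs : δ * dnx ≤ |S ω| := by
      rw [abs_div, abs_of_pos hdnx] at hω
      exact (le_div_iff₀ hdnx).mp hω
    rcases le_abs.mp habs with h | h
    · exact Or.inl h
    · exact Or.inr (by simp only [Set.mem_setOf_eq]; linarith)
  calc (P {ω | δ ≤ |(∑ i, f (X i ω) * A i ω) / dnx - ((∑ i, A i ω) / dnx) * bnfx|}).toReal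
      ≤ (P ({ω | δ*dnx ≤ S ω} ∪ {ω | S ω ≤ -(δ*dnx)})).toReal :=
        ENNReal.toReal_mono (measure_ne_top _ _) (measure_mono hsub)
    _ ≤ (P {ω | δ*dnx ≤ S ω} + P {ω | S ω ≤ -(δ*dnx)}).toReal :=
        ENNReal.toReal_mono
          (ENNReal.add_ne_top.mpr ⟨measure_ne_top _ _, measure_ne_top _ _⟩)
          (measure_union_le _ _)
    _ = (P {ω | δ*dnx ≤ S ω}).toReal + (P {ω | S ω ≤ -(δ*dnx)}).toReal :=
        ENNReal.toReal_add (measure_ne_top _ _) (measure_ne_top _ _)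
    _ ≤ Real.exp (-(δ^2*dnx)/D) + Real.exp (-(δ^2*dnx)/D) := add_le_add hup hlow
    _ = 2 * Real.exp (-(δ ^ 2 * dnx) / D) := by ring
end

section
/- Suppose f : ℝ^d → ℝ is bounded measurable with ‖f‖_∞ ≤ B and the noise variables are centered with |ε_i| ≤ σ almost surely. Then for every δ > 0 there exists a constant C > 0, depending only on δ, B and σ (not on n, x, p or k_n), such that P(|f̂(x) − b_n(f,x)| ≥ δ) ≤ 6·exp(−C·d_n(x)). -/
open MeasureTheory ProbabilityTheory Real Filter
open scoped ENNReal NNReal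



lemma my_int_of_bdd {α : Type*} [MeasurableSpace α] {μ : Measure α} [IsFiniteMeasure μ]
    {g : α → ℝ} (hg : Measurable g) {K : ℝ} (hK : ∀ y, |g y| ≤ K) : Integrable g μ :=
  Integrable.mono' (integrable_const K) hg.aestronglyMeasurable
    (Filter.Eventually.of_forall fun y => by simpa using hK y)

lemma my_exp_quad {t : ℝ} (h : |t| ≤ 1) : Real.exp t ≤ 1 + t + t ^ 2 := by
  have hb := Real.exp_bound h (n := 2) (by norm_num)
  have hs : ∑ i ∈ Finset.range 2, t ^ i / (Nat.factorial i) = 1 + t := by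
    simp [Finset.sum_range_succ, Nat.factorial]
  rw [hs] at hb
  have h1 : Real.exp t - (1 + t) ≤ |t| ^ 2 * ((2 : ℕ).succ / ((Nat.factorial 2) * 2)) :=
    (abs_le.1 hb).2
  have h2 : |t| ^ 2 = t ^ 2 := sq_abs t
  have h3 : ((2 : ℕ).succ : ℝ) / ((Nat.factorial 2) * 2) = 3 / 4 := by
    norm_num [Nat.factorial]
  rw [h2, h3] at h1
  nlinarith [sq_nonneg t]

lemma my_chernoff {V : Type} [MeasurableSpace V] (ν : Measure V) [IsProbabilityMeasure ν]
    (n : ℕ) (g : V → ℝ) (hg : Measurable g) (K : ℝ) (hK : ∀ y, |g y| ≤ K)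
    (t l : ℝ) (hl : 0 < l) :
    ((Measure.pi fun _ : Fin n => ν) {v | t ≤ ∑ i, g (v i)}).toReal
      ≤ Real.exp (-(l * t)) * (∫ y, Real.exp (l * g y) ∂ν) ^ n := by
  letI : MeasureSpace V := ⟨ν⟩
  haveI : IsProbabilityMeasure (volume : Measure V) := ‹IsProbabilityMeasure ν›
  have hπ : (Measure.pi fun _ : Fin n => ν) = (volume : Measure (Fin n → V)) :=
    (volume_pi).symm
  set F : (Fin n → V) → ℝ := fun v => Real.exp (l * ∑ i, g (v i)) with hF
  have hSmeas : Measurable fun v : Fin n → V => ∑ i, g (v i) :=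
    Finset.measurable_sum _ fun i _ => hg.comp (measurable_pi_apply i)
  have hFmeas : Measurable F := (hSmeas.const_mul l).exp
  have hFbdd : ∀ v, |F v| ≤ Real.exp (l * (n * K)) := by
    intro v
    rw [abs_of_pos (Real.exp_pos _)]
    apply Real.exp_le_exp.2
    apply mul_le_mul_of_nonneg_left _ hl.le
    calc ∑ i, g (v i) ≤ ∑ i : Fin n, K :=
          Finset.sum_le_sum fun i _ => (abs_le.1 (hK (v i))).2
      _ = n * K := by simp [mul_comm]
  have hFint : Integrable F (Measure.pi fun _ : Fin n => ν) := my_int_of_bdd hFmeas hFbdd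
  have hmarkov := mul_meas_ge_le_integral_of_nonneg
    (μ := Measure.pi fun _ : Fin n => ν) (f := F)
    (Filter.Eventually.of_forall fun v => (Real.exp_pos _).le) hFint (Real.exp (l * t))
  have hset : {v : Fin n → V | Real.exp (l * t) ≤ F v} = {v | t ≤ ∑ i, g (v i)} := by
    ext v
    simp only [Set.mem_setOf_eq, hF, Real.exp_le_exp]
    exact mul_le_mul_iff_right₀ hl
  rw [hset] at hmarkov
  have hFprod : ∀ v : Fin n → V, F v = ∏ i, Real.exp (l * g (v i)) := by
    intro v; show Real.exp (l * ∑ i, g (v i)) = _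
    rw [Finset.mul_sum, Real.exp_sum]
  have hint : ∫ v, F v ∂(Measure.pi fun _ : Fin n => ν)
      = (∫ y, Real.exp (l * g y) ∂ν) ^ n := by
    simp_rw [hFprod]
    rw [hπ]
    erw [MeasureTheory.integral_fintype_prod_eq_pow (ι := Fin n) (fun y => Real.exp (l * g y)) (μ := ν)]
    rw [Fintype.card_fin]
  rw [hint] at hmarkov
  have hexp : 0 < Real.exp (l * t) := Real.exp_pos _
  rw [Real.exp_neg, inv_mul_eq_div, le_div_iff₀ hexp, mul_comm]
  exact hmarkov


lemma my_mgf_bound {V : Type} [MeasurableSpace V] {ν : Measure V} [IsProbabilityMeasure ν]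
    {w : V → ℝ} (hw : Measurable w) {M l c : ℝ} (hM : 0 < M) (hwb : ∀ v, |w v| ≤ M)
    (hl : 0 < l) (hlM : l * M ≤ 1) (hc : 0 ≤ c)
    (hmean : ∫ v, w v ∂ν = 0) (hsq : ∫ v, (w v) ^ 2 ∂ν ≤ M ^ 2 * c) :
    ∫ v, Real.exp (l * w v) ∂ν ≤ Real.exp (l ^ 2 * (M ^ 2 * c)) := by
  have hpt : ∀ v, Real.exp (l * w v) ≤ 1 + l * w v + (l * w v) ^ 2 := by
    intro v
    apply my_exp_quad
    rw [abs_mul, abs_of_pos hl]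
    calc l * |w v| ≤ l * M := mul_le_mul_of_nonneg_left (hwb v) hl.le
      _ ≤ 1 := hlM
  have hint1 : Integrable (fun v => Real.exp (l * w v)) ν :=
    my_int_of_bdd ((hw.const_mul l).exp) (K := Real.exp (l * M)) (fun v => by
      rw [abs_of_pos (Real.exp_pos _)]
      exact Real.exp_le_exp.2 (mul_le_mul_of_nonneg_left (le_trans (le_abs_self _) (hwb v)) hl.le))
  have hintw : Integrable w ν := my_int_of_bdd hw hwb
  have hintw2 : Integrable (fun v => (w v) ^ 2) ν :=
    my_int_of_bdd (hw.pow_const 2) (K := M ^ 2) (fun v => by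
      rw [abs_of_nonneg (sq_nonneg _)]
      calc (w v) ^ 2 = |w v| ^ 2 := (sq_abs _).symm
        _ ≤ M ^ 2 := pow_le_pow_left₀ (abs_nonneg _) (hwb v) 2)
  have hint2 : Integrable (fun v => 1 + l * w v + (l * w v) ^ 2) ν := by
    have h1 : Integrable (fun v => l ^ 2 * (w v) ^ 2) ν := hintw2.const_mul _
    have h2 : ∀ v, 1 + l * w v + (l * w v) ^ 2 = 1 + l * w v + l ^ 2 * (w v) ^ 2 := by
      intro v; ring
    simp_rw [h2]
    exact (integrable_const 1).add (hintw.const_mul l) |>.add h1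
  calc ∫ v, Real.exp (l * w v) ∂ν ≤ ∫ v, (1 + l * w v + (l * w v) ^ 2) ∂ν :=
        integral_mono hint1 hint2 hpt
    _ = 1 + l * ∫ v, w v ∂ν + l ^ 2 * ∫ v, (w v) ^ 2 ∂ν := by
        have h2 : ∀ v, 1 + l * w v + (l * w v) ^ 2 = 1 + l * w v + l ^ 2 * (w v) ^ 2 := by
          intro v; ring
        simp_rw [h2]
        have h12 : Integrable (fun v => 1 + l * w v) ν := by
          exact (integrable_const 1).add (hintw.const_mul l)
        have h3 : Integrable (fun v => l ^ 2 * w v ^ 2) ν := by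
          exact hintw2.const_mul _
        rw [integral_add h12 h3, integral_add (integrable_const 1) (hintw.const_mul l),
          integral_const, integral_const_mul, integral_const_mul]
        simp
    _ ≤ 1 + l ^ 2 * (M ^ 2 * c) := by
        rw [hmean]
        have := mul_le_mul_of_nonneg_left hsq (sq_nonneg l)
        linarith
    _ ≤ Real.exp (l ^ 2 * (M ^ 2 * c)) := by
        have := Real.add_one_le_exp (l ^ 2 * (M ^ 2 * c))
        linarith


set_option maxHeartbeats 1000000 in
/-- (Concentration of GNW.) If `‖f‖_∞ ≤ B` and the centered noise satisfies
`|ε_i| ≤ σ` a.s., then for every `δ > 0` there is a constant `C > 0` depending only on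
`δ, B, σ` (not on `n`, `x`, `p` or `k_n`) with
`P(|f̂(x) − b_n(f,x)| ≥ δ) ≤ 6 exp(−C d_n(x))`. -/
theorem stmt_3 (B σ δ : ℝ) (hB : 0 ≤ B) (hσ : 0 ≤ σ) (hδ : 0 < δ) :
    ∃ C : ℝ, 0 < C ∧
      ∀ {n d : ℕ} {Ω : Type} [MeasurableSpace Ω]
        (P : Measure Ω) [IsProbabilityMeasure P]
        (X : Fin n → Ω → EuclideanSpace ℝ (Fin d)) (U : Fin n → Ω → ℝ) (ε : Fin n → Ω → ℝ),
        (∀ i, Measurable (X i)) → (∀ i, Measurable (U i)) → (∀ i, Measurable (ε i)) →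
      ∀ (p : EuclideanSpace ℝ (Fin d) → ℝ),
        (∀ z, 0 ≤ p z) → Measurable p → (∫ z, p z = 1) →
      ∀ (kn : EuclideanSpace ℝ (Fin d) → EuclideanSpace ℝ (Fin d) → ℝ),
        (∀ u v, kn u v ∈ Set.Icc (0 : ℝ) 1) → Measurable (Function.uncurry kn) →
      ∀ (x : EuclideanSpace ℝ (Fin d))
        (μX : Measure (EuclideanSpace ℝ (Fin d))), IsProbabilityMeasure μX →
        μX = volume.withDensity (fun z => ENNReal.ofReal (p z)) →
      ∀ (μU : Measure ℝ), IsProbabilityMeasure μU →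
        μU = volume.restrict (Set.Icc (0 : ℝ) 1) →
      ∀ (με : Measure ℝ), IsProbabilityMeasure με →
        Measure.map (fun ω => fun i : Fin n => (X i ω, U i ω, ε i ω)) P
          = Measure.pi (fun _ : Fin n => μX.prod (μU.prod με)) →
        Integrable (fun t : ℝ => t) με → (∫ t : ℝ, t ∂με = 0) →
        (∀ᵐ t ∂με, |t| ≤ σ) →
      ∀ (A : Fin n → Ω → ℝ),
        (∀ i ω, A i ω = if U i ω ≤ kn x (X i ω) then 1 else 0) →
      ∀ (f : EuclideanSpace ℝ (Fin d) → ℝ), Measurable f → (∀ z, |f z| ≤ B) →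
      ∀ (Y : Fin n → Ω → ℝ), (∀ i ω, Y i ω = f (X i ω) + ε i ω) →
      ∀ (fhat : Ω → ℝ),
        (∀ ω, fhat ω =
          if 0 < ∑ i, A i ω then (∑ i, Y i ω * A i ω) / (∑ i, A i ω) else 0) →
      ∀ (cnx dnx Tfx bnfx : ℝ),
        cnx = (∫ z, kn x z * p z) → 0 < cnx → dnx = n * cnx →
        Tfx = (∫ z, f z * (kn x z * p z)) → bnfx = Tfx / cnx →
      (P {ω | δ ≤ |fhat ω - bnfx|}).toReal ≤ 6 * Real.exp (-C * dnx) := by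
  classical
  obtain ⟨M, hMdef⟩ : ∃ M : ℝ, M = 2 * B + σ + 1 := ⟨_, rfl⟩
  have hMpos : 0 < M := by rw [hMdef]; linarith
  obtain ⟨l1, hl1def⟩ : ∃ l1 : ℝ, l1 = min (1 / M) (δ / (4 * M ^ 2)) := ⟨_, rfl⟩
  have hl1pos : 0 < l1 := hl1def ▸ lt_min (by positivity) (by positivity)
  obtain ⟨l0, hl0def⟩ : ∃ l0 : ℝ, l0 = Real.log 2 := ⟨_, rfl⟩
  have hl0pos : 0 < l0 := hl0def ▸ Real.log_pos (by norm_num)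
  have hlog2 : l0 < 1 := by
    have := Real.log_two_lt_d9; rw [hl0def]; linarith
  obtain ⟨C, hCdef⟩ : ∃ C : ℝ, C = min ((1 - l0) / 2) (l1 * δ / 4) := ⟨_, rfl⟩
  have hCpos : 0 < C := hCdef ▸ lt_min (by linarith) (by positivity)
  have hCle1 : C ≤ (1 - l0) / 2 := hCdef ▸ min_le_left _ _
  have hCle2 : C ≤ l1 * δ / 4 := hCdef ▸ min_le_right _ _
  have hl1M : l1 * M ≤ 1 := by
    have h1 : l1 ≤ 1 / M := hl1def ▸ min_le_left _ _
    rw [le_div_iff₀ hMpos] at h1; exact h1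
  have hl1M2 : l1 * M ^ 2 ≤ δ / 4 := by
    have h1 : l1 ≤ δ / (4 * M ^ 2) := hl1def ▸ min_le_right _ _
    rw [le_div_iff₀ (by positivity)] at h1
    linarith [show l1 * (4 * M ^ 2) = 4 * (l1 * M ^ 2) from by ring]
  refine ⟨C, hCpos, ?_⟩
  intro n d Ω mΩ P iP X U ε hX hU hε p hp hpm hp1 kn hkn hknm x μX iμX hμX μU iμU hμU
    με iμε hmap hεint hεmean hεbdd A hA f hfm hfB Y hY fhat hfhat cnx dnx Tfx bnfx
    hcnx hcpos hdnx hT hb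
  -- trivial case n = 0
  rcases Nat.eq_zero_or_pos n with hn0 | hnpos
  · subst hn0
    have hd : dnx = 0 := by rw [hdnx]; simp
    rw [hd, mul_zero, Real.exp_zero, mul_one]
    have h1 : (P {ω | δ ≤ |fhat ω - bnfx|}).toReal ≤ 1 :=
      (ENNReal.toReal_mono ENNReal.one_ne_top prob_le_one).trans_eq ENNReal.toReal_one
    linarith
  -- main case
  have hn1 : (1 : ℝ) ≤ (n : ℝ) := by exact_mod_cast hnpos
  have hncnx : 0 < (n : ℝ) * cnx := by positivity
  set ν : Measure (EuclideanSpace ℝ (Fin d) × ℝ × ℝ) := μX.prod (μU.prod με) with hνdef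
  set πm : Measure (Fin n → EuclideanSpace ℝ (Fin d) × ℝ × ℝ) :=
    Measure.pi fun _ : Fin n => ν with hπdef
  set Φ : Ω → Fin n → EuclideanSpace ℝ (Fin d) × ℝ × ℝ :=
    fun ω => fun i : Fin n => (X i ω, U i ω, ε i ω) with hΦdef
  have hΦm : Measurable Φ :=
    measurable_pi_lambda _ fun i => ((hX i).prodMk ((hU i).prodMk (hε i)))
  set clip : ℝ → ℝ := fun e => max (-σ) (min e σ) with hclipdef
  have hclipm : Measurable clip := measurable_const.max (measurable_id.min measurable_const)
  have hclipb : ∀ e, |clip e| ≤ σ := by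
    intro e
    rw [abs_le]
    constructor
    · exact le_max_left _ _
    · exact max_le (by linarith) (min_le_right _ _)
  have hclipeq : ∀ e : ℝ, |e| ≤ σ → clip e = e := by
    intro e he
    rw [abs_le] at he
    simp only [hclipdef]
    rw [min_eq_left he.2, max_eq_right he.1]
  set a0 : EuclideanSpace ℝ (Fin d) × ℝ × ℝ → ℝ :=
    fun v => if v.2.1 ≤ kn x v.1 then 1 else 0 with ha0def
  have hknx : Measurable fun z : EuclideanSpace ℝ (Fin d) => kn x z :=
    hknm.comp (measurable_const.prodMk measurable_id)
  have ha0m : Measurable a0 :=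
    Measurable.ite (measurableSet_le (measurable_fst.comp measurable_snd)
      (hknx.comp measurable_fst)) measurable_const measurable_const
  have ha0b : ∀ v, 0 ≤ a0 v ∧ a0 v ≤ 1 := by
    intro v; simp only [ha0def]; split <;> norm_num
  have ha0abs : ∀ v, |a0 v| ≤ 1 := fun v =>
    abs_le.2 ⟨by linarith [(ha0b v).1], (ha0b v).2⟩
  -- p is integrable, cnx ≤ 1, |bnfx| ≤ B
  have hpint : Integrable p volume := by
    by_contra h
    rw [integral_undef h] at hp1
    norm_num at hp1
  have hknpm : Measurable fun z => kn x z * p z := hknx.mul hpm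
  have hknp_int : Integrable (fun z => kn x z * p z) volume := by
    apply hpint.mono' hknpm.aestronglyMeasurable
    apply Filter.Eventually.of_forall
    intro z
    rw [Real.norm_eq_abs, abs_mul, abs_of_nonneg ((hkn x z).1), abs_of_nonneg (hp z)]
    calc kn x z * p z ≤ 1 * p z :=
          mul_le_mul_of_nonneg_right (hkn x z).2 (hp z)
      _ = p z := one_mul _
  have hcle1 : cnx ≤ 1 := by
    rw [hcnx, ← hp1]
    apply integral_mono hknp_int hpint
    intro z
    calc kn x z * p z ≤ 1 * p z := mul_le_mul_of_nonneg_right (hkn x z).2 (hp z)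
      _ = p z := one_mul _
  have hfknp_int : Integrable (fun z => f z * (kn x z * p z)) volume := by
    apply (hpint.const_mul B).mono' ((hfm.mul hknpm).aestronglyMeasurable)
    apply Filter.Eventually.of_forall
    intro z
    simp only [Real.norm_eq_abs, Pi.mul_apply]
    rw [abs_mul]
    have h1 : |kn x z * p z| = kn x z * p z := by
      rw [abs_of_nonneg (mul_nonneg (hkn x z).1 (hp z))]
    rw [h1]
    calc |f z| * (kn x z * p z) ≤ B * (kn x z * p z) :=
          mul_le_mul_of_nonneg_right (hfB z) (mul_nonneg (hkn x z).1 (hp z))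
      _ ≤ B * (1 * p z) := by
          apply mul_le_mul_of_nonneg_left _ hB
          exact mul_le_mul_of_nonneg_right (hkn x z).2 (hp z)
      _ = B * p z := by ring
  have hbB : |bnfx| ≤ B := by
    have hTle : |Tfx| ≤ B * cnx := by
      rw [hT, hcnx]
      calc |∫ z, f z * (kn x z * p z)| ≤ ∫ z, |f z * (kn x z * p z)| := by
            simpa only [Real.norm_eq_abs] using
              norm_integral_le_integral_norm (fun z => f z * (kn x z * p z))
        _ ≤ ∫ z, B * (kn x z * p z) := by
            apply integral_mono hfknp_int.abs (hknp_int.const_mul B)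
            intro z
            dsimp only
            rw [abs_mul, abs_of_nonneg (mul_nonneg (hkn x z).1 (hp z))]
            exact mul_le_mul_of_nonneg_right (hfB z) (mul_nonneg (hkn x z).1 (hp z))
        _ = B * ∫ z, kn x z * p z := integral_const_mul _ _
    rw [hb, abs_div, abs_of_pos hcpos, div_le_iff₀ hcpos]
    exact hTle
  -- integral of bounded measurable g against μX
  have hμXg : ∀ g : EuclideanSpace ℝ (Fin d) → ℝ, Measurable g →
      ∫ z, g z ∂μX = ∫ z, p z * g z := by
    intro g hg
    rw [hμX]
    have hpm' : Measurable fun z => (p z).toNNReal := hpm.real_toNNReal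
    have h1 := integral_withDensity_eq_integral_smul (μ := (volume : Measure (EuclideanSpace ℝ (Fin d)))) hpm' g
    have h2 : (fun z => ENNReal.ofReal (p z)) = fun z => ((p z).toNNReal : ℝ≥0∞) := rfl
    rw [h2, h1]
    apply integral_congr_ae
    apply Filter.Eventually.of_forall
    intro z
    dsimp only
    rw [NNReal.smul_def, smul_eq_mul, Real.coe_toNNReal _ (hp z)]
  -- uniform integral of indicator
  have hind : ∀ t : ℝ, 0 ≤ t → t ≤ 1 → ∫ u, (if u ≤ t then (1:ℝ) else 0) ∂μU = t := by
    intro t h0 h1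
    rw [hμU]
    have he : (fun u => if u ≤ t then (1:ℝ) else 0)
        = Set.indicator (Set.Iic t) (fun _ => (1:ℝ)) := by
      ext u
      simp [Set.indicator_apply, Set.mem_Iic]
    rw [he, integral_indicator_const (1:ℝ) measurableSet_Iic]
    rw [Measure.real, Measure.restrict_apply measurableSet_Iic]
    have hs : Set.Iic t ∩ Set.Icc 0 1 = Set.Icc 0 t := by
      ext u
      simp only [Set.mem_inter_iff, Set.mem_Iic, Set.mem_Icc]
      constructor
      · rintro ⟨h2, h3, h4⟩; exact ⟨h3, h2⟩
      · rintro ⟨h2, h3⟩; exact ⟨h3, h2, le_trans h3 h1⟩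
    rw [hs, Real.volume_Icc, smul_eq_mul, mul_one, ENNReal.toReal_ofReal (by linarith)]
    ring
  -- the inner integral of a0
  have hinnerA : ∀ z : EuclideanSpace ℝ (Fin d),
      ∫ y : ℝ × ℝ, a0 (z, y) ∂(μU.prod με) = kn x z := by
    intro z
    have h1 : ∀ y : ℝ × ℝ, a0 (z, y)
        = (fun u => if u ≤ kn x z then (1:ℝ) else 0) y.1 * (fun _ : ℝ => (1:ℝ)) y.2 := by
      intro y
      simp only [ha0def, mul_one]
    rw [integral_congr_ae (Filter.Eventually.of_forall h1),
      integral_prod_mul (fun u => if u ≤ kn x z then (1:ℝ) else 0) (fun _ : ℝ => (1:ℝ))]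
    rw [hind _ (hkn x z).1 (hkn x z).2]
    simp
  have ha0int : Integrable a0 ν := my_int_of_bdd ha0m ha0abs
  have hca : ∫ v, a0 v ∂ν = cnx := by
    rw [hνdef, MeasureTheory.integral_prod _ (hνdef ▸ ha0int)]
    have h2 : ∀ z : EuclideanSpace ℝ (Fin d),
        (∫ y : ℝ × ℝ, a0 (z, y) ∂(μU.prod με)) = kn x z := hinnerA
    rw [integral_congr_ae (Filter.Eventually.of_forall h2), hμXg _ hknx, hcnx]
    apply integral_congr_ae
    apply Filter.Eventually.of_forall
    intro z
    dsimp only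
    ring
  have hcnx0 : 0 ≤ cnx := hcpos.le
  -- z0 and its properties
  set z0 : EuclideanSpace ℝ (Fin d) × ℝ × ℝ → ℝ :=
    fun v => (f v.1 + clip v.2.2 - bnfx) * a0 v with hz0def
  have hz0m : Measurable z0 :=
    (((hfm.comp measurable_fst).add
      (hclipm.comp (measurable_snd.comp measurable_snd))).sub measurable_const).mul ha0m
  have hcore : ∀ v : EuclideanSpace ℝ (Fin d) × ℝ × ℝ,
      |f v.1 + clip v.2.2 - bnfx| ≤ M := by
    intro v
    have h1 := hfB v.1
    have h2 := hclipb v.2.2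
    have h3 := hbB
    rw [hMdef]
    rw [abs_le] at *
    constructor <;> linarith [h1.1, h1.2, h2.1, h2.2, h3.1, h3.2]
  have hz0b : ∀ v, |z0 v| ≤ M := by
    intro v
    simp only [hz0def]
    rw [abs_mul]
    calc |f v.1 + clip v.2.2 - bnfx| * |a0 v| ≤ M * 1 :=
          mul_le_mul (hcore v) (ha0abs v) (abs_nonneg _) hMpos.le
      _ = M := mul_one _
  have hz0int : Integrable z0 ν := my_int_of_bdd hz0m hz0b
  have hclipmean : ∫ e, clip e ∂με = 0 := by
    rw [integral_congr_ae (hεbdd.mono fun t ht => hclipeq t ht)]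
    exact hεmean
  have hg1m : Measurable fun v : EuclideanSpace ℝ (Fin d) × ℝ × ℝ =>
      (f v.1 - bnfx) * a0 v := ((hfm.comp measurable_fst).sub measurable_const).mul ha0m
  have hg1b : ∀ v : EuclideanSpace ℝ (Fin d) × ℝ × ℝ, |(f v.1 - bnfx) * a0 v| ≤ B + B := by
    intro v
    rw [abs_mul]
    calc |f v.1 - bnfx| * |a0 v| ≤ (B + B) * 1 := by
          apply mul_le_mul _ (ha0abs v) (abs_nonneg _) (by linarith)
          calc |f v.1 - bnfx| ≤ |f v.1| + |bnfx| := abs_sub _ _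
            _ ≤ B + B := add_le_add (hfB v.1) hbB
      _ = B + B := mul_one _
  have hg1int : Integrable (fun v : EuclideanSpace ℝ (Fin d) × ℝ × ℝ =>
      (f v.1 - bnfx) * a0 v) ν := my_int_of_bdd hg1m hg1b
  have hg2m : Measurable fun v : EuclideanSpace ℝ (Fin d) × ℝ × ℝ =>
      clip v.2.2 * a0 v := (hclipm.comp (measurable_snd.comp measurable_snd)).mul ha0m
  have hg2b : ∀ v : EuclideanSpace ℝ (Fin d) × ℝ × ℝ, |clip v.2.2 * a0 v| ≤ σ := by
    intro v
    rw [abs_mul]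
    calc |clip v.2.2| * |a0 v| ≤ σ * 1 :=
          mul_le_mul (hclipb _) (ha0abs v) (abs_nonneg _) hσ
      _ = σ := mul_one _
  have hg2int : Integrable (fun v : EuclideanSpace ℝ (Fin d) × ℝ × ℝ =>
      clip v.2.2 * a0 v) ν := my_int_of_bdd hg2m hg2b
  have hEz : ∫ v, z0 v ∂ν = 0 := by
    have hsplit : ∀ v : EuclideanSpace ℝ (Fin d) × ℝ × ℝ,
        z0 v = (f v.1 - bnfx) * a0 v + clip v.2.2 * a0 v := by
      intro v; simp only [hz0def]; ring
    rw [integral_congr_ae (Filter.Eventually.of_forall hsplit),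
      integral_add hg1int hg2int]
    have hg1 : ∫ v, (f v.1 - bnfx) * a0 v ∂ν = 0 := by
      rw [hνdef, MeasureTheory.integral_prod _ (hνdef ▸ hg1int)]
      have hinner1 : ∀ z : EuclideanSpace ℝ (Fin d),
          (∫ y : ℝ × ℝ, (f z - bnfx) * a0 (z, y) ∂(μU.prod με))
            = (f z - bnfx) * kn x z := by
        intro z
        rw [integral_const_mul, hinnerA z]
      rw [integral_congr_ae (Filter.Eventually.of_forall hinner1),
        hμXg (fun z => (f z - bnfx) * kn x z) ((hfm.sub measurable_const).mul hknx)]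
      have hsplit2 : ∀ z : EuclideanSpace ℝ (Fin d),
          p z * ((f z - bnfx) * kn x z)
            = f z * (kn x z * p z) - bnfx * (kn x z * p z) := by
        intro z; ring
      rw [integral_congr_ae (Filter.Eventually.of_forall hsplit2),
        integral_sub hfknp_int (hknp_int.const_mul bnfx), integral_const_mul,
        ← hT, ← hcnx, hb]
      field_simp
      ring
    have hg2 : ∫ v, clip v.2.2 * a0 v ∂ν = 0 := by
      rw [hνdef, MeasureTheory.integral_prod _ (hνdef ▸ hg2int)]
      have hinner2 : ∀ z : EuclideanSpace ℝ (Fin d),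
          (∫ y : ℝ × ℝ, clip (z, y).2.2 * a0 (z, y) ∂(μU.prod με)) = 0 := by
        intro z
        have h1 : ∀ y : ℝ × ℝ, clip (z, y).2.2 * a0 (z, y)
            = (fun u => if u ≤ kn x z then (1:ℝ) else 0) y.1 * (fun e => clip e) y.2 := by
          intro y
          simp only [ha0def]
          ring
        rw [integral_congr_ae (Filter.Eventually.of_forall h1),
          integral_prod_mul (fun u => if u ≤ kn x z then (1:ℝ) else 0) (fun e => clip e),
          hclipmean, mul_zero]
      rw [integral_congr_ae (Filter.Eventually.of_forall hinner2), integral_zero]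
    rw [hg1, hg2, add_zero]
  have hz0sqint : Integrable (fun v => (z0 v) ^ 2) ν :=
    my_int_of_bdd (hz0m.pow_const 2) (K := M ^ 2) (fun v => by
      rw [abs_of_nonneg (sq_nonneg _)]
      calc (z0 v) ^ 2 = |z0 v| ^ 2 := (sq_abs _).symm
        _ ≤ M ^ 2 := pow_le_pow_left₀ (abs_nonneg _) (hz0b v) 2)
  have hEz2 : ∫ v, (z0 v) ^ 2 ∂ν ≤ M ^ 2 * cnx := by
    have hpt : ∀ v, (z0 v) ^ 2 ≤ M ^ 2 * a0 v := by
      intro v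
      have hcv := hcore v
      have h01 : a0 v = 0 ∨ a0 v = 1 := by
        simp only [ha0def]
        split
        · right; rfl
        · left; rfl
      rcases h01 with h | h
      · simp only [hz0def, h, mul_zero, mul_one]
        norm_num
      · simp only [hz0def, h, mul_one]
        calc (f v.1 + clip v.2.2 - bnfx) ^ 2 = |f v.1 + clip v.2.2 - bnfx| ^ 2 :=
              (sq_abs _).symm
          _ ≤ M ^ 2 := pow_le_pow_left₀ (abs_nonneg _) hcv 2
    calc ∫ v, (z0 v) ^ 2 ∂ν ≤ ∫ v, M ^ 2 * a0 v ∂ν :=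
          integral_mono hz0sqint (ha0int.const_mul _) hpt
      _ = M ^ 2 * cnx := by rw [integral_const_mul, hca]
  -- the three bad sets
  set S1 : Set (Fin n → EuclideanSpace ℝ (Fin d) × ℝ × ℝ) := {v | -((n:ℝ) * cnx / 2) ≤ ∑ i, -a0 (v i)} with hS1def
  set S2 : Set (Fin n → EuclideanSpace ℝ (Fin d) × ℝ × ℝ) := {v | δ * ((n:ℝ) * cnx) / 2 ≤ ∑ i, z0 (v i)} with hS2def
  set S3 : Set (Fin n → EuclideanSpace ℝ (Fin d) × ℝ × ℝ) := {v | δ * ((n:ℝ) * cnx) / 2 ≤ ∑ i, -z0 (v i)} with hS3def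
  have hS1m : MeasurableSet S1 := measurableSet_le measurable_const
    (Finset.measurable_sum _ fun i _ => (ha0m.comp (measurable_pi_apply i)).neg)
  have hS2m : MeasurableSet S2 := measurableSet_le measurable_const
    (Finset.measurable_sum _ fun i _ => hz0m.comp (measurable_pi_apply i))
  have hS3m : MeasurableSet S3 := measurableSet_le measurable_const
    (Finset.measurable_sum _ fun i _ => (hz0m.comp (measurable_pi_apply i)).neg)
  have hmapS : ∀ S : Set (Fin n → EuclideanSpace ℝ (Fin d) × ℝ × ℝ),
      MeasurableSet S → P (Φ ⁻¹' S) = πm S := by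
    intro S hS
    rw [← Measure.map_apply hΦm hS, hmap]
  -- the noise is bounded a.s.
  have hmst : MeasurableSet {t : ℝ | ¬ |t| ≤ σ} := by
    simp only [not_le]
    exact measurableSet_lt measurable_const measurable_abs
  have hbadt : με {t : ℝ | ¬ |t| ≤ σ} = 0 := ae_iff.1 hεbdd
  have hsndm : Measurable fun v : EuclideanSpace ℝ (Fin d) × ℝ × ℝ => v.2.2 :=
    measurable_snd.comp measurable_snd
  have hbadV : ν {v : EuclideanSpace ℝ (Fin d) × ℝ × ℝ | ¬ |v.2.2| ≤ σ} = 0 := by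
    have hmm : ν.map (fun v : EuclideanSpace ℝ (Fin d) × ℝ × ℝ => v.2.2) = με := by
      rw [hνdef]
      have h1 : (fun v : EuclideanSpace ℝ (Fin d) × ℝ × ℝ => v.2.2)
          = (Prod.snd : ℝ × ℝ → ℝ) ∘ (Prod.snd : EuclideanSpace ℝ (Fin d) × ℝ × ℝ → ℝ × ℝ) :=
        rfl
      rw [h1, ← Measure.map_map measurable_snd measurable_snd,
        Measure.map_snd_prod, measure_univ, one_smul, Measure.map_snd_prod,
        measure_univ, one_smul]
    have h2 : {v : EuclideanSpace ℝ (Fin d) × ℝ × ℝ | ¬ |v.2.2| ≤ σ}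
        = (fun v : EuclideanSpace ℝ (Fin d) × ℝ × ℝ => v.2.2) ⁻¹' {t : ℝ | ¬ |t| ≤ σ} := rfl
    rw [h2, ← Measure.map_apply hsndm hmst, hmm]
    exact hbadt
  have hnull : P {ω | ¬ ∀ i, |ε i ω| ≤ σ} = 0 := by
    apply measure_mono_null (t := ⋃ i : Fin n,
      Φ ⁻¹' (Function.eval i ⁻¹' {v : EuclideanSpace ℝ (Fin d) × ℝ × ℝ | ¬ |v.2.2| ≤ σ}))
    · intro ω hω
      simp only [Set.mem_setOf_eq, not_forall] at hω
      obtain ⟨i, hi⟩ := hω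
      exact Set.mem_iUnion.2 ⟨i, hi⟩
    · apply measure_iUnion_null
      intro i
      have hms2 : MeasurableSet ((Function.eval i :
            (Fin n → EuclideanSpace ℝ (Fin d) × ℝ × ℝ) → EuclideanSpace ℝ (Fin d) × ℝ × ℝ) ⁻¹'
          {v : EuclideanSpace ℝ (Fin d) × ℝ × ℝ | ¬ |v.2.2| ≤ σ}) := by
        exact (measurable_pi_apply i) (hsndm hmst)
      rw [hmapS _ hms2]
      exact Measure.pi_eval_preimage_null _ hbadV
  -- event inclusion
  have hsub : {ω | δ ≤ |fhat ω - bnfx|} ∩ {ω | ∀ i, |ε i ω| ≤ σ}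
      ⊆ Φ ⁻¹' (S1 ∪ S2 ∪ S3) := by
    rintro ω ⟨hω, hG⟩
    simp only [Set.mem_setOf_eq] at hω hG
    have hAeq : ∀ i, a0 (Φ ω i) = A i ω := by
      intro i
      simp only [ha0def, hΦdef]
      exact (hA i ω).symm
    show Φ ω ∈ (S1 ∪ S2) ∪ S3
    by_cases hN : (∑ i, A i ω) ≤ (n:ℝ) * cnx / 2
    · refine Or.inl (Or.inl ?_)
      show Φ ω ∈ S1
      simp only [hS1def, Set.mem_setOf_eq]
      simp_rw [hAeq]
      rw [Finset.sum_neg_distrib]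
      linarith
    · push_neg at hN
      have hNpos : 0 < ∑ i, A i ω := lt_trans (by linarith) hN
      have hfeq : fhat ω = (∑ i, Y i ω * A i ω) / (∑ i, A i ω) := by
        rw [hfhat, if_pos hNpos]
      have hzeq : ∀ i, z0 (Φ ω i) = Y i ω * A i ω - bnfx * A i ω := by
        intro i
        simp only [hz0def]
        rw [hAeq i]
        show (f (X i ω) + clip (ε i ω) - bnfx) * A i ω = _
        rw [hclipeq _ (hG i), ← hY i ω]
        ring
      have hzsum : ∑ i, z0 (Φ ω i)
          = (∑ i, Y i ω * A i ω) - bnfx * (∑ i, A i ω) := by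
        rw [Finset.sum_congr rfl (fun i _ => hzeq i), Finset.sum_sub_distrib,
          ← Finset.mul_sum]
      have hzabs : δ * ((n:ℝ) * cnx) / 2 ≤ |∑ i, z0 (Φ ω i)| := by
        have h2 : ∑ i, z0 (Φ ω i) = (fhat ω - bnfx) * (∑ i, A i ω) := by
          rw [hzsum, hfeq]
          field_simp
        rw [h2, abs_mul, abs_of_pos hNpos]
        calc δ * ((n:ℝ) * cnx) / 2 = δ * ((n:ℝ) * cnx / 2) := by ring
          _ ≤ δ * (∑ i, A i ω) := mul_le_mul_of_nonneg_left hN.le hδ.le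
          _ ≤ |fhat ω - bnfx| * (∑ i, A i ω) :=
              mul_le_mul_of_nonneg_right hω hNpos.le
      rcases le_abs.1 hzabs with h | h
      · refine Or.inl (Or.inr ?_)
        show Φ ω ∈ S2
        simp only [hS2def, Set.mem_setOf_eq]
        exact h
      · refine Or.inr ?_
        show Φ ω ∈ S3
        simp only [hS3def, Set.mem_setOf_eq]
        rw [Finset.sum_neg_distrib]
        exact h
  -- measure bound
  have hPle : P {ω | δ ≤ |fhat ω - bnfx|} ≤ πm S1 + πm S2 + πm S3 := by
    calc P {ω | δ ≤ |fhat ω - bnfx|}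
        ≤ P (({ω | δ ≤ |fhat ω - bnfx|} ∩ {ω | ∀ i, |ε i ω| ≤ σ})
            ∪ {ω | ¬ ∀ i, |ε i ω| ≤ σ}) := by
          apply measure_mono
          intro ω hω
          by_cases h : ∀ i, |ε i ω| ≤ σ
          · exact Or.inl ⟨hω, h⟩
          · exact Or.inr h
      _ ≤ P ({ω | δ ≤ |fhat ω - bnfx|} ∩ {ω | ∀ i, |ε i ω| ≤ σ})
            + P {ω | ¬ ∀ i, |ε i ω| ≤ σ} := measure_union_le _ _
      _ = P ({ω | δ ≤ |fhat ω - bnfx|} ∩ {ω | ∀ i, |ε i ω| ≤ σ}) := by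
          rw [hnull, add_zero]
      _ ≤ P (Φ ⁻¹' (S1 ∪ S2 ∪ S3)) := measure_mono hsub
      _ = πm (S1 ∪ S2 ∪ S3) := hmapS _ ((hS1m.union hS2m).union hS3m)
      _ ≤ πm (S1 ∪ S2) + πm S3 := measure_union_le _ _
      _ ≤ πm S1 + πm S2 + πm S3 := by
          gcongr
          exact measure_union_le _ _
  -- Chernoff bounds
  have hmgfA : ∫ y, Real.exp (l0 * (-a0 y)) ∂ν = 1 - cnx / 2 := by
    have hpt : ∀ y, Real.exp (l0 * (-a0 y)) = 1 + (Real.exp (-l0) - 1) * a0 y := by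
      intro y
      simp only [ha0def]
      split
      · rw [mul_neg, mul_one, Real.exp_neg]
        ring
      · simp
    rw [integral_congr_ae (Filter.Eventually.of_forall hpt),
      integral_add (integrable_const 1) (ha0int.const_mul _), integral_const,
      integral_const_mul, hca]
    have he : Real.exp (-l0) = 1 / 2 := by
      rw [hl0def, Real.exp_neg, Real.exp_log two_pos]
      norm_num
    rw [he]
    simp [measure_univ]
    ring
  have hB1 : (πm S1).toReal ≤ Real.exp (-C * dnx) := by
    have h : (πm S1).toReal ≤ Real.exp (-(l0 * -((n:ℝ) * cnx / 2)))
        * (∫ y, Real.exp (l0 * (-a0 y)) ∂ν) ^ n :=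
      my_chernoff ν n (fun y => -a0 y) ha0m.neg 1
        (fun y => by rw [abs_neg]; exact ha0abs y) (-((n:ℝ) * cnx / 2)) l0 hl0pos
    rw [hmgfA] at h
    have h0 : (0:ℝ) ≤ 1 - cnx / 2 := by linarith
    have h1 : (1 - cnx / 2 : ℝ) ≤ Real.exp (-(cnx / 2)) := by
      have := Real.add_one_le_exp (-(cnx / 2))
      linarith
    have h2 : (1 - cnx / 2 : ℝ) ^ n ≤ Real.exp (-(cnx / 2)) ^ n :=
      pow_le_pow_left₀ h0 h1 n
    have h3 : Real.exp (-(cnx / 2)) ^ n = Real.exp ((n:ℝ) * -(cnx / 2)) :=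
      (Real.exp_nat_mul _ n).symm
    calc (πm S1).toReal
        ≤ Real.exp (-(l0 * -((n:ℝ) * cnx / 2))) * (1 - cnx / 2) ^ n := h
      _ ≤ Real.exp (-(l0 * -((n:ℝ) * cnx / 2))) * Real.exp ((n:ℝ) * -(cnx / 2)) :=
          mul_le_mul_of_nonneg_left (h2.trans_eq h3) (Real.exp_pos _).le
      _ = Real.exp (-(l0 * -((n:ℝ) * cnx / 2)) + (n:ℝ) * -(cnx / 2)) :=
          (Real.exp_add _ _).symm
      _ ≤ Real.exp (-C * dnx) := by
          apply Real.exp_le_exp.2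
          rw [hdnx]
          nlinarith [mul_le_mul_of_nonneg_right hCle1 hncnx.le]
  have hmgfZ : ∀ w : EuclideanSpace ℝ (Fin d) × ℝ × ℝ → ℝ, Measurable w → (∀ v, |w v| ≤ M) → (∫ v, w v ∂ν = 0) →
      (∫ v, (w v) ^ 2 ∂ν ≤ M ^ 2 * cnx) →
      Real.exp (-(l1 * (δ * ((n:ℝ) * cnx) / 2))) * (∫ y, Real.exp (l1 * w y) ∂ν) ^ n
        ≤ Real.exp (-C * dnx) := by
    intro w hwm hwb hwmean hwsq
    have hm := my_mgf_bound (ν := ν) hwm hMpos hwb hl1pos hl1M hcnx0 hwmean hwsq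
    have h2 : (∫ y, Real.exp (l1 * w y) ∂ν) ^ n
        ≤ Real.exp (l1 ^ 2 * (M ^ 2 * cnx)) ^ n :=
      pow_le_pow_left₀ (integral_nonneg fun y => (Real.exp_pos _).le) hm n
    calc Real.exp (-(l1 * (δ * ((n:ℝ) * cnx) / 2))) * (∫ y, Real.exp (l1 * w y) ∂ν) ^ n
        ≤ Real.exp (-(l1 * (δ * ((n:ℝ) * cnx) / 2)))
            * Real.exp (l1 ^ 2 * (M ^ 2 * cnx)) ^ n :=
          mul_le_mul_of_nonneg_left h2 (Real.exp_pos _).le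
      _ = Real.exp (-(l1 * (δ * ((n:ℝ) * cnx) / 2)) + (n:ℝ) * (l1 ^ 2 * (M ^ 2 * cnx))) := by
          rw [← Real.exp_nat_mul, ← Real.exp_add]
      _ ≤ Real.exp (-C * dnx) := by
          apply Real.exp_le_exp.2
          rw [hdnx]
          have h3 : l1 * (l1 * M ^ 2) ≤ l1 * (δ / 4) :=
            mul_le_mul_of_nonneg_left hl1M2 hl1pos.le
          nlinarith [mul_le_mul_of_nonneg_right h3 hncnx.le,
            mul_le_mul_of_nonneg_right hCle2 hncnx.le]
  have hB2 : (πm S2).toReal ≤ Real.exp (-C * dnx) := by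
    have h := my_chernoff ν n z0 hz0m M hz0b (δ * ((n:ℝ) * cnx) / 2) l1 hl1pos
    exact h.trans (hmgfZ z0 hz0m hz0b hEz hEz2)
  have hB3 : (πm S3).toReal ≤ Real.exp (-C * dnx) := by
    have h := my_chernoff ν n (fun v => -z0 v) hz0m.neg M
      (fun v => by rw [abs_neg]; exact hz0b v) (δ * ((n:ℝ) * cnx) / 2) l1 hl1pos
    apply h.trans
    apply hmgfZ (fun v => -z0 v) hz0m.neg (fun v => by rw [abs_neg]; exact hz0b v)
    · rw [integral_neg, hEz, neg_zero]
    · simpa only [neg_pow, neg_neg, even_two.neg_pow] using hEz2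
  -- combine
  have htr : (P {ω | δ ≤ |fhat ω - bnfx|}).toReal
      ≤ (πm S1).toReal + (πm S2).toReal + (πm S3).toReal := by
    have h1 : (P {ω | δ ≤ |fhat ω - bnfx|}).toReal
        ≤ (πm S1 + πm S2 + πm S3).toReal := by
      apply ENNReal.toReal_mono _ hPle
      exact ENNReal.add_ne_top.2 ⟨ENNReal.add_ne_top.2
        ⟨measure_ne_top _ _, measure_ne_top _ _⟩, measure_ne_top _ _⟩
    rwa [ENNReal.toReal_add (ENNReal.add_ne_top.2
        ⟨measure_ne_top _ _, measure_ne_top _ _⟩) (measure_ne_top _ _),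
      ENNReal.toReal_add (measure_ne_top _ _) (measure_ne_top _ _)] at h1
  have hexp : 0 < Real.exp (-C * dnx) := Real.exp_pos _
  linarith
end

section
/- (Decoupling trick) For all pairs of disjoint subsets I, J ⊆ {1,…,n}, one has R_J(x)·∏_{i∈I} a(x,X_i) = R_{I∪J}(x)·∏_{i∈I} a(x,X_i) almost surely, and the random variable R_{I∪J}(x) is independent of the family {a(x,X_i) : i ∈ I}. -/
open MeasureTheory ProbabilityTheory Real Filter

/-- (Decoupling trick.) For all disjoint `I, J ⊆ {1,…,n}`,
`R_J(x) ∏_{i∈I} a(x,X_i) = R_{I∪J}(x) ∏_{i∈I} a(x,X_i)` almost surely, and `R_{I∪J}(x)`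
is independent of the family `{a(x,X_i) : i ∈ I}`. -/
theorem stmt_4
    {n d : ℕ} {Ω : Type} [MeasurableSpace Ω]
    (P : Measure Ω) [IsProbabilityMeasure P]
    (X : Fin n → Ω → EuclideanSpace ℝ (Fin d)) (U : Fin n → Ω → ℝ)
    (hX : ∀ i, Measurable (X i)) (hU : ∀ i, Measurable (U i))
    (p : EuclideanSpace ℝ (Fin d) → ℝ)
    (hp0 : ∀ z, 0 ≤ p z) (hpm : Measurable p) (hp1 : ∫ z, p z = 1)
    (kn : EuclideanSpace ℝ (Fin d) → EuclideanSpace ℝ (Fin d) → ℝ)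
    (hk01 : ∀ u v, kn u v ∈ Set.Icc (0 : ℝ) 1)
    (hkm : Measurable (Function.uncurry kn))
    (x : EuclideanSpace ℝ (Fin d))
    (μX : Measure (EuclideanSpace ℝ (Fin d))) (hμXP : IsProbabilityMeasure μX)
    (hμX : μX = volume.withDensity fun z => ENNReal.ofReal (p z))
    (μU : Measure ℝ) (hμUP : IsProbabilityMeasure μU)
    (hμU : μU = volume.restrict (Set.Icc (0 : ℝ) 1))
    (hlaw : Measure.map (fun ω => fun i : Fin n => (X i ω, U i ω)) P
      = Measure.pi fun _ : Fin n => μX.prod μU)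
    (A : Fin n → Ω → ℝ)
    (hA : ∀ i ω, A i ω = if U i ω ≤ kn x (X i ω) then 1 else 0)
    (R : Finset (Fin n) → Ω → ℝ)
    (hR : ∀ (I : Finset (Fin n)) (ω : Ω), R I ω =
      if I.Nonempty then 1 / (I.card + ∑ j ∈ Iᶜ, A j ω)
      else if 0 < ∑ i, A i ω then 1 / (∑ i, A i ω) else 0) :
    ∀ I J : Finset (Fin n), Disjoint I J →
      (∀ᵐ ω ∂P, R J ω * ∏ i ∈ I, A i ω = R (I ∪ J) ω * ∏ i ∈ I, A i ω) ∧
      IndepFun (R (I ∪ J)) (fun ω (i : I) => A i.1 ω) P := by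
  classical
  have hA01 : ∀ i ω, A i ω = 0 ∨ A i ω = 1 := by
    intro i ω; rw [hA]; split_ifs <;> simp
  have hAnn : ∀ i ω, 0 ≤ A i ω := by
    intro i ω; rcases hA01 i ω with h | h <;> rw [h] <;> norm_num
  -- joint variables
  set Y : Fin n → Ω → (EuclideanSpace ℝ (Fin d)) × ℝ := fun i ω => (X i ω, U i ω) with hY
  have hYm : ∀ i, Measurable (Y i) := fun i => (hX i).prodMk (hU i)
  set ν : Measure ((EuclideanSpace ℝ (Fin d)) × ℝ) := μX.prod μU with hνdef
  have hνP : IsProbabilityMeasure ν := by infer_instance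
  -- key measure computation
  have key : ∀ (S : Finset (Fin n)) (B : Fin n → Set ((EuclideanSpace ℝ (Fin d)) × ℝ)),
      (∀ i ∈ S, MeasurableSet (B i)) →
      P (⋂ i ∈ S, Y i ⁻¹' B i) = ∏ i ∈ S, ν (B i) := by
    intro S B hB
    set B' : Fin n → Set ((EuclideanSpace ℝ (Fin d)) × ℝ) := fun i => if i ∈ S then B i else Set.univ with hB'
    have hB'm : ∀ i, MeasurableSet (B' i) := by
      intro i
      by_cases h : i ∈ S
      · simpa [B', h] using hB i h
      · simp [B', h]
    have hset : (⋂ i ∈ S, Y i ⁻¹' B i)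
        = (fun ω => fun i : Fin n => (X i ω, U i ω)) ⁻¹' (Set.pi Set.univ B') := by
      ext ω
      simp only [Set.mem_iInter, Set.mem_preimage, Set.mem_pi, Set.mem_univ, forall_true_left, B']
      constructor
      · intro h i; split_ifs with hi
        · exact h i hi
        · exact Set.mem_univ _
      · intro h i hi; have := h i; rwa [if_pos hi] at this
    rw [hset, ← Measure.map_apply (measurable_pi_lambda _ hYm)
        (MeasurableSet.univ_pi hB'm), hlaw, Measure.pi_pi]
    calc ∏ i, (μX.prod μU) (B' i) = ∏ i : Fin n, (if i ∈ S then ν (B i) else 1) := by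
          refine Finset.prod_congr rfl fun i _ => ?_
          by_cases hi : i ∈ S <;> simp [B', hi, hνdef]
      _ = ∏ i ∈ S, ν (B i) := by rw [Finset.prod_ite_mem, Finset.univ_inter]
  -- coordinates are independent
  have hYInd : iIndepFun Y P := by
    rw [iIndepFun_iff_measure_inter_preimage_eq_mul]
    intro S B hB
    rw [key S B hB]
    refine Finset.prod_congr rfl ?_
    intro i hi
    have h1 := key {i} B (fun j hj => by rw [Finset.mem_singleton.mp hj]; exact hB i hi)
    simpa using h1.symm
  -- move to A
  set g : (EuclideanSpace ℝ (Fin d)) × ℝ → ℝ := fun q => if q.2 ≤ kn x q.1 then 1 else 0 with hg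
  have hgm : Measurable g := by
    have hknm : Measurable fun q : (EuclideanSpace ℝ (Fin d)) × ℝ => kn x q.1 :=
      hkm.comp (measurable_const.prodMk measurable_fst)
    have hset : MeasurableSet {q : (EuclideanSpace ℝ (Fin d)) × ℝ | q.2 ≤ kn x q.1} :=
      measurableSet_le measurable_snd hknm
    exact Measurable.ite hset measurable_const measurable_const
  have hAeq : ∀ i, A i = g ∘ Y i := by
    intro i; funext ω
    simp only [Function.comp, g, Y]
    exact hA i ω
  have hAm : ∀ i, Measurable (A i) := fun i => (hAeq i) ▸ hgm.comp (hYm i)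
  have hAInd : iIndepFun A P := by
    have h2 : A = fun i => g ∘ Y i := funext hAeq
    rw [h2]
    exact hYInd.comp (fun _ => g) (fun _ => hgm)
  intro I J hIJ
  constructor
  · -- a.s. (in fact pointwise) equality
    refine Filter.Eventually.of_forall fun ω => ?_
    by_cases h0 : ∏ i ∈ I, A i ω = 0
    · rw [h0, mul_zero, mul_zero]
    · have h1 : ∀ i ∈ I, A i ω = 1 := fun i hi =>
        (hA01 i ω).resolve_left fun hz => h0 (Finset.prod_eq_zero hi hz)
      have hRJ : R J ω = R (I ∪ J) ω := by
        rcases I.eq_empty_or_nonempty with hI | hI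
        · rw [hI, Finset.empty_union]
        · have hIJne : (I ∪ J).Nonempty := hI.mono Finset.subset_union_left
          have hsumI : ∑ i ∈ I, A i ω = (I.card : ℝ) := by
            rw [Finset.sum_congr rfl h1, Finset.sum_const, nsmul_eq_mul, mul_one]
          have hdisj2 : Disjoint I ((I ∪ J)ᶜ : Finset (Fin n)) :=
            (disjoint_compl_left.mono_right Finset.subset_union_left).symm
          have hU2 : (Jᶜ : Finset (Fin n)) = I ∪ (I ∪ J)ᶜ := by
            ext j
            have hj : j ∈ I → j ∉ J := fun h => Finset.disjoint_left.mp hIJ h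
            simp only [Finset.mem_compl, Finset.mem_union]
            tauto
          have hsplit : ∑ j ∈ Jᶜ, A j ω = (I.card : ℝ) + ∑ j ∈ (I ∪ J)ᶜ, A j ω := by
            rw [hU2, Finset.sum_union hdisj2, hsumI]
          have hcard : ((I ∪ J).card : ℝ) = (I.card : ℝ) + (J.card : ℝ) := by
            rw [Finset.card_union_of_disjoint hIJ]; push_cast; ring
          rcases J.eq_empty_or_nonempty with hJ | hJ
          · rw [hR, hR, if_neg (by simp [hJ]), if_pos hIJne]
            have hall : ∑ i, A i ω = ((I ∪ J).card : ℝ) + ∑ j ∈ (I ∪ J)ᶜ, A j ω := by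
              rw [← Finset.sum_add_sum_compl (I ∪ J)]
              congr 1
              rw [hJ, Finset.union_empty] at *
              exact hsumI
            have hpos : 0 < ∑ i, A i ω := by
              have hc : (0 : ℝ) < ((I ∪ J).card : ℝ) := by
                exact_mod_cast Finset.card_pos.mpr hIJne
              have hs : 0 ≤ ∑ j ∈ (I ∪ J)ᶜ, A j ω :=
                Finset.sum_nonneg fun j _ => hAnn j ω
              rw [hall]; linarith
            rw [if_pos hpos, hall]
          · rw [hR, hR, if_pos hJ, if_pos hIJne, hsplit, hcard]
            congr 1
            ring
      rw [hRJ]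
  · -- independence
    have hdisj : Disjoint ((I ∪ J)ᶜ : Finset (Fin n)) I :=
      disjoint_compl_left.mono_right Finset.subset_union_left
    have hbase := hAInd.indepFun_finset ((I ∪ J)ᶜ) I hdisj hAm
    set S : Finset (Fin n) := (I ∪ J)ᶜ with hS
    set F : (S → ℝ) → ℝ := fun y =>
      if (I ∪ J).Nonempty then 1 / (((I ∪ J).card : ℝ) + ∑ j, y j)
      else if 0 < ∑ j, y j then 1 / (∑ j, y j) else 0 with hF
    have hsumm : Measurable fun y : S → ℝ => ∑ j, y j :=
      Finset.measurable_sum _ fun j _ => measurable_pi_apply j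
    have hFm : Measurable F := by
      by_cases hne : (I ∪ J).Nonempty
      · simp only [F, if_pos hne]
        exact measurable_const.div (measurable_const.add hsumm)
      · simp only [F, if_neg hne]
        exact Measurable.ite (measurableSet_lt measurable_const hsumm)
          (measurable_const.div hsumm) measurable_const
    have hRF : R (I ∪ J) = F ∘ (fun ω (j : S) => A j.1 ω) := by
      funext ω
      simp only [Function.comp, F]
      rw [hR]
      have hsc : (∑ j : S, A j.1 ω) = ∑ j ∈ S, A j ω :=
        Finset.sum_coe_sort S (fun j => A j ω)
      by_cases hne : (I ∪ J).Nonempty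
      · rw [if_pos hne, if_pos hne, hsc]
      · rw [if_neg hne, if_neg hne]
        have h2 : S = Finset.univ := by
          rw [Finset.not_nonempty_iff_eq_empty] at hne
          simp [hS, hne]
        rw [hsc, h2]
    rw [hRF]
    exact hbase.comp hFm measurable_id
end

section
/- Let g : ℝ^d × ℝ → ℝ be measurable with E[g(X_1,ε_1)²] < ∞, and set F_i = g(X_i,ε_i). Then for every pair of distinct indices i ≠ j in {1,…,n}, E[F_i F_j a(x,X_i) a(x,X_j) R_i(x) R_j(x)] = E[F_i a(x,X_i)]·E[F_j a(x,X_j)]·E[R_{{i,j}}(x)²]. -/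
open MeasureTheory ProbabilityTheory Real Filter

/-- For measurable `g` with `E[g(X_1,ε_1)²] < ∞`, `F_i = g(X_i,ε_i)` and
distinct `i ≠ j`,
`E[F_i F_j a_i a_j R_i(x) R_j(x)] = E[F_i a_i] E[F_j a_j] E[R_{i,j}(x)²]`. -/
theorem stmt_5
    {n d : ℕ} {Ω : Type} [MeasurableSpace Ω]
    (P : Measure Ω) [IsProbabilityMeasure P]
    (X : Fin n → Ω → EuclideanSpace ℝ (Fin d)) (U : Fin n → Ω → ℝ) (ε : Fin n → Ω → ℝ)
    (hX : ∀ i, Measurable (X i)) (hU : ∀ i, Measurable (U i))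
    (hε : ∀ i, Measurable (ε i))
    (p : EuclideanSpace ℝ (Fin d) → ℝ)
    (hp0 : ∀ z, 0 ≤ p z) (hpm : Measurable p) (hp1 : ∫ z, p z = 1)
    (kn : EuclideanSpace ℝ (Fin d) → EuclideanSpace ℝ (Fin d) → ℝ)
    (hk01 : ∀ u v, kn u v ∈ Set.Icc (0 : ℝ) 1)
    (hkm : Measurable (Function.uncurry kn))
    (x : EuclideanSpace ℝ (Fin d))
    (μX : Measure (EuclideanSpace ℝ (Fin d))) (hμXP : IsProbabilityMeasure μX)
    (hμX : μX = volume.withDensity fun z => ENNReal.ofReal (p z))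
    (μU : Measure ℝ) (hμUP : IsProbabilityMeasure μU)
    (hμU : μU = volume.restrict (Set.Icc (0 : ℝ) 1))
    (με : Measure ℝ) (hμεP : IsProbabilityMeasure με)
    (hlaw : Measure.map (fun ω => fun i : Fin n => (X i ω, U i ω, ε i ω)) P
      = Measure.pi fun _ : Fin n => μX.prod (μU.prod με))
    (A : Fin n → Ω → ℝ)
    (hA : ∀ i ω, A i ω = if U i ω ≤ kn x (X i ω) then 1 else 0)
    (g : EuclideanSpace ℝ (Fin d) × ℝ → ℝ) (hg : Measurable g)
    (hg2 : ∀ i, Integrable (fun ω => (g (X i ω, ε i ω)) ^ 2) P)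
    (R : Finset (Fin n) → Ω → ℝ)
    (hR : ∀ (I : Finset (Fin n)), I.Nonempty → ∀ ω : Ω,
      R I ω = 1 / (I.card + ∑ j ∈ Iᶜ, A j ω)) :
    ∀ i j : Fin n, i ≠ j →
      ∫ ω, g (X i ω, ε i ω) * g (X j ω, ε j ω) * A i ω * A j ω * R {i} ω * R {j} ω ∂P
        = (∫ ω, g (X i ω, ε i ω) * A i ω ∂P) * (∫ ω, g (X j ω, ε j ω) * A j ω ∂P)
            * ∫ ω, (R {i, j} ω) ^ 2 ∂P := by
  classical
  intro i j hij
  set ν : Measure (EuclideanSpace ℝ (Fin d) × ℝ × ℝ) := μX.prod (μU.prod με) with hν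
  have hνP : IsProbabilityMeasure ν := by
    rw [hν]; infer_instance
  -- the coordinate random variables
  set Y : Fin n → Ω → EuclideanSpace ℝ (Fin d) × ℝ × ℝ := fun i ω => (X i ω, U i ω, ε i ω) with hYdef
  have hYm : ∀ i, Measurable (Y i) := fun i =>
    (hX i).prodMk ((hU i).prodMk (hε i))
  have hΦm : Measurable (fun ω => fun i : Fin n => Y i ω) :=
    measurable_pi_lambda _ fun i => hYm i
  -- key computation of joint laws
  have hkey : ∀ (S : Finset (Fin n)) (sets : Fin n → Set (EuclideanSpace ℝ (Fin d) × ℝ × ℝ)),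
      (∀ i ∈ S, MeasurableSet (sets i)) →
      P (⋂ i ∈ S, Y i ⁻¹' sets i) = ∏ i ∈ S, ν (sets i) := by
    intro S sets hsets
    have hpre : (fun ω => fun i : Fin n => Y i ω) ⁻¹' (Set.pi ↑S sets)
        = ⋂ i ∈ S, Y i ⁻¹' sets i := by
      ext ω; simp [Set.mem_pi]
    have hms : MeasurableSet (Set.pi ↑S sets) :=
      MeasurableSet.pi (Set.to_countable _) (by simpa using hsets)
    have := Measure.map_apply hΦm hms (μ := P)
    rw [hlaw, hpre] at this
    rw [← this]
    have : Set.pi (↑S) sets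
        = Set.pi Set.univ (fun i => if i ∈ S then sets i else Set.univ) := by
      ext v
      simp only [Set.mem_pi, Set.mem_univ, true_implies, Finset.mem_coe]
      constructor
      · intro h i
        split
        · exact h i ‹_›
        · trivial
      · intro h i hi
        have := h i; rwa [if_pos hi] at this
    rw [this, Measure.pi_pi]
    have : ∀ i : Fin n, ν (if i ∈ S then sets i else Set.univ)
        = if i ∈ S then ν (sets i) else 1 := by
      intro i; split <;> simp
    simp_rw [this]
    rw [Finset.prod_ite_mem, Finset.univ_inter]
  -- independence of the coordinates
  have hiid : iIndepFun Y P := by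
    rw [iIndepFun_iff_measure_inter_preimage_eq_mul]
    intro S sets hsets
    rw [hkey S sets hsets]
    refine Finset.prod_congr rfl fun i hi => ?_
    have := hkey {i} sets (by simpa using hsets i hi)
    simpa using this.symm
  -- the three building blocks
  set f1 : EuclideanSpace ℝ (Fin d) × ℝ × ℝ → ℝ :=
    fun v => g (v.1, v.2.2) * (if v.2.1 ≤ kn x v.1 then (1 : ℝ) else 0) with hf1def
  have hknx : Measurable (kn x) := by
    have : (kn x) = Function.uncurry kn ∘ (fun v => (x, v)) := rfl
    rw [this]; exact hkm.comp (measurable_const.prodMk measurable_id)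
  have hf1m : Measurable f1 := by
    apply Measurable.mul
    · exact hg.comp (measurable_fst.prodMk (measurable_snd.snd))
    · exact Measurable.ite
        (measurableSet_le measurable_snd.fst (hknx.comp measurable_fst))
        measurable_const measurable_const
  set T : Finset (Fin n) := ({i, j} : Finset (Fin n))ᶜ with hTdef
  set f3 : ((l : T) → EuclideanSpace ℝ (Fin d) × ℝ × ℝ) → ℝ :=
    fun v => (1 / (2 + ∑ l : T, (if (v l).2.1 ≤ kn x (v l).1 then (1:ℝ) else 0))) ^ 2
    with hf3def
  have hf3m : Measurable f3 := by
    apply Measurable.pow _ measurable_const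
    apply Measurable.div measurable_const
    apply Measurable.add measurable_const
    apply Finset.measurable_sum
    intro l _
    exact Measurable.ite
      (measurableSet_le (measurable_snd.fst.comp (measurable_pi_apply l))
        (hknx.comp (measurable_fst.comp (measurable_pi_apply l))))
      measurable_const measurable_const
  -- B1, B2, B3
  have hB1 : ∀ ω, f1 (Y i ω) = g (X i ω, ε i ω) * A i ω := by
    intro ω; simp [hf1def, hYdef, hA]
  have hB2 : ∀ ω, f1 (Y j ω) = g (X j ω, ε j ω) * A j ω := by
    intro ω; simp [hf1def, hYdef, hA]
  have hcardij : ({i, j} : Finset (Fin n)).card = 2 := Finset.card_pair hij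
  have hB3 : ∀ ω, f3 (fun l : T => Y l ω) = (R {i, j} ω) ^ 2 := by
    intro ω
    have h1 : R {i, j} ω = 1 / (2 + ∑ l ∈ T, A l ω) := by
      rw [hR {i, j} ⟨i, by simp⟩ ω, hcardij, ← hTdef]
      norm_num
    have h2 : ∑ l : T, (if (U l ω : ℝ) ≤ kn x (X l ω) then (1:ℝ) else 0)
        = ∑ l ∈ T, A l ω := by
      rw [← Finset.sum_coe_sort T (fun l => A l ω)]
      refine Finset.sum_congr rfl fun l _ => ?_
      rw [hA]
    simp only [hf3def, hYdef, h2, h1]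
  -- integrability facts
  have hFi_int : ∀ k : Fin n, Integrable (fun ω => g (X k ω, ε k ω)) P := by
    intro k
    have hm : AEStronglyMeasurable (fun ω => g (X k ω, ε k ω)) P :=
      (hg.comp ((hX k).prodMk (hε k))).aestronglyMeasurable
    have h2 : MemLp (fun ω => g (X k ω, ε k ω)) 2 P :=
      (memLp_two_iff_integrable_sq hm).2 (hg2 k)
    exact h2.integrable one_le_two
  have hB1int : Integrable (fun ω => f1 (Y i ω)) P := by
    refine Integrable.mono (hFi_int i)
      ((hf1m.comp (hYm i)).aestronglyMeasurable) ?_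
    filter_upwards with ω
    rw [hB1 ω, hA]
    simp only [norm_mul, Real.norm_eq_abs]
    split <;> simp [abs_nonneg]
  have hB2int : Integrable (fun ω => f1 (Y j ω)) P := by
    refine Integrable.mono (hFi_int j)
      ((hf1m.comp (hYm j)).aestronglyMeasurable) ?_
    filter_upwards with ω
    rw [hB2 ω, hA]
    simp only [norm_mul, Real.norm_eq_abs]
    split <;> simp [abs_nonneg]
  have hA01 : ∀ k ω, A k ω = 0 ∨ A k ω = 1 := by
    intro k ω; rw [hA]; split <;> simp
  have hAnn : ∀ k ω, 0 ≤ A k ω := by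
    intro k ω; rcases hA01 k ω with h | h <;> simp [h]
  have hB3int : Integrable (fun ω => f3 (fun l : T => Y l ω)) P := by
    refine Integrable.mono (integrable_const (1 : ℝ))
      ((hf3m.comp (measurable_pi_lambda _ fun l => hYm l)).aestronglyMeasurable) ?_
    filter_upwards with ω
    rw [hB3 ω]
    have hsum : (0:ℝ) ≤ ∑ l ∈ T, A l ω :=
      Finset.sum_nonneg fun l _ => hAnn l ω
    have h1 : R {i, j} ω = 1 / (2 + ∑ l ∈ T, A l ω) := by
      rw [hR {i, j} ⟨i, by simp⟩ ω, hcardij, ← hTdef]; norm_num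
    have h2 : (0:ℝ) ≤ R {i, j} ω := by
      rw [h1]; positivity
    have h3 : R {i, j} ω ≤ 1 := by
      rw [h1]
      rw [div_le_one (by linarith)]
      linarith
    simp only [Real.norm_eq_abs, norm_one]
    rw [abs_of_nonneg (by positivity)]
    calc (R {i,j} ω)^2 ≤ 1^2 := by
          apply pow_le_pow_left₀ h2 h3
      _ = 1 := one_pow 2
  -- independence statements
  have hind12 : IndepFun (fun ω => f1 (Y i ω)) (fun ω => f1 (Y j ω)) P :=
    (hiid.indepFun hij).comp hf1m hf1m
  have hdisj : Disjoint ({i, j} : Finset (Fin n)) T := by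
    simp only [hTdef]; exact disjoint_compl_right
  have hindfin := hiid.indepFun_finset {i, j} T hdisj hYm
  have hiS : i ∈ ({i, j} : Finset (Fin n)) := by simp
  have hjS : j ∈ ({i, j} : Finset (Fin n)) := by simp
  set φ : ((l : ({i, j} : Finset (Fin n))) → EuclideanSpace ℝ (Fin d) × ℝ × ℝ) → ℝ :=
    fun v => f1 (v ⟨i, hiS⟩) * f1 (v ⟨j, hjS⟩) with hφdef
  have hφm : Measurable φ :=
    (hf1m.comp (measurable_pi_apply _)).mul (hf1m.comp (measurable_pi_apply _))
  have hind3 : IndepFun (fun ω => f1 (Y i ω) * f1 (Y j ω))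
      (fun ω => f3 (fun l : T => Y l ω)) P := by
    have := hindfin.comp hφm hf3m
    exact this
  -- pointwise identity for the LHS integrand
  have hpt : ∀ ω, g (X i ω, ε i ω) * g (X j ω, ε j ω) * A i ω * A j ω * R {i} ω * R {j} ω
      = (f1 (Y i ω) * f1 (Y j ω)) * f3 (fun l : T => Y l ω) := by
    intro ω
    rw [hB1 ω, hB2 ω, hB3 ω]
    rcases hA01 i ω with hi0 | hi1
    · simp [hi0]
    rcases hA01 j ω with hj0 | hj1
    · simp [hj0]
    -- both A i ω = A j ω = 1
    have herase_j : (({i} : Finset (Fin n))ᶜ).erase j = T := by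
      rw [hTdef, Finset.pair_comm, ← Finset.compl_insert]
    have herase_i : (({j} : Finset (Fin n))ᶜ).erase i = T := by
      rw [hTdef, ← Finset.compl_insert]
    have hsum_i : ∑ l ∈ ({i} : Finset (Fin n))ᶜ, A l ω
        = 1 + ∑ l ∈ T, A l ω := by
      rw [← Finset.add_sum_erase _ _ (show j ∈ ({i} : Finset (Fin n))ᶜ by
        simp [Finset.mem_compl, Ne.symm hij]), herase_j, hj1]
    have hsum_j : ∑ l ∈ ({j} : Finset (Fin n))ᶜ, A l ω
        = 1 + ∑ l ∈ T, A l ω := by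
      rw [← Finset.add_sum_erase _ _ (show i ∈ ({j} : Finset (Fin n))ᶜ by
        simp [Finset.mem_compl, hij]), herase_i, hi1]
    have hRi : R {i} ω = R {i, j} ω := by
      rw [hR {i} ⟨i, by simp⟩ ω, hR {i, j} ⟨i, by simp⟩ ω, hcardij,
        Finset.card_singleton, hsum_i, ← hTdef]
      push_cast
      ring_nf
    have hRj : R {j} ω = R {i, j} ω := by
      rw [hR {j} ⟨j, by simp⟩ ω, hR {i, j} ⟨i, by simp⟩ ω, hcardij,
        Finset.card_singleton, hsum_j, ← hTdef]
      push_cast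
      ring_nf
    rw [hRi, hRj, hi1, hj1]
    ring
  -- put it all together
  calc ∫ ω, g (X i ω, ε i ω) * g (X j ω, ε j ω) * A i ω * A j ω * R {i} ω * R {j} ω ∂P
      = ∫ ω, (f1 (Y i ω) * f1 (Y j ω)) * f3 (fun l : T => Y l ω) ∂P := by
        exact integral_congr_ae (Filter.Eventually.of_forall hpt)
    _ = (∫ ω, f1 (Y i ω) * f1 (Y j ω) ∂P) * ∫ ω, f3 (fun l : T => Y l ω) ∂P := by
        exact hind3.integral_fun_mul_eq_mul_integral (hind12.integrable_mul hB1int hB2int).aestronglyMeasurable hB3int.aestronglyMeasurable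
    _ = ((∫ ω, f1 (Y i ω) ∂P) * ∫ ω, f1 (Y j ω) ∂P) * ∫ ω, f3 (fun l : T => Y l ω) ∂P := by
        congr 1
        exact hind12.integral_fun_mul_eq_mul_integral hB1int.aestronglyMeasurable hB2int.aestronglyMeasurable
    _ = (∫ ω, g (X i ω, ε i ω) * A i ω ∂P) * (∫ ω, g (X j ω, ε j ω) * A j ω ∂P)
            * ∫ ω, (R {i, j} ω) ^ 2 ∂P := by
        congr 1
        · congr 1 <;> exact integral_congr_ae (Filter.Eventually.of_forall (by intro ω; first | exact hB1 ω | exact hB2 ω))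
        · exact integral_congr_ae (Filter.Eventually.of_forall fun ω => hB3 ω)
end

section
/- (Variance lower bound) Suppose f : ℝ^d → ℝ is bounded measurable, E[ε_1] = 0 and E[ε_1²] = σ² < ∞. Then E[(f̂(x) − b_n(f,x))²] ≥ σ²·(1 − e^{−d_n(x)})²/d_n(x). -/
open MeasureTheory ProbabilityTheory Real Filter

open Function Set

open MeasureTheory ProbabilityTheory Real Filter Function Set


lemma my_map_eval {ι : Type*} [Fintype ι] {α : ι → Type*} [∀ i, MeasurableSpace (α i)]
    (μ : ∀ i, Measure (α i)) [∀ i, IsProbabilityMeasure (μ i)] (i : ι) :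
    Measure.map (Function.eval i) (Measure.pi μ) = μ i := by
  classical
  ext s hs
  rw [Measure.map_apply (measurable_pi_apply i) hs, Set.eval_preimage,
    Measure.pi_pi]
  classical
  rw [Finset.prod_eq_single i (fun j _ hj => by simp [Function.update_of_ne hj])
    (by simp)]
  simp

lemma my_map_pair {ι : Type*} [Fintype ι] {α : ι → Type*} [∀ i, MeasurableSpace (α i)]
    (μ : ∀ i, Measure (α i)) [∀ i, IsProbabilityMeasure (μ i)] {i j : ι} (hij : i ≠ j) :
    Measure.map (fun w => (w i, w j)) (Measure.pi μ) = (μ i).prod (μ j) := by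
  classical
  symm
  refine Measure.prod_eq (fun s t hs ht => ?_)
  rw [Measure.map_apply ((measurable_pi_apply i).prodMk (measurable_pi_apply j))
    (hs.prod ht)]
  have : (fun w : ∀ k, α k => (w i, w j)) ⁻¹' (s ×ˢ t)
      = Set.pi Set.univ (Function.update (Function.update (fun k => (Set.univ : Set (α k))) i s) j t) := by
    ext w
    simp only [Set.mem_preimage, Set.mem_prod, Set.mem_pi, Set.mem_univ, true_implies]
    constructor
    · rintro ⟨h1, h2⟩ k
      rcases eq_or_ne k j with rfl | hkj
      · simpa using h2
      rcases eq_or_ne k i with rfl | hki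
      · simpa [Function.update_of_ne hij] using h1
      · simp [Function.update_of_ne hkj, Function.update_of_ne hki]
    · intro h
      refine ⟨?_, ?_⟩
      · have := h i; simpa [Function.update_of_ne hij] using this
      · have := h j; simpa using this
  rw [this, Measure.pi_pi]
  rw [Finset.prod_eq_mul_of_mem i j (Finset.mem_univ i) (Finset.mem_univ j) hij
    (fun k _ hk => by simp [Function.update_of_ne hk.2, Function.update_of_ne hk.1])]
  simp [Function.update_of_ne hij]


variable {ι : Type*} [Fintype ι] {α : ι → Type*} [∀ i, MeasurableSpace (α i)]
  (μ : ∀ i, Measure (α i)) [∀ i, IsProbabilityMeasure (μ i)]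


lemma my_integral_eval (i : ι) (g : α i → ℝ) (hg : AEStronglyMeasurable g (μ i)) :
    ∫ w, g (w i) ∂(Measure.pi μ) = ∫ t, g t ∂(μ i) := by
  rw [← my_map_eval μ i]
  exact (integral_map (measurable_pi_apply i).aemeasurable
    (by rw [my_map_eval μ i]; exact hg)).symm

lemma my_integrable_eval (i : ι) (g : α i → ℝ) (hg : AEStronglyMeasurable g (μ i))
    (h : Integrable g (μ i)) : Integrable (fun w => g (w i)) (Measure.pi μ) := by
  rw [← my_map_eval μ i] at h
  exact (integrable_map_measure (by rw [my_map_eval μ i]; exact hg)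
    (measurable_pi_apply i).aemeasurable).mp h

lemma my_integral_mul_pair {i j : ι} (hij : i ≠ j) (g1 : α i → ℝ) (g2 : α j → ℝ)
    (h1 : AEStronglyMeasurable g1 (μ i)) (h2 : AEStronglyMeasurable g2 (μ j)) :
    ∫ w, g1 (w i) * g2 (w j) ∂(Measure.pi μ) = (∫ t, g1 t ∂(μ i)) * ∫ t, g2 t ∂(μ j) := by
  have hm : AEMeasurable (fun w : ∀ k, α k => (w i, w j)) (Measure.pi μ) :=
    ((measurable_pi_apply i).prodMk (measurable_pi_apply j)).aemeasurable
  have : ∫ w, g1 (w i) * g2 (w j) ∂(Measure.pi μ)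
      = ∫ y : α i × α j, g1 y.1 * g2 y.2 ∂((μ i).prod (μ j)) := by
    rw [← my_map_pair μ hij]
    exact (integral_map hm (by rw [my_map_pair μ hij]; exact h1.comp_fst.mul h2.comp_snd)).symm
  rw [this, integral_prod_mul]

lemma my_integrable_mul_pair {i j : ι} (hij : i ≠ j) (g1 : α i → ℝ) (g2 : α j → ℝ)
    (h1m : AEStronglyMeasurable g1 (μ i)) (h2m : AEStronglyMeasurable g2 (μ j))
    (h1 : Integrable g1 (μ i)) (h2 : Integrable g2 (μ j)) :
    Integrable (fun w => g1 (w i) * g2 (w j)) (Measure.pi μ) := by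
  have hm : AEMeasurable (fun w : ∀ k, α k => (w i, w j)) (Measure.pi μ) :=
    ((measurable_pi_apply i).prodMk (measurable_pi_apply j)).aemeasurable
  have h := h1.mul_prod h2
  rw [← my_map_pair μ hij] at h
  exact (integrable_map_measure (by rw [my_map_pair μ hij]; exact h1m.comp_fst.mul h2m.comp_snd) hm).mp h


lemma my_count_repr {β : Type*} [MeasurableSpace β] (Q : Measure β) [IsProbabilityMeasure Q]
    (K : β → ℕ) (hK : Measurable K) (n : ℕ) (hKn : ∀ v, K v ≤ n) (g : ℕ → ℝ) :
    (fun v => g (K v)) = fun v =>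
      ∑ k ∈ Finset.range (n+1), Set.indicator {v | K v = k} (fun _ => g k) v := by
  funext v
  classical
  rw [Finset.sum_eq_single (K v)]
  · simp [Set.indicator_apply]
  · intro k _ hk
    simp [Set.indicator_apply, fun h : K v = k => hk h.symm]
    intro h; exact absurd h.symm hk
  · intro h; exact absurd (Finset.mem_range.2 (Nat.lt_succ_of_le (hKn v))) h

lemma my_count_integrable {β : Type*} [MeasurableSpace β] (Q : Measure β) [IsProbabilityMeasure Q]
    (K : β → ℕ) (hK : Measurable K) (n : ℕ) (hKn : ∀ v, K v ≤ n) (g : ℕ → ℝ) :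
    Integrable (fun v => g (K v)) Q := by
  rw [my_count_repr Q K hK n hKn g]
  refine integrable_finset_sum _ (fun k _ => ?_)
  exact (integrable_const (g k)).indicator (hK (measurableSet_singleton k))

lemma my_count_integral {β : Type*} [MeasurableSpace β] (Q : Measure β) [IsProbabilityMeasure Q]
    (K : β → ℕ) (hK : Measurable K) (n : ℕ) (hKn : ∀ v, K v ≤ n) (g : ℕ → ℝ) :
    ∫ v, g (K v) ∂Q = ∑ k ∈ Finset.range (n+1), g k * (Q {v | K v = k}).toReal := by
  rw [my_count_repr Q K hK n hKn g, integral_finset_sum _ (fun k (_ : k ∈ Finset.range (n+1)) =>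
    ((integrable_const (g k)).indicator (hK (measurableSet_singleton k)) :
      Integrable (fun v => Set.indicator {v | K v = k} (fun _ => g k) v) Q))]
  refine Finset.sum_congr rfl (fun k _ => ?_)
  have hms : MeasurableSet {v | K v = k} := hK (measurableSet_singleton k)
  rw [show ∫ (a : β), Set.indicator {v | K v = k} (fun _ => g k) a ∂Q
      = ∫ (a : β), Set.indicator {v | K v = k} (fun _ => g k) a ∂Q from rfl,
    integral_indicator_const (g k) hms]
  simp [mul_comm, measureReal_def]

lemma my_cs (n : ℕ) (q : ℕ → ℝ) (hq : ∀ k, 0 ≤ q k) :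
    (∑ k ∈ Finset.range (n+1), (if k = 0 then (0:ℝ) else q k)) ^ 2
    ≤ (∑ k ∈ Finset.range (n+1), (k : ℝ) * q k) *
      (∑ k ∈ Finset.range (n+1), (if k = 0 then (0:ℝ) else 1 / k) * q k) := by
  have h := Finset.sum_mul_sq_le_sq_mul_sq (Finset.range (n+1))
    (fun k => Real.sqrt ((k : ℝ) * q k))
    (fun k => Real.sqrt ((if k = 0 then (0:ℝ) else 1 / k) * q k))
  have h1 : ∀ k ∈ Finset.range (n+1),
      Real.sqrt ((k : ℝ) * q k) * Real.sqrt ((if k = 0 then (0:ℝ) else 1 / k) * q k)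
      = (if k = 0 then (0:ℝ) else q k) := by
    intro k _
    rcases Nat.eq_zero_or_pos k with rfl | hk
    · simp
    · have hkne : k ≠ 0 := hk.ne'
      rw [if_neg hkne, if_neg hkne, ← Real.sqrt_mul (mul_nonneg (Nat.cast_nonneg k) (hq k))]
      have : (k : ℝ) * q k * (1 / k * q k) = (q k) ^ 2 := by
        field_simp
      rw [this, Real.sqrt_sq (hq k)]
  have h2 : ∀ k ∈ Finset.range (n+1), Real.sqrt ((k : ℝ) * q k) ^ 2 = (k : ℝ) * q k := by
    intro k _; exact Real.sq_sqrt (mul_nonneg (Nat.cast_nonneg k) (hq k))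
  have h3 : ∀ k ∈ Finset.range (n+1),
      Real.sqrt ((if k = 0 then (0:ℝ) else 1 / k) * q k) ^ 2
      = (if k = 0 then (0:ℝ) else 1 / k) * q k := by
    intro k _
    refine Real.sq_sqrt (mul_nonneg ?_ (hq k))
    rcases Nat.eq_zero_or_pos k with rfl | hk
    · simp
    · rw [if_neg hk.ne']; positivity
  rw [Finset.sum_congr rfl h1, Finset.sum_congr rfl h2, Finset.sum_congr rfl h3] at h
  exact h
section D
variable {n : ℕ} (με : Measure ℝ) [IsProbabilityMeasure με]
  (hεint : Integrable (fun t : ℝ => t) με) (hεmean : ∫ t : ℝ, t ∂με = 0)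
  {σ : ℝ} (hε2 : Integrable (fun t : ℝ => t ^ 2) με)
  (hεvar : ∫ t : ℝ, t ^ 2 ∂με = σ ^ 2)


include hεint in
lemma my_S_integrable (a : Fin n → ℝ) :
    Integrable (fun e : Fin n → ℝ => ∑ i, a i * e i) (Measure.pi fun _ : Fin n => με) := by
  refine integrable_finset_sum _ (fun i _ => ?_)
  exact (my_integrable_eval (fun _ : Fin n => με) i (fun t => t)
    aestronglyMeasurable_id hεint).const_mul (a i)

include hεint hε2 in
lemma my_P_integrable (a : Fin n → ℝ) (i j : Fin n) :
    Integrable (fun e : Fin n → ℝ => (a i * e i) * (a j * e j))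
      (Measure.pi fun _ : Fin n => με) := by
  rcases eq_or_ne i j with rfl | hij
  · have : (fun e : Fin n → ℝ => (a i * e i) * (a i * e i))
        = fun e => (a i)^2 * (e i)^2 := by funext e; ring
    rw [this]
    exact ((my_integrable_eval (fun _ : Fin n => με) i (fun t => t^2)
      (measurable_id.pow_const 2).aestronglyMeasurable hε2).const_mul _)
  · have : (fun e : Fin n → ℝ => (a i * e i) * (a j * e j))
        = fun e => (fun t => a i * t) (e i) * (fun t => a j * t) (e j) := rfl
    rw [this]
    exact my_integrable_mul_pair (fun _ : Fin n => με) hij _ _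
      (measurable_const_mul _).aestronglyMeasurable (measurable_const_mul _).aestronglyMeasurable
      (hεint.const_mul _) (hεint.const_mul _)

include hεint hε2 in
lemma my_S2_integrable (a : Fin n → ℝ) :
    Integrable (fun e : Fin n → ℝ => (∑ i, a i * e i) ^ 2)
      (Measure.pi fun _ : Fin n => με) := by
  have : (fun e : Fin n → ℝ => (∑ i, a i * e i) ^ 2)
      = fun e => ∑ i, ∑ j, (a i * e i) * (a j * e j) := by
    funext e; rw [sq, Finset.sum_mul_sum]
  rw [this]
  exact integrable_finset_sum _ (fun i _ =>
    integrable_finset_sum _ (fun j _ => my_P_integrable με hεint hε2 a i j))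

include hεint hεmean in
lemma my_S_integral (a : Fin n → ℝ) :
    ∫ e : Fin n → ℝ, ∑ i, a i * e i ∂(Measure.pi fun _ : Fin n => με) = 0 := by
  rw [integral_finset_sum _ (fun i _ => (my_integrable_eval (fun _ : Fin n => με) i (fun t => t)
    aestronglyMeasurable_id hεint).const_mul (a i))]
  refine Finset.sum_eq_zero (fun i _ => ?_)
  rw [integral_const_mul,
    my_integral_eval (fun _ : Fin n => με) i (fun t => t) aestronglyMeasurable_id, hεmean,
    mul_zero]

include hεint hεmean hε2 hεvar in
lemma my_S2_integral (a : Fin n → ℝ) :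
    ∫ e : Fin n → ℝ, (∑ i, a i * e i) ^ 2 ∂(Measure.pi fun _ : Fin n => με)
      = σ ^ 2 * ∑ i, (a i) ^ 2 := by
  have hrepr : (fun e : Fin n → ℝ => (∑ i, a i * e i) ^ 2)
      = fun e => ∑ i, ∑ j, (a i * e i) * (a j * e j) := by
    funext e; rw [sq, Finset.sum_mul_sum]
  rw [hrepr, integral_finset_sum _ (fun i _ =>
    integrable_finset_sum _ (fun j _ => my_P_integrable με hεint hε2 a i j))]
  have : ∀ i : Fin n, ∫ e : Fin n → ℝ, ∑ j, (a i * e i) * (a j * e j)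
      ∂(Measure.pi fun _ : Fin n => με) = (a i)^2 * σ^2 := by
    intro i
    rw [integral_finset_sum _ (fun j _ => my_P_integrable με hεint hε2 a i j)]
    have hterm : ∀ j : Fin n, ∫ e : Fin n → ℝ, (a i * e i) * (a j * e j)
        ∂(Measure.pi fun _ : Fin n => με) = if j = i then (a i)^2 * σ^2 else 0 := by
      intro j
      rcases eq_or_ne j i with rfl | hij
      · rw [if_pos rfl]
        have h0 : (fun e : Fin n → ℝ => (a j * e j) * (a j * e j))
            = fun e => (fun t => (a j)^2 * t^2) (e j) := by funext e; ring
        rw [h0, my_integral_eval (fun _ : Fin n => με) j (fun t => (a j)^2 * t^2)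
          (Measurable.aestronglyMeasurable (by fun_prop)),
          integral_const_mul, hεvar]
      · rw [if_neg hij]
        have : (fun e : Fin n → ℝ => (a i * e i) * (a j * e j))
            = fun e => (fun t => a i * t) (e i) * (fun t => a j * t) (e j) := rfl
        rw [this, my_integral_mul_pair (fun _ : Fin n => με) (Ne.symm hij) _ _
          (measurable_const_mul _).aestronglyMeasurable (measurable_const_mul _).aestronglyMeasurable,
          integral_const_mul, integral_const_mul, hεmean]
        ring
    rw [Finset.sum_congr rfl (fun j _ => hterm j), Finset.sum_ite_eq' _ i
      (fun _ => (a i)^2 * σ^2)]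
    simp
  rw [Finset.sum_congr rfl (fun i _ => this i), ← Finset.sum_mul]
  ring

include hεint hεmean hε2 hεvar in
lemma my_inner_integral (a : Fin n → ℝ) (C : ℝ) :
    ∫ e : Fin n → ℝ, (C + ∑ i, a i * e i) ^ 2 ∂(Measure.pi fun _ : Fin n => με)
      = C ^ 2 + σ ^ 2 * ∑ i, (a i) ^ 2 := by
  have hrepr : (fun e : Fin n → ℝ => (C + ∑ i, a i * e i) ^ 2)
      = fun e => C^2 + ((2*C) * (∑ i, a i * e i) + (∑ i, a i * e i)^2) := by
    funext e; ring
  have h1 : Integrable (fun e : Fin n → ℝ => (2*C) * ∑ i, a i * e i)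
      (Measure.pi fun _ : Fin n => με) := (my_S_integrable με hεint a).const_mul _
  have h2 := my_S2_integrable με hεint hε2 a
  have h12 : Integrable (fun e : Fin n → ℝ =>
      (2*C) * (∑ i, a i * e i) + (∑ i, a i * e i)^2) (Measure.pi fun _ : Fin n => με) :=
    h1.add h2
  rw [hrepr, integral_add (integrable_const _) h12, integral_add h1 h2,
    integral_const_mul, my_S_integral με hεint hεmean a,
    my_S2_integral με hεint hεmean hε2 hεvar a]
  simp
end D


lemma my_c_measure {α : Type*} [MeasurableSpace α] (ν : Measure α) [SigmaFinite ν]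
    (p : α → ℝ) (hp0 : ∀ z, 0 ≤ p z) (hpm : Measurable p) (hpInt : Integrable p ν)
    (g : α → ℝ) (hgm : Measurable g) (hg01 : ∀ z, g z ∈ Set.Icc (0:ℝ) 1) :
    ((ν.withDensity fun z => ENNReal.ofReal (p z)).prod (volume.restrict (Set.Icc (0:ℝ) 1)))
      {y : α × ℝ | y.2 ≤ g y.1} = ENNReal.ofReal (∫ z, g z * p z ∂ν) := by
  have hT : MeasurableSet {y : α × ℝ | y.2 ≤ g y.1} :=
    measurableSet_le measurable_snd (hgm.comp measurable_fst)
  rw [Measure.prod_apply hT]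
  have hfiber : ∀ z : α, (volume.restrict (Set.Icc (0:ℝ) 1))
      (Prod.mk z ⁻¹' {y : α × ℝ | y.2 ≤ g y.1}) = ENNReal.ofReal (g z) := by
    intro z
    have h1 : Prod.mk z ⁻¹' {y : α × ℝ | y.2 ≤ g y.1} = Set.Iic (g z) := rfl
    rw [h1, Measure.restrict_apply measurableSet_Iic]
    have h2 : Set.Iic (g z) ∩ Set.Icc (0:ℝ) 1 = Set.Icc 0 (g z) := by
      ext u
      simp only [Set.mem_inter_iff, Set.mem_Iic, Set.mem_Icc]
      exact ⟨fun ⟨h, h0, _⟩ => ⟨h0, h⟩, fun ⟨h0, h⟩ => ⟨h, h0, h.trans (hg01 z).2⟩⟩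
    rw [h2, Real.volume_Icc, sub_zero]
  simp_rw [hfiber]
  rw [lintegral_withDensity_eq_lintegral_mul ν hpm.ennreal_ofReal hgm.ennreal_ofReal]
  have hInt : Integrable (fun z => g z * p z) ν := by
    refine hpInt.mono' (hgm.mul hpm).aestronglyMeasurable (Filter.Eventually.of_forall fun z => ?_)
    rw [Real.norm_eq_abs, abs_mul, abs_of_nonneg (hp0 z),
      abs_of_nonneg (hg01 z).1]
    exact mul_le_of_le_one_left (hp0 z) (hg01 z).2
  rw [ofReal_integral_eq_lintegral_ofReal hInt
    (Filter.Eventually.of_forall fun z => mul_nonneg (hg01 z).1 (hp0 z))]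
  congr 1
  funext z
  simp only [Pi.mul_apply]
  rw [← ENNReal.ofReal_mul (hp0 z), mul_comm]
lemma my_core {β : Type*} [MeasurableSpace β] {n : ℕ} (hn : n ≠ 0)
    (m : Measure β) [IsProbabilityMeasure m]
    (με : Measure ℝ) [IsProbabilityMeasure με]
    (hεint : Integrable (fun t : ℝ => t) με) (hεmean : ∫ t : ℝ, t ∂με = 0)
    {σ : ℝ} (hε2 : Integrable (fun t : ℝ => t ^ 2) με)
    (hεvar : ∫ t : ℝ, t ^ 2 ∂με = σ ^ 2)
    (ind : β → ℝ) (hindm : Measurable ind) (hind01 : ∀ y, ind y = 0 ∨ ind y = 1)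
    (c : ℝ) (hc0 : 0 < c) (hc1 : c ≤ 1)
    (hmT : m {y | ind y = 1} = ENNReal.ofReal c)
    (F : β → ℝ) (hFm : Measurable F) (B : ℝ) (hB : ∀ y, |F y| ≤ B)
    (b : ℝ) :
    σ ^ 2 * (1 - Real.exp (-(n * c))) ^ 2 / (n * c) ≤
      ∫ ve : (Fin n → β) × (Fin n → ℝ),
        ((if 0 < ∑ i, ind (ve.1 i) then
            (∑ i, (F (ve.1 i) + ve.2 i) * ind (ve.1 i)) / (∑ i, ind (ve.1 i)) else 0) - b) ^ 2
        ∂((Measure.pi fun _ : Fin n => m).prod (Measure.pi fun _ : Fin n => με)) := by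
  classical
  have hnβ : Nonempty β := by
    by_contra h
    rw [not_nonempty_iff] at h
    have h1 : m Set.univ = 1 := measure_univ
    rw [Set.univ_eq_empty_iff.2 h, measure_empty] at h1
    exact zero_ne_one h1
  obtain ⟨y0⟩ := hnβ
  have hB0 : 0 ≤ B := (abs_nonneg (F y0)).trans (hB y0)
  have hindnn : ∀ y, 0 ≤ ind y := fun y => by rcases hind01 y with h | h <;> simp [h]
  have hindle1 : ∀ y, ind y ≤ 1 := fun y => by rcases hind01 y with h | h <;> simp [h]
  set QV := Measure.pi fun _ : Fin n => m with hQV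
  set Qε := Measure.pi fun _ : Fin n => με with hQε
  set H : (Fin n → β) × (Fin n → ℝ) → ℝ := fun ve =>
    (if 0 < ∑ i, ind (ve.1 i) then
      (∑ i, (F (ve.1 i) + ve.2 i) * ind (ve.1 i)) / (∑ i, ind (ve.1 i)) else 0) - b with hHdef
  set K : (Fin n → β) → ℕ := fun v => ∑ i, if ind (v i) = 1 then 1 else 0 with hKdef
  have hKm : Measurable K := by
    apply Finset.measurable_sum
    intro i _
    exact Measurable.ite ((hindm.comp (measurable_pi_apply i)) (measurableSet_singleton 1))
      measurable_const measurable_const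
  have hKn : ∀ v, K v ≤ n := by
    intro v
    calc K v ≤ ∑ _i : Fin n, 1 := Finset.sum_le_sum (fun i _ => by split <;> simp)
    _ = n := by simp
  have hNK : ∀ v : Fin n → β, ∑ i, ind (v i) = (K v : ℝ) := by
    intro v
    rw [hKdef]
    push_cast
    refine Finset.sum_congr rfl (fun i _ => ?_)
    rcases hind01 (v i) with h | h <;> simp [h]
  set q : ℕ → ℝ := fun k => (QV {v | K v = k}).toReal with hqdef
  have hq0 : ∀ k, 0 ≤ q k := fun k => ENNReal.toReal_nonneg
  have hTms : MeasurableSet {y : β | ind y = 1} := hindm (measurableSet_singleton 1)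
  -- ∫ ind dm = c
  have hindint : ∫ y, ind y ∂m = c := by
    have h1 : ind = Set.indicator {y | ind y = 1} (fun _ => (1:ℝ)) := by
      funext y
      rcases hind01 y with h | h
      · rw [h, Set.indicator_apply, if_neg (by simp [h])]
      · rw [h, Set.indicator_apply, if_pos (by simpa using h)]
    rw [h1, integral_indicator_const _ hTms, measureReal_def, hmT, smul_eq_mul]
    rw [ENNReal.toReal_ofReal hc0.le, mul_one]
  -- ∑ k q k = 1
  have hsum1 : ∑ k ∈ Finset.range (n+1), q k = 1 := by
    have := my_count_integral QV K hKm n hKn (fun _ => (1:ℝ))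
    simp only [one_mul] at this
    rw [← this]
    simp
  -- ∑ k * q k = n * c
  have hsumk : ∑ k ∈ Finset.range (n+1), (k:ℝ) * q k = n * c := by
    have h1 := my_count_integral QV K hKm n hKn (fun k => (k:ℝ))
    rw [← h1]
    have h2 : ∀ v : Fin n → β, ((K v : ℝ)) = ∑ i, ind (v i) := fun v => (hNK v).symm
    rw [integral_congr_ae (Filter.Eventually.of_forall h2)]
    rw [integral_finset_sum _ (fun i _ => my_integrable_eval (fun _ : Fin n => m) i ind
      hindm.aestronglyMeasurable (by
        refine (integrable_const (1:ℝ)).mono' hindm.aestronglyMeasurable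
          (Filter.Eventually.of_forall fun y => ?_)
        rw [Real.norm_eq_abs, abs_of_nonneg (hindnn y)]
        exact hindle1 y))]
    have h3 : ∀ i : Fin n, ∫ v, ind (v i) ∂QV = c := fun i => by
      rw [my_integral_eval (fun _ : Fin n => m) i ind hindm.aestronglyMeasurable, hindint]
    rw [Finset.sum_congr rfl (fun i _ => h3 i)]
    simp
  -- q 0 = (1-c)^n
  have hq00 : q 0 = (1 - c)^n := by
    have hset : {v : Fin n → β | K v = 0} = Set.pi Set.univ (fun _ : Fin n => {y | ind y = 1}ᶜ) := by
      ext v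
      simp only [Set.mem_setOf_eq, Set.mem_pi, Set.mem_univ, true_implies, Set.mem_compl_iff,
        hKdef]
      rw [Finset.sum_eq_zero_iff]
      constructor
      · intro h i
        have := h i (Finset.mem_univ i)
        by_contra hcon
        rw [if_pos (by simpa using hcon)] at this
        exact one_ne_zero this
      · intro h i _
        rw [if_neg (h i)]
    rw [hqdef]
    simp only [hset]
    rw [hQV, Measure.pi_pi]
    have hcompl : m {y | ind y = 1}ᶜ = ENNReal.ofReal (1 - c) := by
      have hh : (1 : ENNReal) - ENNReal.ofReal c = ENNReal.ofReal (1 - c) := by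
        rw [ENNReal.ofReal_sub _ hc0.le, ENNReal.ofReal_one]
      rw [measure_compl hTms (measure_ne_top m _), hmT, measure_univ, hh]
    rw [Finset.prod_congr rfl (fun _ _ => hcompl), Finset.prod_const]
    rw [ENNReal.toReal_pow, ENNReal.toReal_ofReal (by linarith)]
    simp
  -- measurability of H
  have hindvi : ∀ i : Fin n, Measurable (fun ve : (Fin n → β) × (Fin n → ℝ) => ind (ve.1 i)) :=
    fun i => hindm.comp ((measurable_pi_apply i).comp measurable_fst)
  have hNm : Measurable (fun ve : (Fin n → β) × (Fin n → ℝ) => ∑ i, ind (ve.1 i)) :=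
    Finset.measurable_sum _ (fun i _ => hindvi i)
  have hnumm : Measurable (fun ve : (Fin n → β) × (Fin n → ℝ) =>
      ∑ i, (F (ve.1 i) + ve.2 i) * ind (ve.1 i)) := by
    refine Finset.measurable_sum _ (fun i _ => Measurable.mul ?_ (hindvi i))
    exact ((hFm.comp ((measurable_pi_apply i).comp measurable_fst)).add
      ((measurable_pi_apply i).comp measurable_snd))
  have hHm : Measurable H := by
    rw [hHdef]
    refine Measurable.sub ?_ measurable_const
    exact Measurable.ite (measurableSet_lt measurable_const hNm) (hnumm.div hNm) measurable_const
  -- pointwise bound on |H|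
  have hHb : ∀ ve : (Fin n → β) × (Fin n → ℝ), |H ve| ≤ |b| + ∑ i, (B + |ve.2 i|) := by
    intro ve
    have hsumnn : (0:ℝ) ≤ ∑ i, (B + |ve.2 i|) :=
      Finset.sum_nonneg (fun i _ => add_nonneg hB0 (abs_nonneg _))
    rw [hHdef]
    simp only
    by_cases hpos : 0 < ∑ i, ind (ve.1 i)
    · rw [if_pos hpos]
      have h1le : (1:ℝ) ≤ ∑ i, ind (ve.1 i) := by
        rw [hNK] at hpos ⊢
        have : 0 < K ve.1 := by exact_mod_cast hpos
        exact_mod_cast this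
      have habs : |(∑ i, (F (ve.1 i) + ve.2 i) * ind (ve.1 i)) / (∑ i, ind (ve.1 i))|
          ≤ ∑ i, (B + |ve.2 i|) := by
        rw [abs_div, abs_of_nonneg (by linarith : (0:ℝ) ≤ ∑ i, ind (ve.1 i))]
        refine le_trans (div_le_self (abs_nonneg _) h1le) ?_
        refine le_trans (Finset.abs_sum_le_sum_abs _ _) ?_
        refine Finset.sum_le_sum (fun i _ => ?_)
        rw [abs_mul]
        calc |F (ve.1 i) + ve.2 i| * |ind (ve.1 i)|
            ≤ (B + |ve.2 i|) * 1 := by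
              refine mul_le_mul ?_ ?_ (abs_nonneg _) (by positivity)
              · exact le_trans (abs_add_le _ _) (add_le_add_left (hB _) _)
              · rw [abs_of_nonneg (hindnn _)]; exact hindle1 _
          _ = B + |ve.2 i| := mul_one _
      calc |(∑ i, (F (ve.1 i) + ve.2 i) * ind (ve.1 i)) / (∑ i, ind (ve.1 i)) - b|
          ≤ |(∑ i, (F (ve.1 i) + ve.2 i) * ind (ve.1 i)) / (∑ i, ind (ve.1 i))| + |b| :=
            abs_sub _ _
        _ ≤ |b| + ∑ i, (B + |ve.2 i|) := by linarith
    · rw [if_neg hpos]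
      simp only [zero_sub, abs_neg]
      linarith
  -- integrable bound W
  have hsqint : ∀ i : Fin n, Integrable (fun ve : (Fin n → β) × (Fin n → ℝ) => (ve.2 i)^2)
      (QV.prod Qε) := by
    intro i
    have h1 : Integrable (fun e : Fin n → ℝ => (e i)^2) Qε :=
      my_integrable_eval (fun _ : Fin n => με) i (fun t => t^2)
        (measurable_id.pow_const 2).aestronglyMeasurable hε2
    have hmap : Measure.map Prod.snd (QV.prod Qε) = Qε := by
      rw [Measure.map_snd_prod, measure_univ, one_smul]
    rw [← hmap] at h1
    exact (integrable_map_measure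
      (by rw [hmap]; exact ((measurable_pi_apply i).pow_const 2).aestronglyMeasurable)
      measurable_snd.aemeasurable).mp h1
  have hWint : Integrable (fun ve : (Fin n → β) × (Fin n → ℝ) =>
      2*(|b| + n*B)^2 + 2*(n:ℝ) * ∑ i, (ve.2 i)^2) (QV.prod Qε) := by
    refine (integrable_const _).add ?_
    exact (integrable_finset_sum _ (fun i _ => hsqint i)).const_mul _
  have hH2int : Integrable (fun ve => H ve ^ 2) (QV.prod Qε) := by
    refine hWint.mono' (hHm.pow_const 2).aestronglyMeasurable
      (Filter.Eventually.of_forall fun ve => ?_)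
    rw [Real.norm_eq_abs, abs_of_nonneg (sq_nonneg _)]
    have h1 := hHb ve
    have h2 : (∑ i, |ve.2 i|)^2 ≤ (n:ℝ) * ∑ i, (ve.2 i)^2 := by
      have := sq_sum_le_card_mul_sum_sq (s := Finset.univ) (f := fun i => |ve.2 i|)
      simpa [sq_abs] using this
    have h3 : |b| + ∑ i, (B + |ve.2 i|) = (|b| + n*B) + ∑ i, |ve.2 i| := by
      rw [Finset.sum_add_distrib, Finset.sum_const]
      simp [mul_comm]
      ring
    have h4 : H ve ^ 2 ≤ (|b| + ∑ i, (B + |ve.2 i|))^2 := by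
      rw [← sq_abs (H ve)]
      exact pow_le_pow_left₀ (abs_nonneg _) h1 2
    rw [h3] at h4
    nlinarith [sq_nonneg ((|b| + n*B) - ∑ i, |ve.2 i|), sq_nonneg (|b| + n*B)]
  -- pointwise inner bound
  have hg' : ∀ v : Fin n → β, σ^2 * (if K v = 0 then (0:ℝ) else 1 / K v)
      ≤ ∫ e, H (v, e) ^ 2 ∂Qε := by
    intro v
    rcases Nat.eq_zero_or_pos (K v) with hK0 | hKpos
    · rw [hK0, if_pos rfl, mul_zero]
      exact integral_nonneg (fun e => sq_nonneg _)
    · have hKne : K v ≠ 0 := hKpos.ne'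
      rw [if_neg hKne]
      have hNpos : (0:ℝ) < ∑ i, ind (v i) := by
        rw [hNK]; exact_mod_cast hKpos
      have hNpos' : (0:ℝ) < ((K v : ℝ)) := by exact_mod_cast hKpos
      have hHeq : ∀ e : Fin n → ℝ, H (v, e) =
          ((∑ i, F (v i) * ind (v i)) / (K v : ℝ) - b)
            + ∑ i, (ind (v i) / (K v : ℝ)) * e i := by
        intro e
        rw [hHdef]
        simp only [if_pos hNpos]
        rw [hNK v]
        have hsplit : ∑ i, (F (v i) + e i) * ind (v i)
            = (∑ i, F (v i) * ind (v i)) + ∑ i, ind (v i) * e i := by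
          rw [← Finset.sum_add_distrib]
          exact Finset.sum_congr rfl (fun i _ => by ring)
        have h2 : ∑ i, (ind (v i)/(K v : ℝ)) * e i
            = (∑ i, ind (v i) * e i)/(K v : ℝ) := by
          rw [Finset.sum_div]
          exact Finset.sum_congr rfl (fun i _ => by ring)
        rw [hsplit, h2, add_div]
        ring
      rw [integral_congr_ae (Filter.Eventually.of_forall (fun e => by rw [hHeq e]))]
      rw [my_inner_integral με hεint hεmean hε2 hεvar]
      have hterm : ∑ i, (ind (v i) / (K v : ℝ))^2 = 1 / (K v : ℝ) := by
        have h1 : ∀ i : Fin n, (ind (v i) / (K v : ℝ))^2 = ind (v i) / ((K v : ℝ))^2 := by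
          intro i
          rw [div_pow]
          congr 1
          rcases hind01 (v i) with h | h <;> simp [h]
        rw [Finset.sum_congr rfl (fun i _ => h1 i), ← Finset.sum_div, hNK v]
        rw [sq]
        field_simp
      rw [hterm]
      exact le_add_of_nonneg_left (sq_nonneg _)
  have hnc : (0:ℝ) < n*c := by
    have h1 : (1:ℝ) ≤ (n:ℝ) := by exact_mod_cast Nat.one_le_iff_ne_zero.2 hn
    nlinarith
  show σ ^ 2 * (1 - Real.exp (-(n * c))) ^ 2 / (n * c) ≤ ∫ ve, H ve ^ 2 ∂(QV.prod Qε)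
  have hFub : ∫ ve, H ve ^ 2 ∂(QV.prod Qε) = ∫ v, ∫ e, H (v, e) ^ 2 ∂Qε ∂QV :=
    integral_prod _ hH2int
  have hmono : ∫ v, σ^2 * (if K v = 0 then (0:ℝ) else 1 / K v) ∂QV
      ≤ ∫ v, ∫ e, H (v, e) ^ 2 ∂Qε ∂QV := by
    refine integral_mono ?_ ?_ hg'
    · exact ((my_count_integrable QV K hKm n hKn
        (fun k => if k = 0 then (0:ℝ) else 1/k)).const_mul _)
    · exact hH2int.integral_prod_left
  have hδ : ∫ v, (if K v = 0 then (0:ℝ) else 1 / K v) ∂QV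
      = ∑ k ∈ Finset.range (n+1), (if k = 0 then (0:ℝ) else 1/k) * q k :=
    my_count_integral QV K hKm n hKn (fun k => if k = 0 then (0:ℝ) else 1/k)
  set S1 := ∑ k ∈ Finset.range (n+1), (if k = 0 then (0:ℝ) else q k) with hS1def
  have hS1 : S1 = 1 - (1-c)^n := by
    have h1 : ∀ k ∈ Finset.range (n+1), (if k = 0 then (0:ℝ) else q k)
        = q k - (if k = 0 then q 0 else 0) := by
      intro k _
      by_cases h : k = 0 <;> simp [h]
    rw [hS1def, Finset.sum_congr rfl h1, Finset.sum_sub_distrib, hsum1,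
      Finset.sum_ite_eq' (Finset.range (n+1)) 0 (fun _ => q 0)]
    simp [hq00]
  have hCS : S1^2 ≤ (n*c) * ∑ k ∈ Finset.range (n+1), (if k = 0 then (0:ℝ) else 1/k) * q k := by
    have h := my_cs n q hq0
    rw [hsumk] at h
    exact h
  have hexp : (1 - Real.exp (-(n*c)))^2 ≤ S1^2 := by
    have h1 : Real.exp (-((n:ℝ)*c)) ≤ 1 := Real.exp_le_one_iff.2 (by linarith)
    have h3 : (0:ℝ) ≤ 1 - c := by linarith
    have h4 : 1 - c ≤ Real.exp (-c) := by
      have := Real.add_one_le_exp (-c); linarith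
    have h2 : (1-c)^n ≤ Real.exp (-((n:ℝ)*c)) := by
      calc (1-c)^n ≤ (Real.exp (-c))^n := pow_le_pow_left₀ h3 h4 n
        _ = Real.exp (-((n:ℝ)*c)) := by
            rw [show -((n:ℝ)*c) = (n:ℝ)*(-c) by ring, Real.exp_nat_mul]
    have h5 : (0:ℝ) ≤ 1 - Real.exp (-((n:ℝ)*c)) := by linarith
    have h6 : 1 - Real.exp (-((n:ℝ)*c)) ≤ S1 := by rw [hS1]; linarith
    exact pow_le_pow_left₀ h5 h6 2
  calc σ^2 * (1 - Real.exp (-((n:ℝ)*c)))^2 / ((n:ℝ)*c)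
      ≤ σ^2 * S1^2 / ((n:ℝ)*c) :=
        (div_le_div_iff_of_pos_right hnc).2 (mul_le_mul_of_nonneg_left hexp (sq_nonneg σ))
    _ ≤ σ^2 * ∑ k ∈ Finset.range (n+1), (if k = 0 then (0:ℝ) else 1/k) * q k := by
        rw [div_le_iff₀ hnc]
        nlinarith [hCS, sq_nonneg σ]
    _ = ∫ v, σ^2 * (if K v = 0 then (0:ℝ) else 1 / K v) ∂QV := by
        rw [integral_const_mul, hδ]
    _ ≤ ∫ v, ∫ e, H (v, e) ^ 2 ∂Qε ∂QV := hmono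
    _ = ∫ ve, H ve ^ 2 ∂(QV.prod Qε) := hFub.symm



/-- (Variance lower bound.) For bounded measurable `f` and centered noise
with `E[ε_1²] = σ² < ∞`,
`E[(f̂(x) − b_n(f,x))²] ≥ σ² (1 − e^{−d_n(x)})² / d_n(x)`. -/
theorem stmt_9
    {n d : ℕ} {Ω : Type} [MeasurableSpace Ω]
    (P : Measure Ω) [IsProbabilityMeasure P]
    (X : Fin n → Ω → EuclideanSpace ℝ (Fin d)) (U : Fin n → Ω → ℝ) (ε : Fin n → Ω → ℝ)
    (hX : ∀ i, Measurable (X i)) (hU : ∀ i, Measurable (U i))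
    (hε : ∀ i, Measurable (ε i))
    (p : EuclideanSpace ℝ (Fin d) → ℝ)
    (hp0 : ∀ z, 0 ≤ p z) (hpm : Measurable p) (hp1 : ∫ z, p z = 1)
    (kn : EuclideanSpace ℝ (Fin d) → EuclideanSpace ℝ (Fin d) → ℝ)
    (hk01 : ∀ u v, kn u v ∈ Set.Icc (0 : ℝ) 1)
    (hkm : Measurable (Function.uncurry kn))
    (x : EuclideanSpace ℝ (Fin d))
    (μX : Measure (EuclideanSpace ℝ (Fin d))) (hμXP : IsProbabilityMeasure μX)
    (hμX : μX = volume.withDensity fun z => ENNReal.ofReal (p z))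
    (μU : Measure ℝ) (hμUP : IsProbabilityMeasure μU)
    (hμU : μU = volume.restrict (Set.Icc (0 : ℝ) 1))
    (με : Measure ℝ) (hμεP : IsProbabilityMeasure με)
    (hlaw : Measure.map (fun ω => fun i : Fin n => (X i ω, U i ω, ε i ω)) P
      = Measure.pi fun _ : Fin n => μX.prod (μU.prod με))
    (A : Fin n → Ω → ℝ)
    (hA : ∀ i ω, A i ω = if U i ω ≤ kn x (X i ω) then 1 else 0)
    (cnx dnx : ℝ)
    (hc : cnx = ∫ z, kn x z * p z) (hcpos : 0 < cnx)
    (hd : dnx = n * cnx)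
    (hεint : Integrable (fun t : ℝ => t) με) (hεmean : ∫ t : ℝ, t ∂με = 0)
    (σ : ℝ) (hε2 : Integrable (fun t : ℝ => t ^ 2) με)
    (hεvar : ∫ t : ℝ, t ^ 2 ∂με = σ ^ 2)
    (f : EuclideanSpace ℝ (Fin d) → ℝ) (B : ℝ)
    (hfm : Measurable f) (hfB : ∀ z, |f z| ≤ B)
    (Tfx bnfx : ℝ)
    (hT : Tfx = ∫ z, f z * (kn x z * p z)) (hb : bnfx = Tfx / cnx)
    (Y : Fin n → Ω → ℝ) (hY : ∀ i ω, Y i ω = f (X i ω) + ε i ω)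
    (fhat : Ω → ℝ)
    (hfhat : ∀ ω, fhat ω =
      if 0 < ∑ i, A i ω then (∑ i, Y i ω * A i ω) / (∑ i, A i ω) else 0)
    :
    σ ^ 2 * (1 - Real.exp (-dnx)) ^ 2 / dnx ≤ ∫ ω, (fhat ω - bnfx) ^ 2 ∂P := by
  classical
  haveI := hμXP
  haveI := hμUP
  haveI := hμεP
  rcases Nat.eq_zero_or_pos n with hn0 | hnpos
  · subst hn0
    rw [hd]
    norm_num
    exact integral_nonneg (fun ω => sq_nonneg _)
  have hn : n ≠ 0 := hnpos.ne'
  have hpInt : Integrable p := by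
    by_contra h
    rw [integral_undef h] at hp1
    exact one_ne_zero hp1.symm
  have hknx : Measurable (kn x) := hkm.comp measurable_prodMk_left
  have hc1 : cnx ≤ 1 := by
    have hknpInt : Integrable (fun z => kn x z * p z) := by
      refine hpInt.mono' (hknx.mul hpm).aestronglyMeasurable
        (Filter.Eventually.of_forall fun z => ?_)
      rw [Real.norm_eq_abs, abs_mul, abs_of_nonneg (hp0 z), abs_of_nonneg (hk01 x z).1]
      exact mul_le_of_le_one_left (hp0 z) (hk01 x z).2
    rw [hc, ← hp1]
    refine integral_mono hknpInt hpInt (fun z => ?_)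
    exact mul_le_of_le_one_left (hp0 z) (hk01 x z).2
  set ind : (EuclideanSpace ℝ (Fin d)) × ℝ → ℝ :=
    fun y => if y.2 ≤ kn x y.1 then 1 else 0 with hinddef
  have hindm : Measurable ind := Measurable.ite
    (measurableSet_le measurable_snd (hknx.comp measurable_fst)) measurable_const measurable_const
  have hind01 : ∀ y, ind y = 0 ∨ ind y = 1 := fun y => by
    rw [hinddef]; by_cases h : y.2 ≤ kn x y.1 <;> simp [h]
  have hmT : (μX.prod μU) {y | ind y = 1} = ENNReal.ofReal cnx := by
    have hset : {y : (EuclideanSpace ℝ (Fin d)) × ℝ | ind y = 1} = {y | y.2 ≤ kn x y.1} := by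
      ext y; rw [hinddef]
      by_cases h : y.2 ≤ kn x y.1 <;> simp [h]
    rw [hset, hμX, hμU,
      my_c_measure volume p hp0 hpm hpInt (kn x) hknx (fun z => hk01 x z), hc]
  set Φ : Ω → (Fin n → (EuclideanSpace ℝ (Fin d)) × ℝ × ℝ) :=
    fun ω => fun i => (X i ω, U i ω, ε i ω) with hΦdef
  have hΦm : Measurable Φ :=
    measurable_pi_lambda _ (fun i => ((hX i).prodMk ((hU i).prodMk (hε i))))
  set G : (Fin n → (EuclideanSpace ℝ (Fin d)) × ℝ × ℝ) → ℝ := fun w =>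
    (if 0 < ∑ i, (if (w i).2.1 ≤ kn x (w i).1 then (1:ℝ) else 0) then
      (∑ i, (f (w i).1 + (w i).2.2) * (if (w i).2.1 ≤ kn x (w i).1 then (1:ℝ) else 0)) /
        (∑ i, (if (w i).2.1 ≤ kn x (w i).1 then (1:ℝ) else 0)) else 0) - bnfx with hGdef
  have haim : ∀ i : Fin n, Measurable (fun w : Fin n → (EuclideanSpace ℝ (Fin d)) × ℝ × ℝ =>
      (if (w i).2.1 ≤ kn x (w i).1 then (1:ℝ) else 0)) := by
    intro i
    refine Measurable.ite ?_ measurable_const measurable_const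
    exact measurableSet_le ((measurable_pi_apply i).snd.fst)
      (hknx.comp ((measurable_pi_apply i).fst))
  have hGm : Measurable G := by
    rw [hGdef]
    have hNm : Measurable (fun w : Fin n → (EuclideanSpace ℝ (Fin d)) × ℝ × ℝ =>
        ∑ i, (if (w i).2.1 ≤ kn x (w i).1 then (1:ℝ) else 0)) :=
      Finset.measurable_sum _ (fun i _ => haim i)
    have hnum : Measurable (fun w : Fin n → (EuclideanSpace ℝ (Fin d)) × ℝ × ℝ =>
        ∑ i, (f (w i).1 + (w i).2.2) * (if (w i).2.1 ≤ kn x (w i).1 then (1:ℝ) else 0)) := by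
      refine Finset.measurable_sum _ (fun i _ => Measurable.mul ?_ (haim i))
      exact (hfm.comp ((measurable_pi_apply i).fst)).add ((measurable_pi_apply i).snd.snd)
    exact (Measurable.ite (measurableSet_lt measurable_const hNm) (hnum.div hNm)
      measurable_const).sub measurable_const
  have hstep1 : ∫ ω, (fhat ω - bnfx)^2 ∂P
      = ∫ w, (G w)^2 ∂(Measure.pi fun _ : Fin n => μX.prod (μU.prod με)) := by
    have h1 : ∀ ω, (fhat ω - bnfx)^2 = (G (Φ ω))^2 := by
      intro ω
      rw [hfhat ω, hGdef]
      simp only [hΦdef, hA, hY]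
    rw [integral_congr_ae (Filter.Eventually.of_forall h1), ← hlaw]
    exact (integral_map hΦm.aemeasurable (hGm.pow_const 2).aestronglyMeasurable).symm
  set QV := Measure.pi fun _ : Fin n => μX.prod μU with hQVdef
  set Qε := Measure.pi fun _ : Fin n => με with hQεdef
  set HH : (Fin n → (EuclideanSpace ℝ (Fin d)) × ℝ) × (Fin n → ℝ) → ℝ := fun ve =>
    (if 0 < ∑ i, ind (ve.1 i) then
      (∑ i, (f (ve.1 i).1 + ve.2 i) * ind (ve.1 i)) / (∑ i, ind (ve.1 i)) else 0) - bnfx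
    with hHHdef
  have hstep2 : ∫ w, (G w)^2 ∂(Measure.pi fun _ : Fin n => μX.prod (μU.prod με))
      = ∫ ve, (HH ve)^2 ∂(QV.prod Qε) := by
    have mp1 : MeasurePreserving
        (fun (w : Fin n → ((EuclideanSpace ℝ (Fin d)) × ℝ) × ℝ) (i : Fin n) =>
          (MeasurableEquiv.prodAssoc (w i) : (EuclideanSpace ℝ (Fin d)) × ℝ × ℝ))
        (Measure.pi fun _ : Fin n => (μX.prod μU).prod με)
        (Measure.pi fun _ : Fin n => μX.prod (μU.prod με)) :=
      measurePreserving_pi _ _ (fun _ => measurePreserving_prodAssoc μX μU με)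
    have hemb1 : MeasurableEmbedding
        (fun (w : Fin n → ((EuclideanSpace ℝ (Fin d)) × ℝ) × ℝ) (i : Fin n) =>
          (MeasurableEquiv.prodAssoc (w i) : (EuclideanSpace ℝ (Fin d)) × ℝ × ℝ)) :=
      (MeasurableEquiv.piCongrRight (fun _ : Fin n =>
        (MeasurableEquiv.prodAssoc :
          (((EuclideanSpace ℝ (Fin d)) × ℝ) × ℝ) ≃ᵐ _))).measurableEmbedding
    have mp2 := measurePreserving_arrowProdEquivProdArrow
      ((EuclideanSpace ℝ (Fin d)) × ℝ) ℝ (Fin n) (fun _ => μX.prod μU) (fun _ => με)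
    have hemb2 := (MeasurableEquiv.arrowProdEquivProdArrow
      ((EuclideanSpace ℝ (Fin d)) × ℝ) ℝ (Fin n)).measurableEmbedding
    calc ∫ w, (G w)^2 ∂(Measure.pi fun _ : Fin n => μX.prod (μU.prod με))
        = ∫ w, (G (fun i => MeasurableEquiv.prodAssoc (w i)))^2
            ∂(Measure.pi fun _ : Fin n => (μX.prod μU).prod με) :=
          (mp1.integral_comp hemb1 (fun w => (G w)^2)).symm
      _ = ∫ w, (HH ((MeasurableEquiv.arrowProdEquivProdArrow
            ((EuclideanSpace ℝ (Fin d)) × ℝ) ℝ (Fin n)) w))^2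
            ∂(Measure.pi fun _ : Fin n => (μX.prod μU).prod με) := by
          refine integral_congr_ae (Filter.Eventually.of_forall fun w => ?_)
          rfl
      _ = ∫ ve, (HH ve)^2 ∂(QV.prod Qε) :=
          mp2.integral_comp hemb2 (fun ve => (HH ve)^2)
  rw [hstep1, hstep2, hd]
  exact my_core hn (μX.prod μU) με hεint hεmean hε2 hεvar ind hindm hind01 cnx hcpos hc1 hmT
    (fun y => f y.1) (hfm.comp measurable_fst) B (fun y => hfB y.1) bnfx
end

section
/- (Computation of the expectation of GNW) Suppose f : ℝ^d → ℝ is bounded measurable and E[ε_1] = 0. Then E[f̂(x)] = b_n(f,x)·(1 − (1 − c_n(x))^n). -/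
open MeasureTheory ProbabilityTheory Real Filter
open MeasureTheory.Measure
open scoped ENNReal NNReal

theorem my_integrable_pi_prod {γ : Type*} [MeasurableSpace γ] (μ : Measure γ) [SigmaFinite μ] :
    ∀ {m : ℕ} {f : Fin m → γ → ℝ}, (∀ i, Integrable (f i) μ) →
      Integrable (fun x : Fin m → γ => ∏ i, f i (x i)) (Measure.pi fun _ => μ) := by
  intro m
  induction m with
  | zero =>
      intro f _
      simp only [Finset.univ_eq_empty, Finset.prod_empty, integrable_const_iff,
        pi_empty_univ, one_ne_zero, ENNReal.one_lt_top, or_true]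
      exact Or.inr ⟨by simp [pi_empty_univ]⟩
  | succ m ih =>
      intro f hf
      have hmp := ((measurePreserving_piFinSuccAbove (fun _ : Fin (m+1) => μ) 0).symm)
      rw [← hmp.integrable_comp_emb (MeasurableEquiv.measurableEmbedding _)]
      simp_rw [MeasurableEquiv.piFinSuccAbove_symm_apply, Fin.insertNthEquiv,
        Fin.prod_univ_succ, Fin.insertNth_zero]
      simp only [Fin.zero_succAbove, Function.comp_def, Fin.cons_zero, Fin.cons_succ, cast_eq]
      exact Integrable.mul_prod (hf 0) (ih (fun i => hf _))

theorem my_integral_pi_prod {γ : Type*} [MeasurableSpace γ] (μ : Measure γ) [SigmaFinite μ] :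
    ∀ {m : ℕ} (f : Fin m → γ → ℝ),
      ∫ x : Fin m → γ, ∏ i, f i (x i) ∂(Measure.pi fun _ => μ) = ∏ i, ∫ x, f i x ∂μ := by
  intro m
  induction m with
  | zero =>
      intro f
      simp only [Finset.univ_eq_empty, Finset.prod_empty, integral_const, pi_empty_univ,
        measureReal_def, ENNReal.toReal_one, smul_eq_mul, mul_one, one_smul]
  | succ m ih =>
      intro f
      calc
        _ = ∫ x : γ × (Fin m → γ), f 0 x.1 * ∏ i : Fin m, f (Fin.succ i) (x.2 i)
              ∂(μ.prod (Measure.pi fun _ => μ)) := by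
          rw [← ((measurePreserving_piFinSuccAbove (fun _ : Fin (m+1) => μ) 0).symm).integral_comp']
          simp only [MeasurableEquiv.piFinSuccAbove_symm_apply, Fin.insertNthEquiv,
            Fin.prod_univ_succ, Fin.insertNth_zero, Equiv.coe_fn_mk, Fin.cons_succ,
            Fin.zero_succAbove, Fin.cons_zero, Function.comp_def, cast_eq]
        _ = (∫ x, f 0 x ∂μ) * ∏ i : Fin m, ∫ x, f (Fin.succ i) x ∂μ := by
          rw [← ih, ← integral_prod_mul]
        _ = ∏ i, ∫ x, f i x ∂μ := by rw [Fin.prod_univ_succ]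

theorem my_unif_int {t : ℝ} (h0 : 0 ≤ t) (h1 : t ≤ 1) :
    ∫ u, (if u ≤ t then (1:ℝ) else 0) ∂(volume.restrict (Set.Icc 0 1)) = t := by
  have he : (fun u : ℝ => if u ≤ t then (1:ℝ) else 0)
      = (Set.Iic t).indicator (fun _ => (1:ℝ)) := by
    funext u; simp [Set.indicator, Set.mem_Iic]
  rw [he, integral_indicator_const _ measurableSet_Iic,
    measureReal_def, Measure.restrict_apply measurableSet_Iic]
  have hs : Set.Iic t ∩ Set.Icc 0 1 = Set.Icc 0 t := by
    ext u
    simp only [Set.mem_inter_iff, Set.mem_Iic, Set.mem_Icc]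
    constructor
    · rintro ⟨h, h2, _⟩; exact ⟨h2, h⟩
    · rintro ⟨h2, h⟩; exact ⟨h, h2, h.trans h1⟩
  rw [hs, Real.volume_Icc]
  simp [ENNReal.toReal_ofReal h0]

theorem my_wd_int {E' : Type*} [MeasurableSpace E'] {μ : Measure E'} (p : E' → ℝ)
    (hp0 : ∀ z, 0 ≤ p z) (hpm : Measurable p) (g : E' → ℝ) :
    ∫ z, g z ∂(μ.withDensity fun z => ENNReal.ofReal (p z)) = ∫ z, p z * g z ∂μ := by
  have he : (fun z => ENNReal.ofReal (p z)) = fun z => ((p z).toNNReal : ℝ≥0∞) := rfl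
  rw [he, integral_withDensity_eq_integral_smul hpm.real_toNNReal g]
  congr 1
  funext z
  simp [NNReal.smul_def, Real.coe_toNNReal _ (hp0 z)]

theorem my_prod_ite_mem {α : Type*} [DecidableEq α] (s S : Finset α) (a b : ℝ) :
    ∏ j ∈ s, (if j ∈ S then a else b) = a ^ (s ∩ S).card * b ^ (s \ S).card := by
  rw [← Finset.prod_filter_mul_prod_filter_not s (fun j => j ∈ S)]
  have h1 : (∏ x ∈ s.filter (· ∈ S), if x ∈ S then a else b) = a ^ (s ∩ S).card := by
    rw [Finset.prod_congr rfl (fun x hx => if_pos (Finset.mem_filter.mp hx).2),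
      Finset.prod_const, Finset.filter_mem_eq_inter]
  have h2 : (∏ x ∈ s.filter (fun x => x ∉ S), if x ∈ S then a else b) = b ^ (s \ S).card := by
    rw [Finset.prod_congr rfl (fun x hx => if_neg (Finset.mem_filter.mp hx).2),
      Finset.prod_const]
    have hfs : s.filter (fun x => x ∉ S) = s \ S := by
      ext j; simp [Finset.mem_sdiff, Finset.mem_filter]
    rw [hfs]
  rw [h1, h2]


/-- (Expectation of GNW.) For bounded measurable `f` and centered noise,
`E[f̂(x)] = b_n(f,x) (1 − (1 − c_n(x))^n)`. -/
theorem stmt_11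
    {n d : ℕ} {Ω : Type} [MeasurableSpace Ω]
    (P : Measure Ω) [IsProbabilityMeasure P]
    (X : Fin n → Ω → EuclideanSpace ℝ (Fin d)) (U : Fin n → Ω → ℝ) (ε : Fin n → Ω → ℝ)
    (hX : ∀ i, Measurable (X i)) (hU : ∀ i, Measurable (U i))
    (hε : ∀ i, Measurable (ε i))
    (p : EuclideanSpace ℝ (Fin d) → ℝ)
    (hp0 : ∀ z, 0 ≤ p z) (hpm : Measurable p) (hp1 : ∫ z, p z = 1)
    (kn : EuclideanSpace ℝ (Fin d) → EuclideanSpace ℝ (Fin d) → ℝ)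
    (hk01 : ∀ u v, kn u v ∈ Set.Icc (0 : ℝ) 1)
    (hkm : Measurable (Function.uncurry kn))
    (x : EuclideanSpace ℝ (Fin d))
    (μX : Measure (EuclideanSpace ℝ (Fin d))) (hμXP : IsProbabilityMeasure μX)
    (hμX : μX = volume.withDensity fun z => ENNReal.ofReal (p z))
    (μU : Measure ℝ) (hμUP : IsProbabilityMeasure μU)
    (hμU : μU = volume.restrict (Set.Icc (0 : ℝ) 1))
    (με : Measure ℝ) (hμεP : IsProbabilityMeasure με)
    (hlaw : Measure.map (fun ω => fun i : Fin n => (X i ω, U i ω, ε i ω)) P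
      = Measure.pi fun _ : Fin n => μX.prod (μU.prod με))
    (A : Fin n → Ω → ℝ)
    (hA : ∀ i ω, A i ω = if U i ω ≤ kn x (X i ω) then 1 else 0)
    (cnx dnx : ℝ)
    (hc : cnx = ∫ z, kn x z * p z) (hcpos : 0 < cnx)
    (hd : dnx = n * cnx)
    (hεint : Integrable (fun t : ℝ => t) με) (hεmean : ∫ t : ℝ, t ∂με = 0)
    (f : EuclideanSpace ℝ (Fin d) → ℝ) (B : ℝ)
    (hfm : Measurable f) (hfB : ∀ z, |f z| ≤ B)
    (Tfx bnfx : ℝ)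
    (hT : Tfx = ∫ z, f z * (kn x z * p z)) (hb : bnfx = Tfx / cnx)
    (Y : Fin n → Ω → ℝ) (hY : ∀ i ω, Y i ω = f (X i ω) + ε i ω)
    (fhat : Ω → ℝ)
    (hfhat : ∀ ω, fhat ω =
      if 0 < ∑ i, A i ω then (∑ i, Y i ω * A i ω) / (∑ i, A i ω) else 0)
    :
    ∫ ω, fhat ω ∂P = bnfx * (1 - (1 - cnx) ^ n) := by
  classical
  haveI := hμXP; haveI := hμUP; haveI := hμεP
  set ν : Measure (EuclideanSpace ℝ (Fin d) × ℝ × ℝ) := μX.prod (μU.prod με) with hνdef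
  set a0 : EuclideanSpace ℝ (Fin d) × ℝ × ℝ → ℝ :=
    fun w => if w.2.1 ≤ kn x w.1 then 1 else 0 with ha0def
  set y0 : EuclideanSpace ℝ (Fin d) × ℝ × ℝ → ℝ := fun w => f w.1 + w.2.2 with hy0def
  have hkxm : Measurable (kn x) := hkm.comp measurable_prodMk_left
  have hsm : MeasurableSet {w : EuclideanSpace ℝ (Fin d) × ℝ × ℝ | w.2.1 ≤ kn x w.1} :=
    measurableSet_le measurable_snd.fst (hkxm.comp measurable_fst)
  have ha0m : Measurable a0 := Measurable.ite hsm measurable_const measurable_const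
  have hy0m : Measurable y0 := (hfm.comp measurable_fst).add measurable_snd.snd
  have ha0_cases : ∀ w, a0 w = 0 ∨ a0 w = 1 := by
    intro w; by_cases h : w.2.1 ≤ kn x w.1 <;> simp [ha0def, h]
  have ha0_nonneg : ∀ w, 0 ≤ a0 w := by
    intro w; rcases ha0_cases w with h | h <;> rw [h] <;> norm_num
  have ha0_le1 : ∀ w, a0 w ≤ 1 := by
    intro w; rcases ha0_cases w with h | h <;> rw [h] <;> norm_num
  have hB0 : 0 ≤ B := le_trans (abs_nonneg _) (hfB 0)
  have ha0int : Integrable a0 ν := by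
    refine ⟨ha0m.aestronglyMeasurable, ?_⟩
    refine HasFiniteIntegral.of_bounded (C := 1) (Eventually.of_forall fun w => ?_)
    rw [Real.norm_eq_abs, abs_le]
    exact ⟨by linarith [ha0_nonneg w], ha0_le1 w⟩
  have h1a0int : Integrable (fun w => 1 - a0 w) ν := (integrable_const 1).sub ha0int
  have hmap : ν.map (fun w => w.2.2) = με := by
    have h2 : (fun w : EuclideanSpace ℝ (Fin d) × ℝ × ℝ => w.2.2)
        = (Prod.snd ∘ Prod.snd) := rfl
    rw [hνdef, h2, ← Measure.map_map measurable_snd measurable_snd, Measure.map_snd_prod,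
      measure_univ, one_smul, Measure.map_snd_prod, measure_univ, one_smul]
  have hε2int : Integrable (fun w : EuclideanSpace ℝ (Fin d) × ℝ × ℝ => w.2.2) ν := by
    have h := (integrable_map_measure (g := fun t : ℝ => t) (μ := ν)
      (f := fun w : EuclideanSpace ℝ (Fin d) × ℝ × ℝ => w.2.2)
      (by rw [hmap]; exact hεint.aestronglyMeasurable)
      measurable_snd.snd.aemeasurable).mp (by rw [hmap]; exact hεint)
    exact h
  have hy0am : Measurable (fun w => y0 w * a0 w) := hy0m.mul ha0m
  have hy0aint : Integrable (fun w => y0 w * a0 w) ν := by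
    refine Integrable.mono' ((integrable_const B).add hε2int.abs)
      hy0am.aestronglyMeasurable (Eventually.of_forall fun w => ?_)
    have h1 : |a0 w| ≤ 1 := by rcases ha0_cases w with h | h <;> simp [h]
    have h2 : |y0 w| ≤ B + |w.2.2| := by
      rw [hy0def]
      calc |f w.1 + w.2.2| ≤ |f w.1| + |w.2.2| := abs_add_le _ _
        _ ≤ B + |w.2.2| := by linarith [hfB w.1]
    rw [Real.norm_eq_abs]
    calc |y0 w * a0 w| = |y0 w| * |a0 w| := abs_mul _ _
      _ ≤ (B + |w.2.2|) * 1 :=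
          mul_le_mul h2 h1 (abs_nonneg _) (by positivity)
      _ = B + |w.2.2| := mul_one _
  -- single coordinate integrals
  have hIa : ∫ w, a0 w ∂ν = cnx := by
    have h1 : ∫ w, a0 w ∂ν = ∫ z, kn x z ∂μX := by
      rw [hνdef, MeasureTheory.integral_prod _ (hνdef ▸ ha0int)]
      refine integral_congr_ae (Eventually.of_forall fun z => ?_)
      show ∫ q : ℝ × ℝ, a0 (z, q) ∂(μU.prod με) = kn x z
      have he : (fun q : ℝ × ℝ => a0 (z, q))
          = fun q : ℝ × ℝ => (if q.1 ≤ kn x z then (1:ℝ) else 0) * (fun _ : ℝ => (1:ℝ)) q.2 := by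
        funext q; simp [ha0def]
      rw [he, integral_prod_mul (f := fun u : ℝ => if u ≤ kn x z then (1:ℝ) else 0)
        (g := fun _ : ℝ => (1:ℝ))]
      simp only [integral_const, measureReal_def, measure_univ, ENNReal.toReal_one, smul_eq_mul, mul_one, one_smul]
      rw [hμU]
      exact my_unif_int (hk01 x z).1 (hk01 x z).2
    rw [h1, hμX, my_wd_int p hp0 hpm, hc]
    rw [show (fun z => p z * kn x z) = fun z => kn x z * p z from funext fun z => mul_comm _ _]
  have hIya : ∫ w, y0 w * a0 w ∂ν = Tfx := by
    have h1 : ∫ w, y0 w * a0 w ∂ν = ∫ z, kn x z * f z ∂μX := by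
      rw [hνdef, MeasureTheory.integral_prod _ (hνdef ▸ hy0aint)]
      refine integral_congr_ae (Eventually.of_forall fun z => ?_)
      show ∫ q : ℝ × ℝ, y0 (z, q) * a0 (z, q) ∂(μU.prod με) = kn x z * f z
      have he : (fun q : ℝ × ℝ => y0 (z, q) * a0 (z, q))
          = fun q : ℝ × ℝ => (if q.1 ≤ kn x z then (1:ℝ) else 0) * (f z + q.2) := by
        funext q; simp only [ha0def, hy0def]; split <;> ring
      rw [he, integral_prod_mul (f := fun u : ℝ => if u ≤ kn x z then (1:ℝ) else 0)
        (g := fun e : ℝ => f z + e)]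
      rw [integral_add (integrable_const _) hεint, integral_const, measureReal_def, measure_univ, hεmean,
        hμU, my_unif_int (hk01 x z).1 (hk01 x z).2]
      simp
    rw [h1, hμX, my_wd_int p hp0 hpm, hT]
    rw [show (fun z => p z * (kn x z * f z)) = fun z => f z * (kn x z * p z)
      from funext fun z => by ring]
  have hI1a : ∫ w, (1 - a0 w) ∂ν = 1 - cnx := by
    rw [integral_sub (integrable_const 1) ha0int, integral_const, measureReal_def, measure_univ, hIa]
    simp
  -- transfer to product space
  have hTm : Measurable (fun ω => fun i : Fin n => (X i ω, U i ω, ε i ω)) :=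
    measurable_pi_lambda _ fun i => ((hX i).prod ((hU i).prod (hε i)))
  set G : (Fin n → EuclideanSpace ℝ (Fin d) × ℝ × ℝ) → ℝ :=
    fun v => (∑ i, y0 (v i) * a0 (v i)) / (∑ i, a0 (v i)) with hGdef
  have hGm : Measurable G := Measurable.div
    (Finset.measurable_sum _ fun i _ =>
      (hy0m.comp (measurable_pi_apply i)).mul (ha0m.comp (measurable_pi_apply i)))
    (Finset.measurable_sum _ fun i _ => ha0m.comp (measurable_pi_apply i))
  have hcomp : ∀ ω, fhat ω = G (fun i => (X i ω, U i ω, ε i ω)) := by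
    intro ω
    have hAa : ∀ i, A i ω = a0 (X i ω, U i ω, ε i ω) := fun i => by simp [hA, ha0def]
    have hYy : ∀ i, Y i ω = y0 (X i ω, U i ω, ε i ω) := fun i => by simp [hY, hy0def]
    rw [hfhat ω]
    simp only [hGdef]
    by_cases hpos : 0 < ∑ i, A i ω
    · rw [if_pos hpos]
      congr 1
      · exact Finset.sum_congr rfl fun i _ => by rw [hAa, hYy]
      · exact Finset.sum_congr rfl fun i _ => by rw [hAa]
    · rw [if_neg hpos]
      have hz : (∑ i, a0 (X i ω, U i ω, ε i ω)) = 0 := by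
        have he : (∑ i, a0 (X i ω, U i ω, ε i ω)) = ∑ i, A i ω :=
          Finset.sum_congr rfl fun i _ => (hAa i).symm
        rw [he]
        exact le_antisymm (not_lt.mp hpos)
          (Finset.sum_nonneg fun i _ => by rw [hAa]; exact ha0_nonneg _)
      rw [hz, div_zero]
  have hstep1 : ∫ ω, fhat ω ∂P = ∫ v, G v ∂(Measure.pi fun _ : Fin n => ν) := by
    calc ∫ ω, fhat ω ∂P = ∫ ω, G (fun i => (X i ω, U i ω, ε i ω)) ∂P :=
          integral_congr_ae (Eventually.of_forall hcomp)
      _ = ∫ v, G v ∂(Measure.map (fun ω => fun i : Fin n => (X i ω, U i ω, ε i ω)) P) :=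
          (integral_map hTm.aemeasurable hGm.aestronglyMeasurable).symm
      _ = _ := by rw [hlaw]
  -- the family of factor functions
  set gg : Finset (Fin n) → Fin n → Fin n → (EuclideanSpace ℝ (Fin d) × ℝ × ℝ) → ℝ :=
    fun S i j => if j = i then (fun w => y0 w * a0 w)
      else if j ∈ S then a0 else fun w => 1 - a0 w with hggdef
  have hggint : ∀ S i j, Integrable (gg S i j) ν := by
    intro S i j
    simp only [hggdef]
    by_cases h1 : j = i
    · simp only [if_pos h1]; exact hy0aint
    · simp only [if_neg h1]
      by_cases h2 : j ∈ S
      · simp only [if_pos h2]; exact ha0int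
      · simp only [if_neg h2]; exact h1a0int
  have hggI : ∀ S i j, (∫ w, gg S i j w ∂ν)
      = if j = i then Tfx else if j ∈ S then cnx else 1 - cnx := by
    intro S i j
    simp only [hggdef]
    by_cases h1 : j = i
    · simp only [if_pos h1]; exact hIya
    · simp only [if_neg h1]
      by_cases h2 : j ∈ S
      · simp only [if_pos h2]; exact hIa
      · simp only [if_neg h2]; exact hI1a
  -- pointwise decomposition of G
  have hdecomp : ∀ v : Fin n → EuclideanSpace ℝ (Fin d) × ℝ × ℝ,
      G v = ∑ S : Finset (Fin n), ((S.card : ℝ)⁻¹ * ∑ i ∈ S, ∏ j, gg S i j (v j)) := by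
    intro v
    set S0 : Finset (Fin n) := Finset.univ.filter (fun i => a0 (v i) = 1) with hS0def
    have ha0S0 : ∀ i, a0 (v i) = if i ∈ S0 then 1 else 0 := by
      intro i
      by_cases h : a0 (v i) = 1
      · simp [hS0def, h]
      · have h0 : a0 (v i) = 0 := (ha0_cases (v i)).resolve_right h
        simp [hS0def, h0, h]
    have hprod : ∀ S : Finset (Fin n), ∀ i ∈ S,
        (∏ j, gg S i j (v j)) = if S = S0 then y0 (v i) else 0 := by
      intro S i hiS
      by_cases hSS : S = S0
      · subst hSS
        rw [if_pos rfl]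
        have hfac : ∀ j, gg S0 i j (v j) = if j = i then y0 (v i) else 1 := by
          intro j
          by_cases hji : j = i
          · subst hji
            simp only [hggdef, if_pos rfl]
            have h1 : a0 (v j) = 1 := by rw [ha0S0, if_pos hiS]
            rw [h1, mul_one]
            simp
          · by_cases hjS : j ∈ S0
            · simp only [hggdef, if_neg hji, if_pos hjS]
              rw [ha0S0, if_pos hjS]
            · simp only [hggdef, if_neg hji, if_neg hjS]
              rw [ha0S0, if_neg hjS]
              norm_num
        rw [Finset.prod_congr rfl (fun j _ => hfac j)]
        simp
      · rw [if_neg hSS]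
        have hex : ∃ j, (j ∈ S ∧ j ∉ S0) ∨ (j ∉ S ∧ j ∈ S0) := by
          by_contra hcon
          push_neg at hcon
          apply hSS
          ext j
          specialize hcon j
          tauto
        obtain ⟨j, hj⟩ := hex
        apply Finset.prod_eq_zero (Finset.mem_univ j)
        rcases hj with ⟨hjS, hjS0⟩ | ⟨hjS, hjS0⟩
        · have h0 : a0 (v j) = 0 := by rw [ha0S0, if_neg hjS0]
          by_cases hji : j = i
          · simp only [hggdef, if_pos hji]
            rw [h0, mul_zero]
          · simp only [hggdef, if_neg hji, if_pos hjS]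
            exact h0
        · have h1 : a0 (v j) = 1 := by rw [ha0S0, if_pos hjS0]
          have hji : j ≠ i := fun h => hjS (h ▸ hiS)
          simp only [hggdef, if_neg hji, if_neg hjS]
          rw [h1]
          ring
    rw [Finset.sum_eq_single S0]
    · have hnum : (∑ i, y0 (v i) * a0 (v i)) = ∑ i ∈ S0, y0 (v i) := by
        rw [Finset.sum_congr rfl (fun i _ => by
          rw [ha0S0 i, mul_ite, mul_one, mul_zero])]
        simp
      have hden : (∑ i, a0 (v i)) = (S0.card : ℝ) := by
        rw [Finset.sum_congr rfl (fun i (_ : i ∈ Finset.univ) => ha0S0 i)]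
        simp
      have hsum : (∑ i ∈ S0, ∏ j, gg S0 i j (v j)) = ∑ i ∈ S0, y0 (v i) :=
        Finset.sum_congr rfl fun i hi => by rw [hprod S0 i hi, if_pos rfl]
      simp only [hGdef]
      rw [hnum, hden, hsum, ← inv_mul_eq_div]
    · intro S _ hSS
      rw [Finset.sum_congr rfl (fun i hi => by rw [hprod S i hi, if_neg hSS])]
      simp
    · intro h
      exact absurd (Finset.mem_univ S0) h
  -- integrate the decomposition
  have hstep2 : ∫ v, G v ∂(Measure.pi fun _ : Fin n => ν)
      = ∑ S : Finset (Fin n), ((S.card : ℝ)⁻¹ * ∑ i ∈ S, ∏ j, ∫ w, gg S i j w ∂ν) := by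
    rw [integral_congr_ae (Eventually.of_forall hdecomp)]
    rw [integral_finset_sum _ (fun S _ =>
      ((integrable_finset_sum S fun i _ =>
        my_integrable_pi_prod ν (fun j => hggint S i j)).const_mul _))]
    refine Finset.sum_congr rfl fun S _ => ?_
    rw [MeasureTheory.integral_const_mul]
    rw [integral_finset_sum S (fun i _ => my_integrable_pi_prod ν (fun j => hggint S i j))]
    refine congrArg _ (Finset.sum_congr rfl fun i _ => ?_)
    exact my_integral_pi_prod ν _
  -- evaluate the products
  have hprodI : ∀ S : Finset (Fin n), ∀ i ∈ S, (∏ j, ∫ w, gg S i j w ∂ν)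
      = Tfx * (cnx ^ (S.card - 1) * (1 - cnx) ^ (n - S.card)) := by
    intro S i hiS
    rw [Finset.prod_congr rfl (fun j _ => hggI S i j)]
    rw [← Finset.mul_prod_erase Finset.univ _ (Finset.mem_univ i), if_pos rfl]
    congr 1
    have hrest : ∀ j ∈ Finset.univ.erase i,
        (if j = i then Tfx else if j ∈ S then cnx else 1 - cnx)
          = if j ∈ S then cnx else 1 - cnx := by
      intro j hj
      rw [if_neg (Finset.mem_erase.mp hj).1]
    rw [Finset.prod_congr rfl hrest, my_prod_ite_mem]
    have h1 : Finset.univ.erase i ∩ S = S.erase i := by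
      ext j
      simp only [Finset.mem_inter, Finset.mem_erase, Finset.mem_univ, and_true, true_and]
    have h2 : Finset.univ.erase i \ S = Finset.univ \ S := by
      ext j
      simp only [Finset.mem_sdiff, Finset.mem_erase, Finset.mem_univ, and_true, true_and]
      constructor
      · rintro ⟨-, h⟩; exact h
      · intro h; exact ⟨fun hji => h (hji ▸ hiS), h⟩
    rw [h1, h2, Finset.card_erase_of_mem hiS,
      show Finset.univ \ S = Sᶜ from (Finset.compl_eq_univ_sdiff S).symm,
      Finset.card_compl, Fintype.card_fin]
  have hc0 : cnx ≠ 0 := ne_of_gt hcpos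
  have hstep3 : (∑ S : Finset (Fin n), ((S.card : ℝ)⁻¹ * ∑ i ∈ S, ∏ j, ∫ w, gg S i j w ∂ν))
      = ∑ S : Finset (Fin n),
          ((Tfx / cnx) * (cnx ^ S.card * (1 - cnx) ^ (n - S.card))
            - (if S = ∅ then (Tfx / cnx) * (1 - cnx) ^ n else 0)) := by
    refine Finset.sum_congr rfl fun S _ => ?_
    by_cases hS : S = ∅
    · subst hS
      simp
    · rw [if_neg hS, sub_zero]
      rw [Finset.sum_congr rfl (fun i hi => hprodI S i hi), Finset.sum_const, nsmul_eq_mul]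
      have hcard0 : (S.card : ℝ) ≠ 0 := by
        exact_mod_cast Finset.card_ne_zero.mpr (Finset.nonempty_iff_ne_empty.mpr hS)
      rw [← mul_assoc, inv_mul_cancel₀ hcard0, one_mul]
      have hcard : S.card = (S.card - 1) + 1 :=
        (Nat.succ_pred_eq_of_pos (Nat.pos_of_ne_zero
          (fun h => hS (Finset.card_eq_zero.mp h)))).symm
      rw [show cnx ^ S.card = cnx ^ (S.card - 1) * cnx from by conv_lhs => rw [hcard, pow_succ]]
      field_simp
  have hbinom : (∑ S : Finset (Fin n), cnx ^ S.card * (1 - cnx) ^ (n - S.card)) = 1 := by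
    have h1 : (1 : ℝ) = ∑ S ∈ (Finset.univ : Finset (Fin n)).powerset,
        cnx ^ S.card * (1 - cnx) ^ (((Finset.univ : Finset (Fin n)) \ S).card) := by
      calc (1 : ℝ) = ∏ _i : Fin n, (cnx + (1 - cnx)) := by
            rw [show cnx + (1 - cnx) = 1 from by ring]; simp
        _ = ∑ S ∈ (Finset.univ : Finset (Fin n)).powerset,
              (∏ _i ∈ S, cnx) * ∏ _i ∈ (Finset.univ : Finset (Fin n)) \ S, (1 - cnx) :=
            Finset.prod_add _ _ _
        _ = _ := by simp [Finset.prod_const]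
    rw [Finset.powerset_univ] at h1
    have h3 : ∀ S : Finset (Fin n), (Finset.univ \ S).card = n - S.card := fun S => by
      rw [← Finset.compl_eq_univ_sdiff, Finset.card_compl, Fintype.card_fin]
    simp_rw [h3] at h1
    exact h1.symm
  -- final assembly
  rw [hstep1, hstep2, hstep3, Finset.sum_sub_distrib, ← Finset.mul_sum, hbinom,
    Finset.sum_ite_eq' Finset.univ (∅ : Finset (Fin n)), if_pos (Finset.mem_univ _), hb]
  ring
end

section
/- Suppose K : ℝ^d → [0,1] is measurable and satisfies K1: K(z) ≥ (1/2)·1{‖z‖ ≤ M₁}, and K2: K(z) ≤ 1{‖z‖ ≤ M₂}, for some M₁, M₂ > 0. Let p be a probability density with Q = supp(p), let 0 < a ≤ 1 and L > 0, and suppose f : ℝ^d → ℝ satisfies |f(x) − f(z)| ≤ L‖x−z‖^a for all x, z ∈ Q. Let α_n ∈ (0,1], h_n > 0, k_n(x,z) = α_n K((x−z)/h_n), c_n(x) = ∫ k_n(x,z) p(z) dz and b_n(f,x) = (∫ f(z) k_n(x,z) p(z) dz)/c_n(x). Then sup_{x∈Q} |b_n(f,x) − f(x)| ≤ 2·L·M₂^a·h_n^a.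 -/
open MeasureTheory ProbabilityTheory Real Filter

/-- (Uniform bias bound.) Under K1 and K2, if `f` is `a`-Hölder with
constant `L` on `Q = supp(p)`, then `sup_{x ∈ Q} |b_n(f,x) − f(x)| ≤ 2 L M₂^a h_n^a`. -/
theorem stmt_14
    {d : ℕ}
    (K : EuclideanSpace ℝ (Fin d) → ℝ) (hKm : Measurable K) (hK01 : ∀ z, K z ∈ Set.Icc (0 : ℝ) 1)
    (M₁ M₂ : ℝ) (hM₁ : 0 < M₁) (hM₂ : 0 < M₂)
    (hK1 : ∀ z : EuclideanSpace ℝ (Fin d), (1 / 2) * (if ‖z‖ ≤ M₁ then (1 : ℝ) else 0) ≤ K z)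
    (hK2 : ∀ z : EuclideanSpace ℝ (Fin d), K z ≤ (if ‖z‖ ≤ M₂ then (1 : ℝ) else 0))
    (αn hn : ℝ) (hα : 0 < αn) (hα1 : αn ≤ 1) (hh : 0 < hn)
    (p : EuclideanSpace ℝ (Fin d) → ℝ)
    (hp0 : ∀ z, 0 ≤ p z) (hpm : Measurable p) (hp1 : ∫ z, p z = 1)
    (Q : Set (EuclideanSpace ℝ (Fin d)))
    (hQ : Q = {y : EuclideanSpace ℝ (Fin d) | ∀ r : ℝ, 0 < r → 0 < ∫ z in Metric.ball y r, p z})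
    (a L : ℝ) (ha0 : 0 < a) (ha1 : a ≤ 1) (hL : 0 < L)
    (f : EuclideanSpace ℝ (Fin d) → ℝ) (hfm : Measurable f)
    (hfhol : ∀ u ∈ Q, ∀ v ∈ Q, |f u - f v| ≤ L * ‖u - v‖ ^ a)
    (cn Tn bn : EuclideanSpace ℝ (Fin d) → ℝ)
    (hcn : ∀ x, cn x = ∫ z, αn * K (hn⁻¹ • (x - z)) * p z)
    (hTn : ∀ x, Tn x = ∫ z, f z * (αn * K (hn⁻¹ • (x - z)) * p z))
    (hbn : ∀ x, bn x = Tn x / cn x) :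
    ∀ x ∈ Q, |bn x - f x| ≤ 2 * L * M₂ ^ a * hn ^ a := by
  classical
  -- p is integrable
  have hpint : Integrable p := by
    by_contra h
    rw [integral_undef h] at hp1
    norm_num at hp1
  -- a.e., p z ≠ 0 implies z ∈ Q
  have hpQ : ∀ᵐ z, p z ≠ 0 → z ∈ Q := by
    set U : EuclideanSpace ℝ (Fin d) → Set (EuclideanSpace ℝ (Fin d)) := fun y =>
      if h : ∃ r : ℝ, 0 < r ∧ (∫ z in Metric.ball y r, p z) = 0 then
        Metric.ball y h.choose else ∅ with hU
    have hUopen : ∀ y, IsOpen (U y) := by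
      intro y
      simp only [hU]
      split <;> simp [Metric.isOpen_ball]
    have hUmem : ∀ y, y ∉ Q → y ∈ U y := by
      intro y hy
      have : ∃ r : ℝ, 0 < r ∧ (∫ z in Metric.ball y r, p z) = 0 := by
        rw [hQ] at hy
        simp only [Set.mem_setOf_eq, not_forall] at hy
        obtain ⟨r, hr, hint⟩ := hy
        exact ⟨r, hr, le_antisymm (not_lt.mp hint)
          (setIntegral_nonneg measurableSet_ball fun z _ => hp0 z)⟩
      simp only [hU]
      rw [dif_pos this]
      exact Metric.mem_ball_self this.choose_spec.1
    have hUnull : ∀ y, ∀ᵐ z, z ∈ U y → p z = 0 := by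
      intro y
      simp only [hU]
      split
      · rename_i h
        have h0 : (∫ z in Metric.ball y h.choose, p z) = 0 := h.choose_spec.2
        have := (integral_eq_zero_iff_of_nonneg (fun z => hp0 z)
          (hpint.restrict (s := Metric.ball y h.choose))).mp h0
        exact (ae_restrict_iff' measurableSet_ball).mp this
      · filter_upwards with z hz
        exact absurd hz (Set.notMem_empty z)
    obtain ⟨t, htc, htU⟩ := TopologicalSpace.isOpen_iUnion_countable U hUopen
    have hae : ∀ᵐ z, ∀ y ∈ t, z ∈ U y → p z = 0 :=
      (ae_ball_iff htc).mpr fun y _ => hUnull y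
    filter_upwards [hae] with z hz hpz
    by_contra hzQ
    have : z ∈ ⋃ y, U y := Set.mem_iUnion.mpr ⟨z, hUmem z hzQ⟩
    rw [← htU] at this
    obtain ⟨y, hy, hzy⟩ := Set.mem_iUnion₂.mp this
    exact hpz (hz y hy hzy)
  intro x hx
  -- kernel at x
  set k : EuclideanSpace ℝ (Fin d) → ℝ := fun z => αn * K (hn⁻¹ • (x - z)) * p z with hk
  have hKmx : Measurable fun z : EuclideanSpace ℝ (Fin d) => K (hn⁻¹ • (x - z)) :=
    hKm.comp ((measurable_const.sub measurable_id).const_smul hn⁻¹)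
  have hkm : Measurable k := ((measurable_const.mul hKmx).mul hpm)
  have hknn : ∀ z, 0 ≤ k z := fun z =>
    mul_nonneg (mul_nonneg hα.le (hK01 _).1) (hp0 z)
  have hkle : ∀ z, k z ≤ p z := by
    intro z
    have h1 := (hK01 (hn⁻¹ • (x - z))).1
    have h2 := (hK01 (hn⁻¹ • (x - z))).2
    have h3 := hp0 z
    simp only [hk]
    nlinarith [mul_nonneg (mul_nonneg (sub_nonneg.mpr hα1) h1) h3,
      mul_nonneg (sub_nonneg.mpr h2) h3]
  have hkint : Integrable k := by
    refine hpint.mono hkm.aestronglyMeasurable (ae_of_all _ fun z => ?_)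
    rw [Real.norm_eq_abs, Real.norm_eq_abs, abs_of_nonneg (hknn z), abs_of_nonneg (hp0 z)]
    exact hkle z
  -- cn x > 0
  have hxQ : ∀ r : ℝ, 0 < r → 0 < ∫ z in Metric.ball x r, p z := by
    rw [hQ] at hx; exact hx
  have hcx : 0 < cn x := by
    rw [hcn x]
    set φ : EuclideanSpace ℝ (Fin d) → ℝ :=
      fun z => (αn / 2) * (Metric.closedBall x (M₁ * hn)).indicator p z with hφ
    have hφint : Integrable φ :=
      (hpint.indicator measurableSet_closedBall).const_mul _
    have hφle : ∀ z, φ z ≤ k z := by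
      intro z
      rw [hφ]
      by_cases hz : z ∈ Metric.closedBall x (M₁ * hn)
      · simp only [Set.indicator_of_mem hz]
        have hnorm : ‖hn⁻¹ • (x - z)‖ ≤ M₁ := by
          rw [norm_smul, Real.norm_eq_abs, abs_of_nonneg (inv_nonneg.mpr hh.le)]
          have : ‖x - z‖ ≤ M₁ * hn := by
            rw [← dist_eq_norm, dist_comm]
            exact Metric.mem_closedBall.mp hz
          rw [inv_mul_le_iff₀ hh, mul_comm]
          exact this
        have hK := hK1 (hn⁻¹ • (x - z))
        rw [if_pos hnorm, mul_one] at hK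
        have h3 := hp0 z
        simp only [hk]
        nlinarith [mul_nonneg (mul_nonneg hα.le (by linarith : (0:ℝ) ≤ K (hn⁻¹ • (x - z)) - 1/2)) h3]
      · simp only [Set.indicator_of_notMem hz, mul_zero]
        exact hknn z
    have h1 : ∫ z, φ z ≤ ∫ z, k z :=
      integral_mono hφint hkint hφle
    have h2 : ∫ z, φ z = (αn / 2) * ∫ z in Metric.closedBall x (M₁ * hn), p z := by
      rw [hφ]
      rw [integral_const_mul, integral_indicator measurableSet_closedBall]
    have h3 : 0 < ∫ z in Metric.closedBall x (M₁ * hn), p z := by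
      refine lt_of_lt_of_le (hxQ (M₁ * hn) (mul_pos hM₁ hh)) ?_
      refine setIntegral_mono_set hpint.integrableOn
        (ae_of_all _ fun z => hp0 z) (ae_of_all _ ?_)
      exact Metric.ball_subset_closedBall
    calc (0 : ℝ) < (αn / 2) * ∫ z in Metric.closedBall x (M₁ * hn), p z := by positivity
    _ = ∫ z, φ z := h2.symm
    _ ≤ ∫ z, k z := h1
  -- support bound
  have hsupp : ∀ z, K (hn⁻¹ • (x - z)) ≠ 0 → ‖z - x‖ ≤ M₂ * hn := by
    intro z hKz
    have hK := hK2 (hn⁻¹ • (x - z))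
    by_cases hnorm : ‖hn⁻¹ • (x - z)‖ ≤ M₂
    · rw [norm_smul, Real.norm_eq_abs, abs_of_nonneg (inv_nonneg.mpr hh.le)] at hnorm
      rw [← norm_sub_rev]
      calc ‖x - z‖ = hn * (hn⁻¹ * ‖x - z‖) := by field_simp
      _ ≤ hn * M₂ := by exact mul_le_mul_of_nonneg_left hnorm hh.le
      _ = M₂ * hn := mul_comm _ _
    · rw [if_neg hnorm] at hK
      exact absurd (le_antisymm hK (hK01 _).1) hKz
  have hC' : (0:ℝ) ≤ L * (M₂ * hn) ^ a :=
    mul_nonneg hL.le (Real.rpow_nonneg (by positivity) a)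
  -- Hölder bound a.e.
  have hFbound : ∀ᵐ z, |f z - f x| * k z ≤ L * (M₂ * hn) ^ a * k z := by
    filter_upwards [hpQ] with z hz
    by_cases hk0 : k z = 0
    · rw [hk0, mul_zero, mul_zero]
    · have hKz : K (hn⁻¹ • (x - z)) ≠ 0 := by
        intro h; apply hk0; rw [hk]; simp [h]
      have hpz : p z ≠ 0 := by
        intro h; apply hk0; rw [hk]; simp [h]
      have hzQ : z ∈ Q := hz hpz
      have hle : |f z - f x| ≤ L * (M₂ * hn) ^ a := by
        calc |f z - f x| ≤ L * ‖z - x‖ ^ a := hfhol z hzQ x hx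
        _ ≤ L * (M₂ * hn) ^ a := by
            refine mul_le_mul_of_nonneg_left ?_ hL.le
            exact Real.rpow_le_rpow (norm_nonneg _) (hsupp z hKz) ha0.le
      exact mul_le_mul_of_nonneg_right hle (hknn z)
  -- integrability of f * k
  have hfkint : Integrable (fun z => f z * k z) := by
    refine Integrable.mono' (g := fun z => (|f x| + L * (M₂ * hn) ^ a) * p z)
      (hpint.const_mul _) ((hfm.mul hkm).aestronglyMeasurable) ?_
    filter_upwards [hpQ] with z hz
    rw [Real.norm_eq_abs, abs_mul, abs_of_nonneg (hknn z)]
    by_cases hk0 : k z = 0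
    · rw [hk0, mul_zero]
      exact mul_nonneg (add_nonneg (abs_nonneg _) hC') (hp0 z)
    · have hKz : K (hn⁻¹ • (x - z)) ≠ 0 := by
        intro h; apply hk0; rw [hk]; simp [h]
      have hpz : p z ≠ 0 := by
        intro h; apply hk0; rw [hk]; simp [h]
      have hzQ : z ∈ Q := hz hpz
      have hfz : |f z| ≤ |f x| + L * (M₂ * hn) ^ a := by
        have h1 : |f z - f x| ≤ L * (M₂ * hn) ^ a := by
          calc |f z - f x| ≤ L * ‖z - x‖ ^ a := hfhol z hzQ x hx
          _ ≤ L * (M₂ * hn) ^ a := by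
              refine mul_le_mul_of_nonneg_left ?_ hL.le
              exact Real.rpow_le_rpow (norm_nonneg _) (hsupp z hKz) ha0.le
        calc |f z| = |(f z - f x) + f x| := by ring_nf
        _ ≤ |f z - f x| + |f x| := abs_add_le _ _
        _ ≤ |f x| + L * (M₂ * hn) ^ a := by linarith
      calc |f z| * k z ≤ (|f x| + L * (M₂ * hn) ^ a) * k z :=
            mul_le_mul_of_nonneg_right hfz (hknn z)
      _ ≤ (|f x| + L * (M₂ * hn) ^ a) * p z := by
            refine mul_le_mul_of_nonneg_left (hkle z) ?_
            positivity
  -- key identity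
  have key : Tn x - f x * cn x = ∫ z, (f z - f x) * k z := by
    rw [hTn x, hcn x, ← integral_const_mul, ← integral_sub hfkint (hkint.const_mul (f x))]
    refine integral_congr_ae (ae_of_all _ fun z => ?_)
    simp only [hk]
    ring
  have keybound : |Tn x - f x * cn x| ≤ L * (M₂ * hn) ^ a * cn x := by
    rw [key]
    have h1 : |∫ z, (f z - f x) * k z| ≤ ∫ z, |f z - f x| * |k z| := by
      simpa [Real.norm_eq_abs, abs_mul] using
        norm_integral_le_integral_norm (μ := (ℙ : Measure (EuclideanSpace ℝ (Fin d))))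
          (fun z => (f z - f x) * k z)
    have habs : Integrable (fun z => |f z - f x| * |k z|) := by
      refine ((hfkint.sub (hkint.const_mul (f x))).abs).congr (ae_of_all _ fun z => ?_)
      simp only [Pi.sub_apply]
      rw [← abs_mul, sub_mul]
    have h2 : ∫ z, |f z - f x| * |k z| ≤ ∫ z, L * (M₂ * hn) ^ a * k z := by
      refine integral_mono_ae habs (hkint.const_mul _) ?_
      filter_upwards [hFbound] with z hz
      rw [abs_of_nonneg (hknn z)]
      exact hz
    have h3 : ∫ z, L * (M₂ * hn) ^ a * k z = L * (M₂ * hn) ^ a * cn x := by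
      rw [integral_const_mul, hcn x]
    linarith
  -- conclude
  have hbnx : bn x - f x = (Tn x - f x * cn x) / cn x := by
    rw [hbn x]
    field_simp
  rw [hbnx, abs_div, abs_of_pos hcx, div_le_iff₀ hcx]
  calc |Tn x - f x * cn x| ≤ L * (M₂ * hn) ^ a * cn x := keybound
  _ = L * (M₂ ^ a * hn ^ a) * cn x := by rw [Real.mul_rpow hM₂.le hh.le]
  _ ≤ 2 * L * M₂ ^ a * hn ^ a * cn x := by
      have h1 : 0 < M₂ ^ a := Real.rpow_pos_of_pos hM₂ a
      have h2 : 0 < hn ^ a := Real.rpow_pos_of_pos hh a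
      nlinarith [mul_pos (mul_pos (mul_pos hL h1) h2) hcx]
end

section
/- Suppose K : ℝ^d → [0,1] is measurable and satisfies K1: K(z) ≥ (1/2)·1{‖z‖ ≤ M₁}, and K2: K(z) ≤ 1{‖z‖ ≤ M₂}, for some M₁, M₂ > 0. Let p be a probability density on ℝ^d and let (h_n) be a sequence of positive reals with h_n → 0. Then for Lebesgue-almost every x ∈ ℝ^d, (1/2)·v_d·M₁^d·p(x) ≤ liminf_{n→∞} h_n^{−d} ∫_{ℝ^d} K((x−z)/h_n) p(z) dz ≤ limsup_{n→∞} h_n^{−d} ∫_{ℝ^d} K((x−z)/h_n) p(z) dz ≤ v_d·M₂^d·p(x). -/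
open MeasureTheory ProbabilityTheory Real Filter Topology

/-- (Lebesgue differentiation heuristic for the local degree.) Under K1 and
K2, if `h_n → 0`, then for Lebesgue-a.e. `x`,
`½ v_d M₁^d p(x) ≤ liminf h_n^{−d} ∫ K((x−z)/h_n) p(z) dz
  ≤ limsup h_n^{−d} ∫ K((x−z)/h_n) p(z) dz ≤ v_d M₂^d p(x)`. -/
theorem stmt_15
    {d : ℕ}
    (K : EuclideanSpace ℝ (Fin d) → ℝ) (hKm : Measurable K) (hK01 : ∀ z, K z ∈ Set.Icc (0 : ℝ) 1)
    (M₁ M₂ : ℝ) (hM₁ : 0 < M₁) (hM₂ : 0 < M₂)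
    (hK1 : ∀ z : EuclideanSpace ℝ (Fin d), (1 / 2) * (if ‖z‖ ≤ M₁ then (1 : ℝ) else 0) ≤ K z)
    (hK2 : ∀ z : EuclideanSpace ℝ (Fin d), K z ≤ (if ‖z‖ ≤ M₂ then (1 : ℝ) else 0))
    (p : EuclideanSpace ℝ (Fin d) → ℝ)
    (hp0 : ∀ z, 0 ≤ p z) (hpm : Measurable p) (hp1 : ∫ z, p z = 1)
    (h : ℕ → ℝ) (hhpos : ∀ n, 0 < h n)
    (hh0 : Tendsto h atTop (nhds 0))
    (vd : ℝ) (hvd : vd = (volume (Metric.ball (0 : EuclideanSpace ℝ (Fin d)) 1)).toReal) :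
    ∀ᵐ x ∂(volume : Measure (EuclideanSpace ℝ (Fin d))),
      (1 / 2) * vd * M₁ ^ d * p x
          ≤ liminf (fun n => (∫ z, K ((h n)⁻¹ • (x - z)) * p z) / (h n) ^ d) atTop ∧
      liminf (fun n => (∫ z, K ((h n)⁻¹ • (x - z)) * p z) / (h n) ^ d) atTop
          ≤ limsup (fun n => (∫ z, K ((h n)⁻¹ • (x - z)) * p z) / (h n) ^ d) atTop ∧
      limsup (fun n => (∫ z, K ((h n)⁻¹ • (x - z)) * p z) / (h n) ^ d) atTop
          ≤ vd * M₂ ^ d * p x := by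
  have hpint : Integrable p := integrable_of_integral_eq_one hp1
  have hvd0 : 0 < vd := by
    rw [hvd]
    exact ENNReal.toReal_pos (Metric.measure_ball_pos volume _ one_pos).ne' measure_ball_lt_top.ne
  filter_upwards [IsUnifLocDoublingMeasure.ae_tendsto_average (μ := volume)
    hpint.locallyIntegrable 1] with x hx
  -- averages over shrinking closed balls converge to `p x`
  have key : ∀ M : ℝ, 0 < M →
      Tendsto (fun n => ⨍ y in Metric.closedBall x (M * h n), p y) atTop (𝓝 (p x)) := by
    intro M hM
    refine hx (fun _ => x) (fun n => M * h n) ?_ ?_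
    · refine tendsto_nhdsWithin_of_tendsto_nhds_of_eventually_within _ ?_
        (Eventually.of_forall fun n => mul_pos hM (hhpos n))
      simpa using hh0.const_mul M
    · exact Eventually.of_forall fun n =>
        Metric.mem_closedBall_self (by have := hhpos n; positivity)
  -- volume of closed balls
  have hvol : ∀ r : ℝ, 0 ≤ r →
      (volume (Metric.closedBall x r)).toReal = r ^ d * vd := by
    intro r hr
    rw [Measure.addHaar_closedBall _ x hr, finrank_euclideanSpace_fin,
      ENNReal.toReal_mul, ENNReal.toReal_ofReal (by positivity), hvd]
  have hSI : ∀ (M : ℝ), 0 < M → ∀ n,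
      ∫ z in Metric.closedBall x (M * h n), p z
        = (M ^ d * (h n) ^ d * vd) * ⨍ z in Metric.closedBall x (M * h n), p z := by
    intro M hM n
    have hr : (0 : ℝ) < M * h n := mul_pos hM (hhpos n)
    have hc : (volume (Metric.closedBall x (M * h n))).toReal = M ^ d * (h n) ^ d * vd := by
      rw [hvol _ hr.le, mul_pow]
    have hpos : (volume (Metric.closedBall x (M * h n))).toReal ≠ 0 := by
      rw [hc]
      have := hhpos n
      positivity
    rw [setAverage_eq, smul_eq_mul, measureReal_def, hc] at *
    rw [← mul_assoc, mul_inv_cancel₀ (by rw [← hc]; exact hpos), one_mul]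
  -- integrability and measurability of the kernel-weighted integrand
  have hmeas : ∀ n, Measurable fun z : EuclideanSpace ℝ (Fin d) =>
      K ((h n)⁻¹ • (x - z)) * p z := fun n =>
    (hKm.comp (((measurable_const.sub measurable_id).const_smul ((h n)⁻¹)))).mul hpm
  have hint : ∀ n, Integrable fun z : EuclideanSpace ℝ (Fin d) =>
      K ((h n)⁻¹ • (x - z)) * p z := by
    intro n
    refine hpint.mono' (hmeas n).aestronglyMeasurable (Eventually.of_forall fun z => ?_)
    rw [Real.norm_eq_abs, abs_mul, abs_of_nonneg (hK01 _).1, abs_of_nonneg (hp0 z)]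
    exact mul_le_of_le_one_left (hp0 z) (hK01 _).2
  -- norm identity
  have hnorm : ∀ n (z : EuclideanSpace ℝ (Fin d)),
      ‖(h n)⁻¹ • (x - z)‖ = (h n)⁻¹ * ‖x - z‖ := by
    intro n z
    rw [norm_smul, Real.norm_eq_abs, abs_of_pos (inv_pos.2 (hhpos n))]
  -- lower bound on the integral
  have hlow : ∀ n, (1 / 2) * ∫ z in Metric.closedBall x (M₁ * h n), p z
      ≤ ∫ z, K ((h n)⁻¹ • (x - z)) * p z := by
    intro n
    have : (1 / 2 : ℝ) * ∫ z in Metric.closedBall x (M₁ * h n), p z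
        = ∫ z, Set.indicator (Metric.closedBall x (M₁ * h n))
            (fun z => (1 / 2 : ℝ) * p z) z := by
      rw [integral_indicator measurableSet_closedBall, integral_const_mul]
    rw [this]
    refine integral_mono_of_nonneg (Eventually.of_forall fun z => ?_) (hint n)
      (Eventually.of_forall fun z => ?_)
    · exact Set.indicator_nonneg (fun z _ => by have := hp0 z; positivity) z
    · by_cases hz : z ∈ Metric.closedBall x (M₁ * h n)
      · rw [Set.indicator_of_mem hz]
        have hzn : ‖(h n)⁻¹ • (x - z)‖ ≤ M₁ := by
          rw [hnorm n z, norm_sub_rev]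
          have hd : ‖z - x‖ ≤ M₁ * h n := by
            rw [← dist_eq_norm]; exact hz
          rw [inv_mul_le_iff₀ (hhpos n)]
          linarith [hd]
        have hK := hK1 ((h n)⁻¹ • (x - z))
        rw [if_pos hzn, mul_one] at hK
        exact mul_le_mul_of_nonneg_right hK (hp0 z)
      · rw [Set.indicator_of_notMem hz]
        have := hp0 z; have := (hK01 ((h n)⁻¹ • (x - z))).1
        positivity
  -- upper bound on the integral
  have hup : ∀ n, (∫ z, K ((h n)⁻¹ • (x - z)) * p z)
      ≤ ∫ z in Metric.closedBall x (M₂ * h n), p z := by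
    intro n
    have : (∫ z in Metric.closedBall x (M₂ * h n), p z)
        = ∫ z, Set.indicator (Metric.closedBall x (M₂ * h n)) p z := by
      rw [integral_indicator measurableSet_closedBall]
    rw [this]
    refine integral_mono_of_nonneg (Eventually.of_forall fun z => ?_)
      (hpint.indicator measurableSet_closedBall)
      (Eventually.of_forall fun z => ?_)
    · have := hp0 z; have := (hK01 ((h n)⁻¹ • (x - z))).1
      positivity
    · by_cases hz : z ∈ Metric.closedBall x (M₂ * h n)
      · rw [Set.indicator_of_mem hz]
        exact mul_le_of_le_one_left (hp0 z) (hK01 _).2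
      · rw [Set.indicator_of_notMem hz]
        show K ((h n)⁻¹ • (x - z)) * p z ≤ 0
        have hzn : ¬ ‖(h n)⁻¹ • (x - z)‖ ≤ M₂ := by
          intro hcon
          apply hz
          rw [hnorm n z, norm_sub_rev, inv_mul_le_iff₀ (hhpos n)] at hcon
          rw [Metric.mem_closedBall, dist_eq_norm]
          linarith [hcon]
        have hK := hK2 ((h n)⁻¹ • (x - z))
        rw [if_neg hzn] at hK
        have hK0 := (hK01 ((h n)⁻¹ • (x - z))).1
        have : K ((h n)⁻¹ • (x - z)) = 0 := le_antisymm hK hK0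
        rw [this, zero_mul]
  -- the sandwiching sequences
  set a : ℕ → ℝ := fun n => (∫ z, K ((h n)⁻¹ • (x - z)) * p z) / (h n) ^ d with ha
  set l : ℕ → ℝ := fun n =>
    (1 / 2) * vd * M₁ ^ d * ⨍ z in Metric.closedBall x (M₁ * h n), p z with hl
  set u : ℕ → ℝ := fun n =>
    vd * M₂ ^ d * ⨍ z in Metric.closedBall x (M₂ * h n), p z with hu
  have hla : ∀ n, l n ≤ a n := by
    intro n
    have hhd : (h n) ^ d ≠ 0 := pow_ne_zero d (hhpos n).ne'
    have : l n = ((1 / 2) * ∫ z in Metric.closedBall x (M₁ * h n), p z) / (h n) ^ d := by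
      rw [hSI M₁ hM₁ n]
      field_simp
      ring
    rw [this, ha]
    exact div_le_div_of_nonneg_right (hlow n) (pow_pos (hhpos n) d).le
  have hau : ∀ n, a n ≤ u n := by
    intro n
    have hhd : (h n) ^ d ≠ 0 := pow_ne_zero d (hhpos n).ne'
    have : u n = (∫ z in Metric.closedBall x (M₂ * h n), p z) / (h n) ^ d := by
      rw [hSI M₂ hM₂ n]
      field_simp
      ring
    rw [this, ha]
    exact div_le_div_of_nonneg_right (hup n) (pow_pos (hhpos n) d).le
  have hlt : Tendsto l atTop (𝓝 ((1 / 2) * vd * M₁ ^ d * p x)) :=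
    (key M₁ hM₁).const_mul _
  have hut : Tendsto u atTop (𝓝 (vd * M₂ ^ d * p x)) :=
    (key M₂ hM₂).const_mul _
  have hba : IsBoundedUnder (· ≤ ·) atTop a :=
    hut.isBoundedUnder_le.mono_le (Eventually.of_forall hau)
  have hbb : IsBoundedUnder (· ≥ ·) atTop a :=
    hlt.isBoundedUnder_ge.mono_ge (Eventually.of_forall hla)
  refine ⟨?_, ?_, ?_⟩
  · calc (1 / 2) * vd * M₁ ^ d * p x = liminf l atTop := hlt.liminf_eq.symm
      _ ≤ liminf a atTop := liminf_le_liminf (Eventually.of_forall hla)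
          hlt.isBoundedUnder_ge hba.isCoboundedUnder_ge
  · exact liminf_le_limsup hba hbb
  · calc limsup a atTop ≤ limsup u atTop := limsup_le_limsup (Eventually.of_forall hau)
          hbb.isCoboundedUnder_le hut.isBoundedUnder_le
      _ = vd * M₂ ^ d * p x := hut.limsup_eq
end

section
/- Suppose K : ℝ^d → [0,1] is measurable and satisfies K1: K(z) ≥ (1/2)·1{‖z‖ ≤ M₁} for some M₁ > 0, and suppose Q = supp(p) has the (r₀,c₀)-measure-retaining property. Let α_n ∈ (0,1], h_n > 0 with M₁h_n < r₀, and let x ∈ Q be such that inf{p(z) : z ∈ Q, ‖x−z‖ ≤ M₁h_n} ≥ p₀(x) > 0. Then with c_n(x) = α_n ∫ K((x−z)/h_n) p(z) dz and d_n(x) = n·c_n(x), one has 1/d_n(x) ≤ 2/(c₀·v_d·M₁^d·n·α_n·h_n^d·p₀(x)). -/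
open MeasureTheory ProbabilityTheory Real Filter

/-- Under K1 and the `(r₀,c₀)`-measure-retaining property of `Q = supp(p)`,
if `M₁ h_n < r₀` and `p ≥ p₀(x) > 0` on `Q ∩ B_{M₁h_n}(x)` for `x ∈ Q`, then
`1/d_n(x) ≤ 2/(c₀ v_d M₁^d n α_n h_n^d p₀(x))`. -/
theorem stmt_16
    {d : ℕ} (n : ℕ)
    (K : EuclideanSpace ℝ (Fin d) → ℝ) (hKm : Measurable K) (hK01 : ∀ z, K z ∈ Set.Icc (0 : ℝ) 1)
    (M₁ : ℝ) (hM₁ : 0 < M₁)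
    (hK1 : ∀ z : EuclideanSpace ℝ (Fin d), (1 / 2) * (if ‖z‖ ≤ M₁ then (1 : ℝ) else 0) ≤ K z)
    (αn hn : ℝ) (hα : 0 < αn) (hα1 : αn ≤ 1) (hh : 0 < hn)
    (p : EuclideanSpace ℝ (Fin d) → ℝ)
    (hp0 : ∀ z, 0 ≤ p z) (hpm : Measurable p) (hp1 : ∫ z, p z = 1)
    (Q : Set (EuclideanSpace ℝ (Fin d)))
    (hQ : Q = {y : EuclideanSpace ℝ (Fin d) | ∀ r : ℝ, 0 < r → 0 < ∫ z in Metric.ball y r, p z})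
    (r₀ c₀ : ℝ) (hr₀ : 0 < r₀) (hc₀ : 0 < c₀)
    (hQmr : ∀ y ∈ Q, ∀ r : ℝ, 0 < r → r ≤ r₀ →
      c₀ * (volume (Metric.ball y r)).toReal ≤ (volume (Q ∩ Metric.ball y r)).toReal)
    (vd : ℝ) (hvd : vd = (volume (Metric.ball (0 : EuclideanSpace ℝ (Fin d)) 1)).toReal)
    (hhr : M₁ * hn < r₀)
    (x : EuclideanSpace ℝ (Fin d)) (hx : x ∈ Q)
    (p₀x : ℝ) (hp₀x : 0 < p₀x)
    (hinf : ∀ z ∈ Q, ‖x - z‖ ≤ M₁ * hn → p₀x ≤ p z)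
    (cnx dnx : ℝ)
    (hcnx : cnx = αn * ∫ z, K (hn⁻¹ • (x - z)) * p z)
    (hdnx : dnx = n * cnx) :
    1 / dnx ≤ 2 / (c₀ * vd * M₁ ^ d * n * αn * hn ^ d * p₀x) := by

  -- notation
  set f : EuclideanSpace ℝ (Fin d) → ℝ := fun z => K (hn⁻¹ • (x - z)) * p z with hf
  have hpInt : Integrable p := by
    by_contra h
    rw [MeasureTheory.integral_undef h] at hp1
    norm_num at hp1
  have hmeasf : Measurable f := by
    exact (hKm.comp ((measurable_const.sub measurable_id).const_smul hn⁻¹)).mul hpm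
  have hfnonneg : ∀ z, 0 ≤ f z := fun z =>
    mul_nonneg (hK01 _).1 (hp0 z)
  have hfInt : Integrable f := by
    refine hpInt.mono' hmeasf.aestronglyMeasurable (Filter.Eventually.of_forall fun z => ?_)
    rw [Real.norm_eq_abs, abs_of_nonneg (hfnonneg z)]
    calc K (hn⁻¹ • (x - z)) * p z ≤ 1 * p z :=
          mul_le_mul_of_nonneg_right (hK01 _).2 (hp0 z)
      _ = p z := one_mul _
  -- Q is closed
  have hQclosed : IsClosed Q := by
    rw [hQ, ← isOpen_compl_iff]
    rw [Metric.isOpen_iff]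
    intro y hy
    simp only [Set.mem_compl_iff, Set.mem_setOf_eq, not_forall, not_lt] at hy
    obtain ⟨r, hr, hle⟩ := hy
    refine ⟨r / 2, by linarith, fun y' hy' => ?_⟩
    simp only [Set.mem_compl_iff, Set.mem_setOf_eq, not_forall, not_lt]
    refine ⟨r / 2, by linarith, ?_⟩
    have hsub : Metric.ball y' (r / 2) ⊆ Metric.ball y r := by
      intro w hw
      have := Metric.mem_ball.mp hw
      have h2 := Metric.mem_ball.mp hy'
      exact Metric.mem_ball.mpr (by
        calc dist w y ≤ dist w y' + dist y' y := dist_triangle _ _ _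
          _ < r / 2 + r / 2 := by linarith
          _ = r := by ring)
    calc ∫ z in Metric.ball y' (r / 2), p z ≤ ∫ z in Metric.ball y r, p z := by
          refine MeasureTheory.setIntegral_mono_set hpInt.integrableOn
            (Filter.Eventually.of_forall fun z => hp0 z) (HasSubset.Subset.eventuallyLE hsub)
      _ ≤ 0 := hle
  -- the set S
  set R : ℝ := M₁ * hn with hR
  have hRpos : 0 < R := mul_pos hM₁ hh
  set S : Set (EuclideanSpace ℝ (Fin d)) := Q ∩ Metric.ball x R with hS
  have hSmeas : MeasurableSet S := hQclosed.measurableSet.inter Metric.isOpen_ball.measurableSet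
  -- pointwise lower bound on S
  have hfS : ∀ z ∈ S, 1 / 2 * p₀x ≤ f z := by
    intro z hz
    obtain ⟨hzQ, hzb⟩ := hz
    have hdist : ‖x - z‖ ≤ R := by
      have := Metric.mem_ball.mp hzb
      rw [dist_eq_norm] at this
      rw [← norm_neg]
      simpa [neg_sub] using this.le
    have hpz : p₀x ≤ p z := hinf z hzQ hdist
    have hKz : 1 / 2 ≤ K (hn⁻¹ • (x - z)) := by
      have hnorm : ‖hn⁻¹ • (x - z)‖ ≤ M₁ := by
        rw [norm_smul, Real.norm_eq_abs, abs_of_pos (inv_pos.mpr hh)]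
        rw [inv_mul_le_iff₀ hh]
        refine hdist.trans (le_of_eq ?_)
        rw [hR]; ring
      have := hK1 (hn⁻¹ • (x - z))
      rwa [if_pos hnorm, mul_one] at this
    exact mul_le_mul hKz hpz hp₀x.le ((hK01 _).1)
  -- measure of S is finite
  have hSfin : volume S < ⊤ :=
    lt_of_le_of_lt (measure_mono Set.inter_subset_right) measure_ball_lt_top
  -- integral lower bound
  have hI1 : ∫ z in S, (1 / 2 * p₀x) ≤ ∫ z in S, f z := by
    refine MeasureTheory.setIntegral_mono_on (integrableOn_const hSfin.ne)
      hfInt.integrableOn hSmeas hfS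
  have hI2 : ∫ z in S, f z ≤ ∫ z, f z :=
    MeasureTheory.setIntegral_le_integral hfInt (Filter.Eventually.of_forall hfnonneg)
  have hconst : ∫ z in S, (1 / 2 * p₀x) = (volume S).toReal * (1 / 2 * p₀x) := by
    rw [MeasureTheory.setIntegral_const, smul_eq_mul, measureReal_def]
  -- volume of ball
  have hball : (volume (Metric.ball x R)).toReal = R ^ d * vd := by
    rcases Nat.eq_zero_or_pos d with hd0 | hd0
    · subst hd0
      have hsub : Subsingleton (EuclideanSpace ℝ (Fin 0)) := by infer_instance
      have h1 : Metric.ball x R = Set.univ :=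
        Set.eq_univ_of_forall fun y => Metric.mem_ball.mpr
          (by rw [Subsingleton.elim y x]; simpa using hRpos)
      have h2 : Metric.ball (0 : EuclideanSpace ℝ (Fin 0)) 1 = Set.univ :=
        Set.eq_univ_of_forall fun y => Metric.mem_ball.mpr
          (by rw [Subsingleton.elim y (0 : EuclideanSpace ℝ (Fin 0))]; simp)
      rw [h1, hvd, h2, pow_zero, one_mul]
    · have : Nontrivial (EuclideanSpace ℝ (Fin d)) := by
        refine ⟨EuclideanSpace.single ⟨0, hd0⟩ 1, 0, ?_⟩
        intro h
        have := congrArg (fun v => v ⟨0, hd0⟩) h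
        simpa using this
      rw [MeasureTheory.Measure.addHaar_ball volume x hRpos.le, ENNReal.toReal_mul,
        ENNReal.toReal_ofReal (by positivity), finrank_euclideanSpace_fin, hvd]
  -- measure retaining
  have hmr : c₀ * (R ^ d * vd) ≤ (volume S).toReal := by
    rw [← hball]
    exact hQmr x hx R hRpos hhr.le
  -- lower bound for the integral
  have hIlb : c₀ * (R ^ d * vd) * (1 / 2 * p₀x) ≤ ∫ z, f z := by
    calc c₀ * (R ^ d * vd) * (1 / 2 * p₀x) ≤ (volume S).toReal * (1 / 2 * p₀x) :=
          mul_le_mul_of_nonneg_right hmr (by positivity)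
      _ = ∫ z in S, (1 / 2 * p₀x) := hconst.symm
      _ ≤ ∫ z in S, f z := hI1
      _ ≤ ∫ z, f z := hI2
  set D : ℝ := c₀ * vd * M₁ ^ d * n * αn * hn ^ d * p₀x with hD
  rcases Nat.eq_zero_or_pos n with hn0 | hn0
  · subst hn0
    simp [hdnx, hD]
  · have hnpos : (0 : ℝ) < n := Nat.cast_pos.mpr hn0
    have hvdpos : 0 < vd := by
      rw [hvd]
      have : (0 : ENNReal) < volume (Metric.ball (0 : EuclideanSpace ℝ (Fin d)) 1) :=
        Metric.measure_ball_pos _ _ one_pos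
      exact ENNReal.toReal_pos this.ne' measure_ball_lt_top.ne
    have hDpos : 0 < D := by
      rw [hD]
      exact mul_pos (mul_pos (mul_pos (mul_pos (mul_pos (mul_pos hc₀ hvdpos)
        (pow_pos hM₁ d)) hnpos) hα) (pow_pos hh d)) hp₀x
    have hdnxlb : D / 2 ≤ dnx := by
      rw [hdnx, hcnx]
      have h1 : αn * (c₀ * (R ^ d * vd) * (1 / 2 * p₀x)) ≤ αn * ∫ z, f z :=
        mul_le_mul_of_nonneg_left hIlb hα.le
      have h2 : D / 2 ≤ (n : ℝ) * (αn * (c₀ * (R ^ d * vd) * (1 / 2 * p₀x))) := by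
        rw [hD, hR, mul_pow]
        ring_nf
        nlinarith [hnpos, hα, hc₀, hp₀x]
      calc D / 2 ≤ (n : ℝ) * (αn * (c₀ * (R ^ d * vd) * (1 / 2 * p₀x))) := h2
        _ ≤ (n : ℝ) * (αn * ∫ z, f z) := mul_le_mul_of_nonneg_left h1 hnpos.le
    have hdnxpos : 0 < dnx := lt_of_lt_of_le (by linarith) hdnxlb
    rw [div_le_div_iff₀ hdnxpos hDpos]
    linarith
end
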